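/- arXiv:1807.03926 — 5 statements merged into one kernel-verified Lean document; each statement's English description precedes it below -/
import Mathlib

section
/- Let n ≥ 2 and 0 ≤ r ≤ n, and place r distinguishable rooks independently and uniformly at random on the board B_n. Then the probability that no two rooks attack in the set-partition sense, namely P(W_RR + W_CC = 0) (no two rooks share a row and no two share a column), equals r! · S(n, n−r) / binomial(n,2)^r. Equivalently, the number of r-element subsets of B_n in which all first coordinates are pairwise distinct and all second coordinates are pairwise distinct equals the Stirling number of the second kind S(n, n−r). -/
open Finset Filter

/-- The triangular board `B_n = {(i,j) : 1 ≤ i < j ≤ n}`. -/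
def board (n : ℕ) : Finset (ℕ × ℕ) :=
  (Finset.range (n + 1) ×ˢ Finset.range (n + 1)).filter fun p => 1 ≤ p.1 ∧ p.1 < p.2

/-- Probability of event `E` when `r` distinguishable rooks are placed independently and
uniformly at random on `B_n`; a placement is a function `Fin r → ℕ × ℕ`, rook `a` sitting
on the square `f a = (row, column)`. -/
noncomputable def rookProb (n r : ℕ) (E : (Fin r → ℕ × ℕ) → Prop) : ℝ :=
  ({f : Fin r → ℕ × ℕ | (∀ a, f a ∈ board n) ∧ E f}.ncard : ℝ) / ((board n).card : ℝ) ^ r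

/-- Number of (unordered) pairs of rooks lying in the same row. -/
def WRR (r : ℕ) (f : Fin r → ℕ × ℕ) : ℕ :=
  (Finset.univ.filter fun p : Fin r × Fin r => p.1 < p.2 ∧ (f p.1).1 = (f p.2).1).card

/-- Number of (unordered) pairs of rooks lying in the same column. -/
def WCC (r : ℕ) (f : Fin r → ℕ × ℕ) : ℕ :=
  (Finset.univ.filter fun p : Fin r × Fin r => p.1 < p.2 ∧ (f p.1).2 = (f p.2).2).card

/-- `S(n,k)`, the Stirling number of the second kind: the number of partitions of a set of
size `n` into exactly `k` (nonempty) blocks. -/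
noncomputable def stirling2 (n k : ℕ) : ℕ :=
  Nat.card {P : Finpartition (Finset.univ : Finset (Fin n)) // P.parts.card = k}

namespace RookAux

variable {n : ℕ}

/-- The "reachability" relation generated by an edge finset. -/
def Reach (s : Finset (Fin n × Fin n)) : Fin n → Fin n → Prop :=
  Relation.ReflTransGen fun a b => (a, b) ∈ s

lemma reach_le {s : Finset (Fin n × Fin n)} (hlt : ∀ p ∈ s, p.1 < p.2)
    {x y : Fin n} (h : Reach s x y) : x ≤ y := by
  induction h with
  | refl => exact le_refl _
  | tail _ hbc ih => exact le_trans ih (le_of_lt (hlt _ hbc))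

/-- Set of consecutive (within a part) pairs of a finpartition. -/
def consec (P : Finpartition (univ : Finset (Fin n))) : Finset (Fin n × Fin n) :=
  Finset.univ.filter fun q =>
    q.1 < q.2 ∧ q.2 ∈ P.part q.1 ∧ ∀ z ∈ P.part q.1, ¬(q.1 < z ∧ z < q.2)

lemma mem_consec {P : Finpartition (univ : Finset (Fin n))} {x y : Fin n} :
    (x, y) ∈ consec P ↔ x < y ∧ y ∈ P.part x ∧ ∀ z ∈ P.part x, ¬(x < z ∧ z < y) := by
  simp [consec]

lemma consec_fst {P : Finpartition (univ : Finset (Fin n))} {x y y' : Fin n}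
    (h : (x, y) ∈ consec P) (h' : (x, y') ∈ consec P) : y = y' := by
  rw [mem_consec] at h h'
  rcases lt_trichotomy y y' with hlt | he | hlt
  · exact absurd ⟨h.1, hlt⟩ (h'.2.2 y h.2.1)
  · exact he
  · exact absurd ⟨h'.1, hlt⟩ (h.2.2 y' h'.2.1)

lemma part_eq_part {P : Finpartition (univ : Finset (Fin n))} {x y : Fin n}
    (h : y ∈ P.part x) : P.part y = P.part x :=
  P.part_eq_of_mem (P.part_mem.2 (mem_univ x)) h

lemma consec_snd {P : Finpartition (univ : Finset (Fin n))} {x x' y : Fin n}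
    (h : (x, y) ∈ consec P) (h' : (x', y) ∈ consec P) : x = x' := by
  rw [mem_consec] at h h'
  have hpp : P.part x = P.part x' := by
    rw [← part_eq_part h.2.1, part_eq_part h'.2.1]
  rcases lt_trichotomy x x' with hlt | he | hlt
  · have : x' ∈ P.part x := by
      rw [hpp]; exact P.mem_part (mem_univ x')
    exact absurd ⟨hlt, h'.1⟩ (h.2.2 x' this)
  · exact he
  · have : x ∈ P.part x' := by
      rw [← hpp]; exact P.mem_part (mem_univ x)
    exact absurd ⟨hlt, h.1⟩ (h'.2.2 x this)

lemma consec_lt {P : Finpartition (univ : Finset (Fin n))} :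
    ∀ p ∈ consec P, p.1 < p.2 := by
  intro p hp
  rw [consec, mem_filter] at hp
  exact hp.2.1

/-- Cardinality of the consecutive-pairs set. -/
lemma consec_card (P : Finpartition (univ : Finset (Fin n))) :
    (consec P).card + P.parts.card = n := by
  classical
  set M : Finset (Fin n) := univ.filter (fun x => ∀ z ∈ P.part x, z ≤ x) with hM
  have h1 : (consec P).image Prod.fst = univ \ M := by
    ext x
    simp only [mem_image, Finset.mem_sdiff, mem_univ, true_and, hM, mem_filter, not_and, true_implies]
    constructor
    · rintro ⟨⟨a, y⟩, hq, rfl⟩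
      rw [mem_consec] at hq
      intro hall
      exact absurd (hall y hq.2.1) (not_le.2 hq.1)
    · intro hx
      push_neg at hx
      obtain ⟨y0, hy0, hy0x⟩ := hx
      set S := (P.part x).filter (fun z => x < z) with hS
      have hSne : S.Nonempty := ⟨y0, by simp [hS, hy0, hy0x]⟩
      refine ⟨(x, S.min' hSne), ?_, rfl⟩
      have hmem := mem_filter.mp (S.min'_mem hSne)
      refine mem_consec.mpr ⟨hmem.2, hmem.1, fun w hw hcon => ?_⟩
      exact absurd (S.min'_le w (by rw [hS, mem_filter]; exact ⟨hw, hcon.1⟩)) (not_le.2 hcon.2)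
  have h2 : ((consec P).image Prod.fst).card = (consec P).card := by
    apply Finset.card_image_of_injOn
    intro p hp q hq hpq
    have : p = (p.1, p.2) := rfl
    rcases p with ⟨a, b⟩; rcases q with ⟨c, d⟩
    simp only at hpq
    subst hpq
    exact Prod.ext rfl (consec_fst hp hq)
  have h3 : M.card = P.parts.card := by
    apply Finset.card_bij (fun x _ => P.part x)
    · intro a ha
      exact P.part_mem.2 (mem_univ a)
    · intro a ha b hb hab
      rw [hM, mem_filter] at ha hb
      have hba : b ∈ P.part a := by rw [hab]; exact P.mem_part (mem_univ b)
      have hab' : a ∈ P.part b := by rw [← hab]; exact P.mem_part (mem_univ a)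
      exact le_antisymm (hb.2 a hab') (ha.2 b hba)
    · intro b hb
      obtain ⟨x, hx⟩ := P.nonempty_of_mem_parts hb
      have hbne : b.Nonempty := ⟨x, hx⟩
      refine ⟨b.max' hbne, ?_, ?_⟩
      · rw [hM, mem_filter]
        refine ⟨mem_univ _, fun z hz => ?_⟩
        rw [P.part_eq_of_mem hb (b.max'_mem hbne)] at hz
        exact b.le_max' z hz
      · exact P.part_eq_of_mem hb (b.max'_mem hbne)
  have h4 : M ⊆ univ := subset_univ M
  have h5 := Finset.card_sdiff_of_subset h4
  rw [h1] at h2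
  rw [card_univ, Fintype.card_fin] at h5
  have hMle : M.card ≤ n := by
    have := Finset.card_le_card h4
    rwa [card_univ, Fintype.card_fin] at this
  omega

end RookAux

namespace RookAux
variable {n : ℕ}
open Finset

lemma chain (P : Finpartition (univ : Finset (Fin n))) :
    ∀ k (x y : Fin n), y.val - x.val = k → x ≤ y → y ∈ P.part x →
      Reach (consec P) x y := by
  intro k
  induction k using Nat.strong_induction_on with
  | _ k ih =>
    intro x y hk hle hy
    rcases eq_or_lt_of_le hle with rfl | hlt
    · exact Relation.ReflTransGen.refl
    · have hSne : ((P.part x).filter (fun z => x < z)).Nonempty :=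
        ⟨y, mem_filter.mpr ⟨hy, hlt⟩⟩
      set S := (P.part x).filter (fun z => x < z) with hS
      set z := S.min' hSne with hz
      have hmem := mem_filter.mp (S.min'_mem hSne)
      have hzpart : z ∈ P.part x := hmem.1
      have hxz : x < z := hmem.2
      have hedge : (x, z) ∈ consec P :=
        mem_consec.mpr ⟨hxz, hzpart, fun w hw hcon =>
          absurd (S.min'_le w (mem_filter.mpr ⟨hw, hcon.1⟩)) (not_le.2 hcon.2)⟩
      have hzy : z ≤ y := S.min'_le y (mem_filter.mpr ⟨hy, hlt⟩)
      have hpz : P.part z = P.part x := part_eq_part hzpart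
      have hxz' : x.val < z.val := hxz
      have hxy' : x.val < y.val := hlt
      have hrec : Reach (consec P) z y :=
        ih (y.val - z.val) (by omega) z y rfl hzy (by rw [hpz]; exact hy)
      exact Relation.ReflTransGen.head hedge hrec
lemma reach_chain {P : Finpartition (univ : Finset (Fin n))} {x y : Fin n}
    (hle : x ≤ y) (hy : y ∈ P.part x) : Reach (consec P) x y :=
  chain P (y.val - x.val) x y rfl hle hy

lemma reach_samePart {P : Finpartition (univ : Finset (Fin n))} {x y : Fin n}
    (h : Reach (consec P) x y) : P.part x = P.part y := by
  induction h with
  | refl => rfl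
  | tail _ hbc ih =>
    rw [ih]
    exact (part_eq_part (mem_consec.mp hbc).2.1).symm

lemma samePart_iff_reach {P : Finpartition (univ : Finset (Fin n))} {x y : Fin n} :
    P.part x = P.part y ↔ (Reach (consec P) x y ∨ Reach (consec P) y x) := by
  constructor
  · intro h
    rcases le_total x y with hle | hle
    · exact Or.inl (reach_chain hle (by rw [h]; exact P.mem_part (mem_univ y)))
    · exact Or.inr (reach_chain hle (by rw [← h]; exact P.mem_part (mem_univ x)))
  · rintro (h | h)
    · exact reach_samePart h
    · exact (reach_samePart h).symm

lemma part_eq_filter (P : Finpartition (univ : Finset (Fin n))) (x : Fin n) :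
    P.part x = univ.filter (fun y => P.part y = P.part x) := by
  ext y
  simp only [mem_filter, mem_univ, true_and]
  constructor
  · exact fun h => part_eq_part h
  · intro h
    rw [← h]
    exact P.mem_part (mem_univ y)

lemma consec_injective : Function.Injective (consec (n := n)) := by
  intro P Q h
  have hpart : ∀ x, P.part x = Q.part x := by
    have key : ∀ x y : Fin n, P.part y = P.part x ↔ Q.part y = Q.part x := by
      intro x y
      rw [samePart_iff_reach, samePart_iff_reach, h]
    intro x
    rw [part_eq_filter P x, part_eq_filter Q x]
    exact filter_congr fun y _ => by rw [key]
  have hparts : ∀ (R : Finpartition (univ : Finset (Fin n))),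
      R.parts = univ.image R.part := by
    intro R
    ext b
    simp only [mem_image, mem_univ, true_and]
    constructor
    · intro hb
      obtain ⟨x, hx⟩ := R.nonempty_of_mem_parts hb
      exact ⟨x, R.part_eq_of_mem hb hx⟩
    · rintro ⟨x, rfl⟩
      exact R.part_mem.2 (mem_univ x)
  apply Finpartition.ext
  rw [hparts P, hparts Q]
  exact image_congr fun x _ => hpart x


section Surj
variable {s : Finset (Fin n × Fin n)}
  (hlt : ∀ p ∈ s, p.1 < p.2)
  (hfst : ∀ p ∈ s, ∀ q ∈ s, p.1 = q.1 → p = q)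
  (hsnd : ∀ p ∈ s, ∀ q ∈ s, p.2 = q.2 → p = q)

lemma reach_comp_snd (hsnd : ∀ p ∈ s, ∀ q ∈ s, p.2 = q.2 → p = q) :
    ∀ {x u : Fin n}, Reach s x u → ∀ y, Reach s y u → Reach s x y ∨ Reach s y x := by
  intro x u hxu
  induction hxu with
  | refl => exact fun y hy => Or.inr hy
  | @tail b u hxb hbu ih =>
    intro y hyu
    rcases Relation.ReflTransGen.cases_tail hyu with rfl | ⟨c, hyc, hcu⟩
    · exact Or.inl (hxb.tail hbu)
    · have : (c, u) = (b, u) := hsnd _ hcu _ hbu rfl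
      have hcb : c = b := congrArg Prod.fst this
      exact ih y (hcb ▸ hyc)

lemma reach_comp_fst (hfst : ∀ p ∈ s, ∀ q ∈ s, p.1 = q.1 → p = q) :
    ∀ {u x : Fin n}, Reach s u x → ∀ y, Reach s u y → Reach s x y ∨ Reach s y x := by
  intro u x hux
  induction hux using Relation.ReflTransGen.head_induction_on with
  | refl => exact fun y hy => Or.inl hy
  | @head a c hac hcx ih =>
    intro y hay
    rcases Relation.ReflTransGen.cases_head hay with rfl | ⟨d, had, hdy⟩
    · exact Or.inr (hcx.head hac)
    · have : (a, c) = (a, d) := hfst _ hac _ had rfl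
      have hcd : c = d := congrArg Prod.snd this
      exact ih y (hcd ▸ hdy)

/-- The setoid generated by an increasing partial-injection edge set. -/
def edgeSetoid (s : Finset (Fin n × Fin n))
    (hfst : ∀ p ∈ s, ∀ q ∈ s, p.1 = q.1 → p = q)
    (hsnd : ∀ p ∈ s, ∀ q ∈ s, p.2 = q.2 → p = q) : Setoid (Fin n) where
  r x y := Reach s x y ∨ Reach s y x
  iseqv := by
    constructor
    · exact fun x => Or.inl Relation.ReflTransGen.refl
    · exact fun h => h.symm
    · rintro x y z (hxy | hyx) (hyz | hzy)
      · exact Or.inl (hxy.trans hyz)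
      · exact reach_comp_snd hsnd hxy z hzy
      · exact reach_comp_fst hfst hyx z hyz
      · exact Or.inr (hzy.trans hyx)

lemma exists_partition (hlt : ∀ p ∈ s, p.1 < p.2)
    (hfst : ∀ p ∈ s, ∀ q ∈ s, p.1 = q.1 → p = q)
    (hsnd : ∀ p ∈ s, ∀ q ∈ s, p.2 = q.2 → p = q) :
    ∃ P : Finpartition (univ : Finset (Fin n)), consec P = s := by
  classical
  set St := edgeSetoid s hfst hsnd with hSt
  refine ⟨Finpartition.ofSetoid St, ?_⟩
  have hrel : ∀ x y : Fin n,
      y ∈ (Finpartition.ofSetoid St).part x ↔ (Reach s x y ∨ Reach s y x) :=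
    fun x y => Finpartition.mem_part_ofSetoid_iff_rel
  ext ⟨x, y⟩
  rw [mem_consec]
  constructor
  · rintro ⟨hxy, hypart, hmin⟩
    rcases (hrel x y).mp hypart with hr | hr
    swap
    · exact absurd (reach_le hlt hr) (not_le.mpr hxy)
    rcases Relation.ReflTransGen.cases_head hr with rfl | ⟨c, hxc, hcy⟩
    · exact absurd rfl (ne_of_lt hxy)
    · have hcy' : c ≤ y := reach_le hlt hcy
      have hxc' : x < c := hlt _ hxc
      have hcpart : c ∈ (Finpartition.ofSetoid St).part x :=
        (hrel x c).mpr (Or.inl (Relation.ReflTransGen.single hxc))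
      rcases eq_or_lt_of_le hcy' with rfl | hcylt
      · exact hxc
      · exact absurd ⟨hxc', hcylt⟩ (hmin c hcpart)
  · intro hmem
    refine ⟨hlt _ hmem, (hrel x y).mpr (Or.inl (Relation.ReflTransGen.single hmem)), ?_⟩
    intro z hz hcon
    rcases (hrel x z).mp hz with hr | hr
    swap
    · exact absurd (reach_le hlt hr) (not_le.mpr hcon.1)
    rcases Relation.ReflTransGen.cases_head hr with rfl | ⟨c, hxc, hcz⟩
    · exact absurd hcon.1 (lt_irrefl x)
    · have : (x, c) = (x, y) := hfst _ hxc _ hmem rfl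
      have hcy : c = y := congrArg Prod.snd this
      subst hcy
      exact absurd (reach_le hlt hcz) (not_le.mpr hcon.2)

end Surj


/-- The set of "good" edge sets over `Fin n`. -/
def Good (n r : ℕ) : Set (Finset (Fin n × Fin n)) :=
  {s | s.card = r ∧ (∀ p ∈ s, p.1 < p.2) ∧
    (∀ p ∈ s, ∀ q ∈ s, p.1 = q.1 → p = q) ∧
    (∀ p ∈ s, ∀ q ∈ s, p.2 = q.2 → p = q)}

theorem card_good (n r : ℕ) (hr : r ≤ n) :
    Nat.card (Good n r)
      = Nat.card {P : Finpartition (univ : Finset (Fin n)) // P.parts.card = n - r} := by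
  have hF : ∀ P : {P : Finpartition (univ : Finset (Fin n)) // P.parts.card = n - r},
      consec P.1 ∈ Good n r := by
    rintro ⟨P, hP⟩
    have hc := consec_card P
    refine ⟨show (consec P).card = r by rw [hP] at hc; omega, consec_lt, ?_, ?_⟩
    · rintro ⟨a, b⟩ hp ⟨c, d⟩ hq h
      simp only at h
      subst h
      exact Prod.ext rfl (consec_fst hp hq)
    · rintro ⟨a, b⟩ hp ⟨c, d⟩ hq h
      simp only at h
      subst h
      exact Prod.ext (consec_snd hp hq) rfl
  set F : {P : Finpartition (univ : Finset (Fin n)) // P.parts.card = n - r} → Good n r :=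
    fun P => ⟨consec P.1, hF P⟩ with hFdef
  have hbij : Function.Bijective F := by
    constructor
    · rintro ⟨P, hP⟩ ⟨Q, hQ⟩ h
      have : consec P = consec Q := congrArg Subtype.val h
      exact Subtype.ext (consec_injective this)
    · rintro ⟨t, htcard, htlt, htfst, htsnd⟩
      obtain ⟨P, hP⟩ := exists_partition htlt htfst htsnd
      have hc := consec_card P
      rw [hP, htcard] at hc
      exact ⟨⟨P, by omega⟩, Subtype.ext hP⟩
  exact (Nat.card_congr (Equiv.ofBijective F hbij)).symm


lemma mem_board {n : ℕ} {p : ℕ × ℕ} :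
    p ∈ board n ↔ 1 ≤ p.1 ∧ p.1 < p.2 ∧ p.2 ≤ n := by
  simp only [board, mem_filter, mem_product, mem_range]
  omega

/-- The shift embedding `Fin n × Fin n ↪ ℕ × ℕ`. -/
def emb (n : ℕ) : Fin n × Fin n ↪ ℕ × ℕ where
  toFun q := (q.1.val + 1, q.2.val + 1)
  inj' := by
    rintro ⟨a, b⟩ ⟨c, d⟩ h
    have h1 : (a : ℕ) + 1 = (c : ℕ) + 1 := congrArg Prod.fst h
    have h2 : (b : ℕ) + 1 = (d : ℕ) + 1 := congrArg Prod.snd h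
    obtain rfl : a = c := Fin.ext (by omega)
    obtain rfl : b = d := Fin.ext (by omega)
    rfl

lemma emb_apply {n : ℕ} (q : Fin n × Fin n) : emb n q = (q.1.val + 1, q.2.val + 1) := rfl

lemma exists_emb_eq {n : ℕ} {p : ℕ × ℕ} (hp : p ∈ board n) :
    ∃ q : Fin n × Fin n, emb n q = p := by
  rw [mem_board] at hp
  refine ⟨(⟨p.1 - 1, by omega⟩, ⟨p.2 - 1, by omega⟩), ?_⟩
  rw [emb_apply]
  exact Prod.ext (by simp; omega) (by simp; omega)

lemma T_eq (n r : ℕ) :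
    {s : Finset (ℕ × ℕ) | s ⊆ board n ∧ s.card = r ∧
        (∀ p ∈ s, ∀ q ∈ s, p ≠ q → p.1 ≠ q.1) ∧
        (∀ p ∈ s, ∀ q ∈ s, p ≠ q → p.2 ≠ q.2)}
      = (fun t => t.map (emb n)) '' Good n r := by
  ext s
  constructor
  · rintro ⟨hsub, hcard, hrow, hcol⟩
    classical
    set t : Finset (Fin n × Fin n) := univ.filter (fun q => emb n q ∈ s) with ht
    have hmem : ∀ q : Fin n × Fin n, q ∈ t ↔ emb n q ∈ s := by
      intro q; simp [ht]
    have hmap : t.map (emb n) = s := by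
      ext p
      simp only [Finset.mem_map]
      constructor
      · rintro ⟨q, hq, rfl⟩
        exact (hmem q).mp hq
      · intro hp
        obtain ⟨q, rfl⟩ := exists_emb_eq (hsub hp)
        exact ⟨q, (hmem q).mpr hp, rfl⟩
    have htfst : ∀ p ∈ t, ∀ q ∈ t, p.1 = q.1 → p = q := by
      intro p hp q hq h
      by_contra hne
      have hne' : emb n p ≠ emb n q := fun he => hne ((emb n).injective he)
      exact hrow _ ((hmem p).mp hp) _ ((hmem q).mp hq) hne'
        (by rw [emb_apply, emb_apply]; simp [h])
    have htsnd : ∀ p ∈ t, ∀ q ∈ t, p.2 = q.2 → p = q := by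
      intro p hp q hq h
      by_contra hne
      have hne' : emb n p ≠ emb n q := fun he => hne ((emb n).injective he)
      exact hcol _ ((hmem p).mp hp) _ ((hmem q).mp hq) hne'
        (by rw [emb_apply, emb_apply]; simp [h])
    refine ⟨t, ⟨?_, ?_, htfst, htsnd⟩, hmap⟩
    · rw [← hcard, ← hmap, Finset.card_map]
    · intro q hq
      have := mem_board.mp (hsub ((hmem q).mp hq))
      rw [emb_apply] at this
      exact Fin.lt_def.mpr (by omega)
  · rintro ⟨t, ⟨hcard, hlt, hfst, hsnd⟩, rfl⟩
    refine ⟨?_, by rw [Finset.card_map, hcard], ?_, ?_⟩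
    · intro p hp
      obtain ⟨q, hq, rfl⟩ := Finset.mem_map.mp hp
      have h1 := hlt q hq
      have h2 : (q.2 : ℕ) < n := q.2.isLt
      rw [emb_apply, mem_board]
      have := Fin.lt_def.mp h1
      constructor
      · omega
      · constructor <;> omega
    · rintro p hp p' hp' hne heq
      obtain ⟨q, hq, rfl⟩ := Finset.mem_map.mp hp
      obtain ⟨q', hq', rfl⟩ := Finset.mem_map.mp hp'
      simp only [emb_apply, Prod.fst] at heq
      have : q.1 = q'.1 := Fin.ext (by omega)
      exact hne (congrArg (emb n) (hfst q hq q' hq' this))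
    · rintro p hp p' hp' hne heq
      obtain ⟨q, hq, rfl⟩ := Finset.mem_map.mp hp
      obtain ⟨q', hq', rfl⟩ := Finset.mem_map.mp hp'
      simp only [emb_apply, Prod.snd] at heq
      have : q.2 = q'.2 := Fin.ext (by omega)
      exact hne (congrArg (emb n) (hsnd q hq q' hq' this))

theorem ncard_T (n r : ℕ) (hr : r ≤ n) :
    {s : Finset (ℕ × ℕ) | s ⊆ board n ∧ s.card = r ∧
        (∀ p ∈ s, ∀ q ∈ s, p ≠ q → p.1 ≠ q.1) ∧
        (∀ p ∈ s, ∀ q ∈ s, p ≠ q → p.2 ≠ q.2)}.ncard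
      = Nat.card {P : Finpartition (univ : Finset (Fin n)) // P.parts.card = n - r} := by
  rw [T_eq, Set.ncard_image_of_injective _ (Finset.map_injective (emb n)),
    ← Nat.card_coe_set_eq]
  exact card_good n r hr

lemma board_eq (n : ℕ) :
    board n = (univ.filter (fun q : Fin n × Fin n => q.1 < q.2)).map (emb n) := by
  ext p
  rw [mem_board]
  simp only [Finset.mem_map, mem_filter, mem_univ, true_and]
  constructor
  · intro hp
    obtain ⟨q, rfl⟩ := exists_emb_eq (mem_board.mpr hp)
    rw [emb_apply] at hp
    exact ⟨q, Fin.lt_def.mpr (by omega), rfl⟩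
  · rintro ⟨q, hq, rfl⟩
    have h1 := Fin.lt_def.mp hq
    have h2 : (q.2 : ℕ) < n := q.2.isLt
    rw [emb_apply]
    refine ⟨by omega, by omega, by omega⟩

lemma board_card (n : ℕ) : (board n).card = n.choose 2 := by
  classical
  set A : Finset (Fin n × Fin n) := univ.filter (fun q => q.1 < q.2) with hA
  set B : Finset (Fin n × Fin n) := univ.filter (fun q => q.2 < q.1) with hB
  have hcardAB : A.card = B.card := by
    apply Finset.card_bij (fun q _ => (q.2, q.1))
    · intro q hq
      simp only [hB, mem_filter, mem_univ, true_and]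
      exact (mem_filter.mp hq).2
    · intro q hq q' hq' h
      simp only [Prod.mk.injEq] at h
      exact Prod.ext h.2 h.1
    · intro q hq
      refine ⟨(q.2, q.1), ?_, rfl⟩
      simp only [hA, mem_filter, mem_univ, true_and]
      exact (mem_filter.mp hq).2
  have hdisj : Disjoint A B := by
    rw [Finset.disjoint_left]
    intro q hqa hqb
    exact absurd ((mem_filter.mp hqb).2) (not_lt.mpr (le_of_lt (mem_filter.mp hqa).2))
  have hunion : A ∪ B = (univ : Finset (Fin n × Fin n)).filter (fun q => q.1 ≠ q.2) := by
    ext q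
    simp only [Finset.mem_union, hA, hB, mem_filter, mem_univ, true_and]
    constructor
    · rintro (h | h)
      · exact ne_of_lt h
      · exact (ne_of_lt h).symm
    · intro h
      exact lt_or_gt_of_ne h
  have hne_card : ((univ : Finset (Fin n × Fin n)).filter (fun q => q.1 ≠ q.2)).card
      = n * n - n := by
    have : (univ : Finset (Fin n × Fin n)).filter (fun q => q.1 ≠ q.2)
        = (univ : Finset (Fin n)).offDiag := by
      ext q
      simp [Finset.mem_offDiag]
    rw [this, Finset.offDiag_card, card_univ, Fintype.card_fin]
  have h2 : 2 * A.card = n * n - n := by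
    have := Finset.card_union_of_disjoint hdisj
    rw [hunion, hne_card] at this
    omega
  have hmul : n * (n - 1) = n * n - n := by
    rcases n with _ | m
    · rfl
    · have : (m + 1) * (m + 1) = (m + 1) * m + (m + 1) := by ring
      simp only [Nat.succ_sub_one]
      omega
  rw [board_eq, Finset.card_map, ← hA, Nat.choose_two_right]
  omega


lemma event_iff {r : ℕ} (f : Fin r → ℕ × ℕ) :
    WRR r f + WCC r f = 0 ↔
      ∀ a b : Fin r, a < b → (f a).1 ≠ (f b).1 ∧ (f a).2 ≠ (f b).2 := by
  constructor
  · intro h a b hab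
    have h1 : WRR r f = 0 := by omega
    have h2 : WCC r f = 0 := by omega
    rw [WRR, Finset.card_eq_zero, Finset.filter_eq_empty_iff] at h1
    rw [WCC, Finset.card_eq_zero, Finset.filter_eq_empty_iff] at h2
    exact ⟨fun he => h1 (mem_univ ((a, b) : Fin r × Fin r)) ⟨hab, he⟩,
      fun he => h2 (mem_univ ((a, b) : Fin r × Fin r)) ⟨hab, he⟩⟩
  · intro h
    have h1 : WRR r f = 0 := by
      rw [WRR, Finset.card_eq_zero, Finset.filter_eq_empty_iff]
      rintro ⟨a, b⟩ _ ⟨hab, he⟩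
      exact (h a b hab).1 he
    have h2 : WCC r f = 0 := by
      rw [WCC, Finset.card_eq_zero, Finset.filter_eq_empty_iff]
      rintro ⟨a, b⟩ _ ⟨hab, he⟩
      exact (h a b hab).2 he
    omega

theorem ncard_placements (n r : ℕ) :
    {f : Fin r → ℕ × ℕ | (∀ a, f a ∈ board n) ∧ WRR r f + WCC r f = 0}.ncard
      = r.factorial *
        {s : Finset (ℕ × ℕ) | s ⊆ board n ∧ s.card = r ∧
          (∀ p ∈ s, ∀ q ∈ s, p ≠ q → p.1 ≠ q.1) ∧
          (∀ p ∈ s, ∀ q ∈ s, p ≠ q → p.2 ≠ q.2)}.ncard := by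
  classical
  set T : Set (Finset (ℕ × ℕ)) := {s : Finset (ℕ × ℕ) | s ⊆ board n ∧ s.card = r ∧
      (∀ p ∈ s, ∀ q ∈ s, p ≠ q → p.1 ≠ q.1) ∧
      (∀ p ∈ s, ∀ q ∈ s, p ≠ q → p.2 ≠ q.2)} with hTdef
  set A : Set (Fin r → ℕ × ℕ) :=
    {f : Fin r → ℕ × ℕ | (∀ a, f a ∈ board n) ∧ WRR r f + WCC r f = 0} with hAdef
  have hTmem : ∀ s : T, (s : Finset (ℕ × ℕ)).card = r := fun s => s.2.2.1
  set e : ∀ s : T, Fin r ≃ {y // y ∈ (s : Finset (ℕ × ℕ))} :=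
    fun s => (Finset.equivFinOfCardEq (hTmem s)).symm with hedef
  have hΘmem : ∀ (x : T × Equiv.Perm (Fin r)),
      (fun a => ((e x.1 (x.2 a) : {y // y ∈ (x.1 : Finset (ℕ × ℕ))}) : ℕ × ℕ)) ∈ A := by
    rintro ⟨s, σ⟩
    constructor
    · intro a
      exact s.2.1 (e s (σ a)).2
    · rw [event_iff]
      intro a b hab
      have hσ : σ a ≠ σ b := fun h => (ne_of_lt hab) (σ.injective h)
      have hsub : e s (σ a) ≠ e s (σ b) := fun h => hσ ((e s).injective h)
      have hval : ((e s (σ a) : _) : ℕ × ℕ) ≠ ((e s (σ b) : _) : ℕ × ℕ) :=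
        fun h => hsub (Subtype.ext h)
      exact ⟨s.2.2.2.1 _ (e s (σ a)).2 _ (e s (σ b)).2 hval,
        s.2.2.2.2 _ (e s (σ a)).2 _ (e s (σ b)).2 hval⟩
  set Θ : T × Equiv.Perm (Fin r) → A :=
    fun x => ⟨fun a => ((e x.1 (x.2 a) : _) : ℕ × ℕ), hΘmem x⟩ with hΘdef
  have himg : ∀ (x : T × Equiv.Perm (Fin r)),
      Finset.image (fun a => ((e x.1 (x.2 a) : _) : ℕ × ℕ)) univ = (x.1 : Finset (ℕ × ℕ)) := by
    rintro ⟨s, σ⟩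
    ext p
    simp only [Finset.mem_image, mem_univ, true_and]
    constructor
    · rintro ⟨a, rfl⟩
      exact (e s (σ a)).2
    · intro hp
      refine ⟨σ.symm ((e s).symm ⟨p, hp⟩), ?_⟩
      rw [Equiv.apply_symm_apply, Equiv.apply_symm_apply]
  have hbij : Function.Bijective Θ := by
    constructor
    · rintro ⟨s, σ⟩ ⟨s', σ'⟩ h
      have hf : (fun a => ((e s (σ a) : _) : ℕ × ℕ))
          = (fun a => ((e s' (σ' a) : _) : ℕ × ℕ)) := congrArg Subtype.val h
      have hs : s = s' := by
        apply Subtype.ext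
        rw [← himg ⟨s, σ⟩, ← himg ⟨s', σ'⟩]
        exact congrArg (fun g => Finset.image g univ) hf
      subst hs
      simp only [Prod.mk.injEq, true_and]
      exact Equiv.ext fun a => (e s).injective (Subtype.ext (congrFun hf a))
    · rintro ⟨f, hfboard, hfev⟩
      have hpair := (event_iff f).mp hfev
      have hne : ∀ a b : Fin r, a ≠ b → (f a).1 ≠ (f b).1 ∧ (f a).2 ≠ (f b).2 := by
        intro a b hab
        rcases hab.lt_or_gt with h | h
        · exact hpair a b h
        · exact ⟨(hpair b a h).1.symm, (hpair b a h).2.symm⟩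
      have hinj : Function.Injective f := by
        intro a b h
        by_contra hab
        exact (hne a b hab).1 (congrArg Prod.fst h)
      set s : Finset (ℕ × ℕ) := Finset.image f univ with hsdef
      have hcard : s.card = r := by
        rw [hsdef, Finset.card_image_of_injective _ hinj, card_univ, Fintype.card_fin]
      have hsT : s ∈ T := by
        refine ⟨?_, hcard, ?_, ?_⟩
        · intro p hp
          obtain ⟨a, _, rfl⟩ := Finset.mem_image.mp hp
          exact hfboard a
        · rintro p hp q hq hpq
          obtain ⟨a, _, rfl⟩ := Finset.mem_image.mp hp
          obtain ⟨b, _, rfl⟩ := Finset.mem_image.mp hq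
          exact (hne a b (fun h => hpq (congrArg f h))).1
        · rintro p hp q hq hpq
          obtain ⟨a, _, rfl⟩ := Finset.mem_image.mp hp
          obtain ⟨b, _, rfl⟩ := Finset.mem_image.mp hq
          exact (hne a b (fun h => hpq (congrArg f h))).2
      set e' : Fin r ≃ {y // y ∈ s} := (Finset.equivFinOfCardEq hcard).symm with he'def
      have hfmem : ∀ a, f a ∈ s := fun a => Finset.mem_image_of_mem f (mem_univ a)
      set g : Fin r → Fin r := fun a => e'.symm ⟨f a, hfmem a⟩ with hgdef
      have hginj : Function.Injective g := by
        intro a b h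
        have := congrArg e' h
        rw [hgdef] at this
        simp only [Equiv.apply_symm_apply] at this
        exact hinj (congrArg Subtype.val this)
      set σ : Equiv.Perm (Fin r) :=
        Equiv.ofBijective g (Finite.injective_iff_bijective.mp hginj) with hσdef
      refine ⟨⟨⟨s, hsT⟩, σ⟩, ?_⟩
      apply Subtype.ext
      funext a
      show ((e ⟨s, hsT⟩ (σ a) : _) : ℕ × ℕ) = f a
      have hσa : σ a = g a := rfl
      have hee : e ⟨s, hsT⟩ = e' := rfl
      rw [hσa, hee, hgdef]
      show ((e' (e'.symm ⟨f a, hfmem a⟩) : _) : ℕ × ℕ) = f a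
      rw [Equiv.apply_symm_apply]
  have hcardA : Nat.card A = Nat.card (T × Equiv.Perm (Fin r)) :=
    (Nat.card_congr (Equiv.ofBijective Θ hbij)).symm
  rw [← Nat.card_coe_set_eq, ← Nat.card_coe_set_eq, hcardA, Nat.card_prod,
    Nat.card_eq_fintype_card (α := Equiv.Perm (Fin r)), Fintype.card_perm, Fintype.card_fin]
  ring

end RookAux

/-- placing `r ≤ n` distinguishable rooks independently and uniformly at random on
`B_n`, `n ≥ 2`, the probability that no two rooks attack in the set-partition sense (no two in
the same row, no two in the same column) equals `r!·S(n, n−r)/C(n,2)^r`; equivalently, the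
number of `r`-element subsets of `B_n` whose first coordinates are pairwise distinct and whose
second coordinates are pairwise distinct equals `S(n, n−r)`. -/
theorem no_attack_set_partition (n r : ℕ) (hn : 2 ≤ n) (hr : r ≤ n) :
    rookProb n r (fun f => WRR r f + WCC r f = 0)
        = (r.factorial : ℝ) * (stirling2 n (n - r) : ℝ) / (n.choose 2 : ℝ) ^ r ∧
    {s : Finset (ℕ × ℕ) | s ⊆ board n ∧ s.card = r ∧
        (∀ p ∈ s, ∀ q ∈ s, p ≠ q → p.1 ≠ q.1) ∧
        (∀ p ∈ s, ∀ q ∈ s, p ≠ q → p.2 ≠ q.2)}.ncard = stirling2 n (n - r) := by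
  have hT := RookAux.ncard_T n r hr
  have hS : stirling2 n (n - r)
      = Nat.card {P : Finpartition (Finset.univ : Finset (Fin n)) // P.parts.card = n - r} := rfl
  constructor
  · have hA := RookAux.ncard_placements n r
    show (({f : Fin r → ℕ × ℕ | (∀ a, f a ∈ board n) ∧ WRR r f + WCC r f = 0}.ncard : ℝ))
        / ((board n).card : ℝ) ^ r
        = (r.factorial : ℝ) * (stirling2 n (n - r) : ℝ) / (n.choose 2 : ℝ) ^ r
    rw [hA, hT, ← hS, RookAux.board_card]
    push_cast
    ring
  · rw [hS]
    exact hT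
end

section
/- Let n ≥ 2 and 0 ≤ r ≤ n, and place r distinguishable rooks independently and uniformly at random on the board B_n. Then the probability that no two rooks attack in the permutation sense, namely P(W_CC = 0) (no two rooks share a column), equals r! · s(n, n−r) / binomial(n,2)^r. Equivalently, the number of r-element subsets of B_n in which all second coordinates are pairwise distinct equals the unsigned Stirling number of the first kind s(n, n−r). -/
open Finset Filter

open Equiv Equiv.Perm

/-- The number of cycles of a permutation, counting fixed points as cycles of length one. -/
def numCycles {n : ℕ} (σ : Equiv.Perm (Fin n)) : ℕ :=
  σ.cycleType.card + (Finset.univ.filter fun x => σ x = x).card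

/-- `s(n,k)`, the unsigned Stirling number of the first kind: the number of permutations of a
set of size `n` having exactly `k` cycles (fixed points count as cycles). -/
noncomputable def stirling1 (n k : ℕ) : ℕ :=
  Nat.card {σ : Equiv.Perm (Fin n) // numCycles σ = k}

section Aux

variable {α : Type*} [Fintype α] [DecidableEq α]

lemma pow_fix (c : Perm α) (b : α) (hb : c b = b) : ∀ k : ℕ, (c ^ k) b = b := by
  intro k
  induction k with
  | zero => rfl
  | succ k ih => rw [pow_succ, Perm.mul_apply, hb, ih]

lemma support_swap_mul_cycle (c : Perm α) (a b : α) (hb : c b = b) (hab : a ≠ b)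
    (ha : c a ≠ a) : (swap a b * c).support = insert b c.support := by
  ext x
  simp only [Perm.mem_support, Finset.mem_insert]
  by_cases hxb : x = b
  · subst hxb
    simp only [Perm.mul_apply, hb, swap_apply_right]
    tauto
  constructor
  · intro hx
    by_contra h
    push_neg at h
    obtain ⟨-, h2⟩ := h
    have hxa : x ≠ a := fun h => ha (h ▸ h2)
    apply hx
    rw [Perm.mul_apply, h2, swap_apply_of_ne_of_ne hxa hxb]
  · rintro (h | h)
    · exact absurd h hxb
    · rw [Perm.mul_apply]
      by_cases h1 : c x = a
      · rw [h1, swap_apply_left]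
        exact fun hh => hxb hh.symm
      · have h2 : c x ≠ b := fun hh => hxb (c.injective (hh.trans hb.symm))
        rw [swap_apply_of_ne_of_ne h1 h2]
        exact h

lemma isCycle_swap_mul_cycle (c : Perm α) (a b : α) (hc : c.IsCycle) (hb : c b = b)
    (hab : a ≠ b) (ha : c a ≠ a) : (swap a b * c).IsCycle := by
  set g := swap a b * c with hg
  have hgb : g b = a := by rw [hg, Perm.mul_apply, hb, swap_apply_right]
  have key : ∀ k : ℕ, ∃ j : ℕ, (g ^ j) b = (c ^ k) a := by
    intro k
    induction k with
    | zero => exact ⟨1, by simpa using hgb⟩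
    | succ k ih =>
      obtain ⟨j, hj⟩ := ih
      by_cases h1 : (c ^ (k + 1)) a = a
      · exact ⟨1, by simpa using hgb.trans h1.symm⟩
      · have h2 : (c ^ (k + 1)) a ≠ b := by
          intro hh
          exact hab ((c ^ (k+1)).injective (hh.trans (pow_fix c b hb (k+1)).symm))
        refine ⟨j + 1, ?_⟩
        rw [pow_succ', Perm.mul_apply, hj, hg, Perm.mul_apply, ← Perm.mul_apply c (c ^ k),
          ← pow_succ']
        exact swap_apply_of_ne_of_ne h1 h2
  refine ⟨b, by rw [hgb]; exact hab, fun y hy => ?_⟩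
  by_cases hyb : y = b
  · exact ⟨0, by simp [hyb]⟩
  · have hcy : c y ≠ y := by
      have := support_swap_mul_cycle c a b hb hab ha
      have hy' : y ∈ (swap a b * c).support := Perm.mem_support.2 hy
      rw [this, Finset.mem_insert] at hy'
      rcases hy' with h | h
      · exact absurd h hyb
      · exact Perm.mem_support.1 h
    obtain ⟨k, hk⟩ := hc.exists_pow_eq ha hcy
    obtain ⟨j, hj⟩ := key k
    exact ⟨(j : ℤ), by rw [zpow_natCast, hj, hk]⟩

lemma cycleType_swap' (a b : α) (hab : a ≠ b) : (swap a b).cycleType = {2} := by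
  have h := (isCycle_swap hab).cycleType
  rwa [support_swap hab, Finset.card_insert_of_notMem (by simpa using hab),
    Finset.card_singleton] at h

lemma swap_mul_counts (f : Perm α) (a b : α) (hb : f b = b) (hab : a ≠ b) :
    ((swap a b * f).cycleType.card = f.cycleType.card + if f a = a then 1 else 0) ∧
    (swap a b * f).support.card = f.support.card + if f a = a then 2 else 1 := by
  have hbs : b ∉ f.support := by simp [Perm.mem_support, hb]
  by_cases ha : f a = a
  · have has : a ∉ f.support := by simp [Perm.mem_support, ha]
    have hdisj : (swap a b).Disjoint f := by
      intro x
      by_cases hx : x = a ∨ x = b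
      · rcases hx with h | h <;> subst h <;> [exact Or.inr ha; exact Or.inr hb]
      · push_neg at hx
        exact Or.inl (swap_apply_of_ne_of_ne hx.1 hx.2)
    rw [if_pos ha, if_pos ha]
    constructor
    · rw [hdisj.cycleType_mul, cycleType_swap' a b hab]
      simp [add_comm]
    · rw [hdisj.support_mul, Finset.card_union_of_disjoint hdisj.disjoint_support,
        support_swap hab, Finset.card_insert_of_notMem (by simp [hab]),
        Finset.card_singleton]
      omega
  · -- f a ≠ a
    have hax : a ∈ f.support := Perm.mem_support.2 ha
    set c := f.cycleOf a with hc
    have hcmem : c ∈ f.cycleFactorsFinset := cycleOf_mem_cycleFactorsFinset_iff.2 hax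
    have hccyc : c.IsCycle := f.isCycle_cycleOf ha
    have hca : c a = f a := f.cycleOf_apply_self a
    have hca' : c a ≠ a := by rw [hca]; exact ha
    have hsupc : c.support ⊆ f.support := f.support_cycleOf_le a
    have hcb : c b = b := by
      by_contra h
      exact hbs (hsupc (Perm.mem_support.2 h))
    set d := f * c⁻¹ with hd
    have hdisj : d.Disjoint c := disjoint_mul_inv_of_mem_cycleFactorsFinset hcmem
    have hfd : f = d * c := by rw [hd]; group
    have hcinvb : c⁻¹ b = b := by
      rw [Perm.inv_eq_iff_eq]
      exact hcb.symm
    have hdb : d b = b := by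
      rw [hd, Perm.mul_apply, hcinvb, hb]
    have hda : d a = a := by
      rcases hdisj a with h | h
      · exact h
      · exact absurd h hca'
    have hdswap : (swap a b).Disjoint d := by
      intro x
      by_cases hx : x = a ∨ x = b
      · rcases hx with h | h <;> subst h <;> [exact Or.inr hda; exact Or.inr hdb]
      · push_neg at hx
        exact Or.inl (swap_apply_of_ne_of_ne hx.1 hx.2)
    have hre : swap a b * f = d * (swap a b * c) := by
      rw [hfd, ← mul_assoc, hdswap.commute.eq, mul_assoc]
    have hcyc' : (swap a b * c).IsCycle := isCycle_swap_mul_cycle c a b hccyc hcb hab hca'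
    have hsup' : (swap a b * c).support = insert b c.support :=
      support_swap_mul_cycle c a b hcb hab hca'
    have hdisj' : d.Disjoint (swap a b * c) := by
      intro x
      by_cases hx : x ∈ (swap a b * c).support
      · rw [hsup', Finset.mem_insert] at hx
        rcases hx with h | h
        · exact Or.inl (by rw [h]; exact hdb)
        · rcases hdisj x with h2 | h2
          · exact Or.inl h2
          · exact absurd h2 (Perm.mem_support.1 h)
      · exact Or.inr (by simpa [Perm.mem_support] using hx)
    have hbc : b ∉ c.support := fun h => hbs (hsupc h)
    have hctf : f.cycleType = d.cycleType + {c.support.card} := by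
      conv_lhs => rw [hfd]
      rw [hdisj.cycleType_mul, hccyc.cycleType]
    have hsf : f.support = d.support ∪ c.support := by
      conv_lhs => rw [hfd]
      exact hdisj.support_mul
    have h1 : _root_.Disjoint d.support c.support := hdisj.disjoint_support
    have h2 : _root_.Disjoint d.support (insert b c.support) := by
      rw [Finset.disjoint_insert_right]
      exact ⟨by simp [Perm.mem_support, hdb], h1⟩
    rw [if_neg ha, if_neg ha]
    constructor
    · rw [hre, hdisj'.cycleType_mul, hcyc'.cycleType, hctf]
      simp
    · rw [hre, hdisj'.support_mul, hsup', hsf,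
        Finset.card_union_of_disjoint h2, Finset.card_union_of_disjoint h1,
        Finset.card_insert_of_notMem hbc]
      omega

/-- general cycle count -/
def nc (σ : Perm α) : ℕ :=
  σ.cycleType.card + (Finset.univ.filter fun x => σ x = x).card

lemma fix_card (σ : Perm α) :
    (Finset.univ.filter fun x => σ x = x).card + σ.support.card = Fintype.card α := by
  have : σ.support = Finset.univ.filter fun x => ¬σ x = x := rfl
  rw [this, Finset.card_filter_add_card_filter_not, Finset.card_univ]

lemma nc_swap_mul (f : Perm α) (a b : α) (hb : f b = b) (hab : a ≠ b) :
    nc (swap a b * f) + 1 = nc f := by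
  obtain ⟨h1, h2⟩ := swap_mul_counts f a b hb hab
  have e1 := fix_card (swap a b * f)
  have e2 := fix_card f
  unfold nc
  by_cases ha : f a = a <;> simp [ha] at h1 h2 <;> omega

lemma nc_extendDomain {β : Type*} [Fintype β] [DecidableEq β] {p : β → Prop}
    [DecidablePred p] (e : Perm α) (f : α ≃ Subtype p) :
    nc (e.extendDomain f) + Fintype.card α = nc e + Fintype.card β := by
  have h1 : (e.extendDomain f).cycleType = e.cycleType := cycleType_extendDomain f
  have h2 : (e.extendDomain f).support.card = e.support.card := card_support_extend_domain f
  have e1 := fix_card (e.extendDomain f)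
  have e2 := fix_card e
  have h1' : Multiset.card (e.extendDomain f).cycleType = Multiset.card e.cycleType := by rw [h1]
  unfold nc
  omega

lemma decomposeFin_symm_zero_eq {n : ℕ} (e : Perm (Fin n)) :
    Equiv.Perm.decomposeFin.symm (0, e) = e.extendDomain (finSuccAboveEquiv 0) := by
  ext x
  refine Fin.cases ?_ ?_ x
  · rw [Equiv.Perm.decomposeFin_symm_apply_zero,
      Perm.extendDomain_apply_not_subtype _ _ (by simp)]
  · intro i
    rw [Equiv.Perm.decomposeFin_symm_apply_succ]
    have hx : (i.succ : Fin (n + 1)) = ((finSuccAboveEquiv (0 : Fin (n + 1))) i : Fin (n + 1)) := by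
      simp [finSuccAboveEquiv_apply, Fin.zero_succAbove]
    rw [hx, Perm.extendDomain_apply_image]
    simp [finSuccAboveEquiv_apply, Fin.zero_succAbove]

lemma numCycles_eq_nc {m : ℕ} (σ : Perm (Fin m)) : numCycles σ = nc σ := rfl

lemma numCycles_decomposeFin {n : ℕ} (p : Fin (n + 1)) (e : Perm (Fin n)) :
    numCycles (Equiv.Perm.decomposeFin.symm (p, e)) =
      numCycles e + if p = 0 then 1 else 0 := by
  have hE : nc (Equiv.Perm.decomposeFin.symm (0, e)) = nc e + 1 := by
    have h := nc_extendDomain e (finSuccAboveEquiv (0 : Fin (n + 1)))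
    rw [decomposeFin_symm_zero_eq]
    simp only [Fintype.card_fin] at h
    omega
  by_cases hp : p = 0
  · subst hp
    simp [numCycles_eq_nc, hE]
  · have hsplit : Equiv.Perm.decomposeFin.symm (p, e) =
        swap 0 p * Equiv.Perm.decomposeFin.symm (0, e) := by
      ext x
      refine Fin.cases ?_ ?_ x
      · simp
      · intro i
        simp [Perm.mul_apply]
    have hfix : (Equiv.Perm.decomposeFin.symm (0, e)) 0 = 0 := by simp
    have hkey := nc_swap_mul (Equiv.Perm.decomposeFin.symm (0, e)) p 0 hfix hp
    rw [swap_comm] at hkey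
    rw [numCycles_eq_nc, numCycles_eq_nc, hsplit, if_neg hp]
    omega

lemma numCycles_le {m : ℕ} (σ : Perm (Fin m)) : numCycles σ ≤ m := by
  have h1 : σ.cycleType.card ≤ σ.cycleType.sum := by
    have := Multiset.card_nsmul_le_sum (s := σ.cycleType) (a := 1)
      (fun x hx => one_le_two.trans (two_le_of_mem_cycleType hx))
    simpa using this
  have h2 := sum_cycleType σ
  have h3 := fix_card σ
  rw [Fintype.card_fin] at h3
  rw [numCycles]
  omega

lemma numCycles_pos {m : ℕ} (σ : Perm (Fin (m + 1))) : 1 ≤ numCycles σ := by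
  rw [numCycles]
  by_cases h : σ = 1
  · subst h
    have : (Finset.univ.filter fun x => (1 : Perm (Fin (m+1))) x = x) = Finset.univ := by
      simp
    rw [this, Finset.card_univ, Fintype.card_fin]
    omega
  · have := card_cycleType_pos.2 h
    omega

lemma stirling1_eq_card (n k : ℕ) :
    stirling1 n k = (Finset.univ.filter fun σ : Perm (Fin n) => numCycles σ = k).card := by
  rw [stirling1, Nat.card_eq_fintype_card, Fintype.card_subtype]

lemma stirling1_high (n k : ℕ) (h : n < k) : stirling1 n k = 0 := by
  rw [stirling1_eq_card, Finset.card_eq_zero, Finset.filter_eq_empty_iff]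
  intro σ _
  exact fun hk => absurd (hk ▸ numCycles_le σ) (by omega)

lemma stirling1_zero (n : ℕ) : stirling1 (n + 1) 0 = 0 := by
  rw [stirling1_eq_card, Finset.card_eq_zero, Finset.filter_eq_empty_iff]
  intro σ _
  have := numCycles_pos σ
  omega

lemma stirling1_succ (n k : ℕ) (hk : 1 ≤ k) :
    stirling1 (n + 1) k = stirling1 n (k - 1) + n * stirling1 n k := by
  rw [stirling1_eq_card, Finset.univ_perm_fin_succ, Finset.filter_map, Finset.card_map]
  have hcong : (Finset.univ.filter
        ((fun σ : Perm (Fin (n + 1)) => numCycles σ = k) ∘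
          ⇑(Equiv.Perm.decomposeFin.symm.toEmbedding))) =
      Finset.univ.filter fun pe : Fin (n + 1) × Perm (Fin n) =>
        (pe.1 = 0 ∧ numCycles pe.2 = k - 1) ∨ (¬pe.1 = 0 ∧ numCycles pe.2 = k) := by
    apply Finset.filter_congr
    intro pe _
    simp only [Function.comp_apply, Equiv.coe_toEmbedding]
    rw [show Equiv.Perm.decomposeFin.symm pe = Equiv.Perm.decomposeFin.symm (pe.1, pe.2) from rfl]
    rw [numCycles_decomposeFin]
    by_cases hp : pe.1 = 0 <;> simp [hp] <;> omega
  rw [hcong, Finset.filter_or, Finset.card_union_of_disjoint]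
  · have h1 : (Finset.univ.filter fun pe : Fin (n + 1) × Perm (Fin n) =>
        pe.1 = 0 ∧ numCycles pe.2 = k - 1) =
        (Finset.univ.filter fun p : Fin (n+1) => p = 0) ×ˢ
          (Finset.univ.filter fun e : Perm (Fin n) => numCycles e = k - 1) := by
      rw [← Finset.univ_product_univ]
      exact Finset.filter_product (fun p : Fin (n+1) => p = 0)
        (fun e : Perm (Fin n) => numCycles e = k - 1)
    have h2 : (Finset.univ.filter fun pe : Fin (n + 1) × Perm (Fin n) =>
        ¬pe.1 = 0 ∧ numCycles pe.2 = k) =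
        (Finset.univ.filter fun p : Fin (n+1) => ¬p = 0) ×ˢ
          (Finset.univ.filter fun e : Perm (Fin n) => numCycles e = k) := by
      rw [← Finset.univ_product_univ]
      exact Finset.filter_product (fun p : Fin (n+1) => ¬p = 0)
        (fun e : Perm (Fin n) => numCycles e = k)
    rw [h1, h2, Finset.card_product, Finset.card_product]
    have c1 : (Finset.univ.filter fun p : Fin (n+1) => p = 0).card = 1 := by
      rw [Finset.filter_eq']
      simp
    have c2 : (Finset.univ.filter fun p : Fin (n+1) => ¬p = 0).card = n := by
      have := Finset.card_filter_add_card_filter_not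
        (s := (Finset.univ : Finset (Fin (n+1)))) (p := fun p => p = 0)
      rw [Finset.card_univ, Fintype.card_fin] at this
      omega
    rw [c1, c2, stirling1_eq_card, stirling1_eq_card, one_mul]
  · rw [Finset.disjoint_filter]
    tauto

lemma mem_board {n : ℕ} {p : ℕ × ℕ} : p ∈ board n ↔ 1 ≤ p.1 ∧ p.1 < p.2 ∧ p.2 ≤ n := by
  simp only [board, Finset.mem_filter, Finset.mem_product, Finset.mem_range, Nat.lt_succ_iff]
  omega

def Fn (n r : ℕ) : Finset (Finset (ℕ × ℕ)) :=
  (board n).powerset.filter fun s => s.card = r ∧ ∀ p ∈ s, ∀ q ∈ s, p ≠ q → p.2 ≠ q.2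

lemma mem_Fn {n r : ℕ} {s : Finset (ℕ × ℕ)} :
    s ∈ Fn n r ↔ s ⊆ board n ∧ s.card = r ∧ ∀ p ∈ s, ∀ q ∈ s, p ≠ q → p.2 ≠ q.2 := by
  simp [Fn, Finset.mem_filter, Finset.mem_powerset, and_assoc]

lemma board_succ (n : ℕ) :
    board (n + 1) = board n ∪ (Finset.Icc 1 n).image fun i => (i, n + 1) := by
  ext ⟨i, j⟩
  simp only [mem_board, Finset.mem_union, Finset.mem_image, Finset.mem_Icc, Prod.mk.injEq]
  constructor
  · rintro ⟨h1, h2, h3⟩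
    by_cases hj : j = n + 1
    · exact Or.inr ⟨i, by omega, rfl, hj.symm⟩
    · exact Or.inl ⟨h1, h2, by omega⟩
  · rintro (⟨h1, h2, h3⟩ | ⟨a, ha, rfl, rfl⟩)
    · exact ⟨h1, h2, by omega⟩
    · exact ⟨by omega, by omega, le_refl _⟩

lemma card_board (n : ℕ) : (board n).card = n.choose 2 := by
  induction n with
  | zero => decide
  | succ n ih =>
    rw [board_succ, Finset.card_union_of_disjoint, ih, Finset.card_image_of_injective,
      Nat.card_Icc]
    · rw [Nat.choose_succ_succ]
      simp [Nat.choose_one_right]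
      omega
    · intro x y hxy
      simpa using congrArg Prod.fst hxy
    · rw [Finset.disjoint_right]
      rintro p hp hpb
      obtain ⟨a, -, rfl⟩ := Finset.mem_image.1 hp
      have := mem_board.1 hpb
      omega

lemma snd_le_of_mem_board {n : ℕ} {s : Finset (ℕ × ℕ)} (hs : s ⊆ board n) :
    ∀ p ∈ s, p.2 ≤ n := fun p hp => (mem_board.1 (hs hp)).2.2

lemma Fn_succ (n r : ℕ) :
    Fn (n + 1) (r + 1) =
      Fn n (r + 1) ∪
        ((Finset.Icc 1 n) ×ˢ Fn n r).image fun it => insert (it.1, n + 1) it.2 := by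
  ext s
  simp only [Finset.mem_union, Finset.mem_image, Finset.mem_product, Finset.mem_Icc]
  constructor
  · intro hs
    obtain ⟨hsub, hcard, hdist⟩ := mem_Fn.1 hs
    by_cases hcol : ∀ p ∈ s, p.2 ≠ n + 1
    · left
      refine mem_Fn.2 ⟨fun p hp => ?_, hcard, hdist⟩
      have hb := mem_board.1 (hsub hp)
      have hc := hcol p hp
      exact mem_board.2 ⟨hb.1, hb.2.1, by omega⟩
    · right
      push_neg at hcol
      obtain ⟨p, hp, hp2⟩ := hcol
      obtain ⟨i, j⟩ := p
      simp only at hp2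
      subst hp2
      have hib := mem_board.1 (hsub hp)
      refine ⟨(i, s.erase (i, n + 1)), ⟨⟨by omega, by omega⟩, ?_⟩, ?_⟩
      · refine mem_Fn.2 ⟨fun q hq => ?_, ?_, ?_⟩
        · have hqs := Finset.mem_of_mem_erase hq
          have hqb := mem_board.1 (hsub hqs)
          have hq2 : q.2 ≠ n + 1 :=
            hdist q hqs (i, n + 1) hp (Finset.ne_of_mem_erase hq)
          exact mem_board.2 ⟨hqb.1, hqb.2.1, by omega⟩
        · rw [Finset.card_erase_of_mem hp, hcard]
          omega
        · intro p1 h1 q1 h2 hne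
          exact hdist p1 (Finset.mem_of_mem_erase h1) q1 (Finset.mem_of_mem_erase h2) hne
      · rw [Finset.insert_erase hp]
  · rintro (hs | ⟨⟨i, t⟩, ⟨⟨hi1, hi2⟩, ht⟩, rfl⟩)
    · obtain ⟨hsub, hcard, hdist⟩ := mem_Fn.1 hs
      refine mem_Fn.2 ⟨fun p hp => ?_, hcard, hdist⟩
      have := mem_board.1 (hsub hp)
      exact mem_board.2 ⟨this.1, this.2.1, by omega⟩
    · obtain ⟨hsub, hcard, hdist⟩ := mem_Fn.1 ht
      have hnotin : (i, n + 1) ∉ t := fun h => by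
        have := snd_le_of_mem_board hsub _ h
        simp at this
      refine mem_Fn.2 ⟨?_, ?_, ?_⟩
      · intro p hp
        rcases Finset.mem_insert.1 hp with h | h
        · subst h
          exact mem_board.2 ⟨by omega, by omega, le_refl _⟩
        · have := mem_board.1 (hsub h)
          exact mem_board.2 ⟨this.1, this.2.1, by omega⟩
      · rw [Finset.card_insert_of_notMem hnotin, hcard]
      · intro p h1 q h2 hne
        rcases Finset.mem_insert.1 h1 with h1' | h1' <;>
          rcases Finset.mem_insert.1 h2 with h2' | h2'
        · exact absurd (h1'.trans h2'.symm) hne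
        · subst h1'
          have := snd_le_of_mem_board hsub _ h2'
          simp only
          omega
        · subst h2'
          have := snd_le_of_mem_board hsub _ h1'
          simp only
          omega
        · exact hdist p h1' q h2' hne

lemma Fn_card_succ (n r : ℕ) :
    (Fn (n + 1) (r + 1)).card = (Fn n (r + 1)).card + n * (Fn n r).card := by
  rw [Fn_succ, Finset.card_union_of_disjoint, Finset.card_image_of_injOn,
    Finset.card_product, Nat.card_Icc]
  · simp [mul_comm]
  · rintro ⟨i, t⟩ hit ⟨i', t'⟩ hit' heq
    simp only [Finset.coe_product, Set.mem_prod, Finset.mem_coe, Finset.mem_Icc] at hit hit'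
    obtain ⟨-, ht⟩ := hit
    obtain ⟨-, ht'⟩ := hit'
    have hsub := (mem_Fn.1 ht).1
    have hsub' := (mem_Fn.1 ht').1
    have hnotin : (i, n + 1) ∉ t := fun h => by
      have := snd_le_of_mem_board hsub _ h; simp at this
    have hnotin' : (i', n + 1) ∉ t' := fun h => by
      have := snd_le_of_mem_board hsub' _ h; simp at this
    simp only at heq
    have hii : i = i' := by
      have hmem : (i, n + 1) ∈ insert (i', n + 1) t' := heq ▸ Finset.mem_insert_self _ _
      rcases Finset.mem_insert.1 hmem with h | h
      · exact (Prod.mk.injEq _ _ _ _ ▸ h).1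
      · exact absurd (snd_le_of_mem_board hsub' _ h) (by simp)
    subst hii
    have : t = t' := by
      have := congrArg (fun s => Finset.erase s (i, n + 1)) heq
      simpa [Finset.erase_insert hnotin, Finset.erase_insert hnotin'] using this
    rw [this]
  · rw [Finset.disjoint_right]
    rintro s hs hs'
    obtain ⟨⟨i, t⟩, hit, rfl⟩ := Finset.mem_image.1 hs
    have hsub := (mem_Fn.1 hs').1
    have := snd_le_of_mem_board hsub _ (Finset.mem_insert_self _ _)
    simp at this

lemma Fn_zero (m : ℕ) : Fn m 0 = {∅} := by
  ext s
  simp only [mem_Fn, Finset.mem_singleton, Finset.card_eq_zero]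
  constructor
  · rintro ⟨-, h, -⟩; exact h
  · rintro rfl
    simp

lemma Fn_empty (m r : ℕ) (h : m ≤ r) (hr : 1 ≤ r) : Fn m r = ∅ := by
  rw [Finset.eq_empty_iff_forall_notMem]
  intro s hs
  obtain ⟨hsub, hcard, hdist⟩ := mem_Fn.1 hs
  have hinj : Set.InjOn Prod.snd (↑s : Set (ℕ × ℕ)) := by
    intro p hp q hq hpq
    by_contra hne
    exact hdist p hp q hq hne hpq
  have him : s.image Prod.snd ⊆ Finset.Icc 2 m := by
    intro j hj
    obtain ⟨p, hp, rfl⟩ := Finset.mem_image.1 hj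
    have := mem_board.1 (hsub hp)
    rw [Finset.mem_Icc]
    omega
  have h1 : (s.image Prod.snd).card = r := by
    rw [Finset.card_image_of_injOn hinj, hcard]
  have h2 := Finset.card_le_card him
  rw [h1, Nat.card_Icc] at h2
  omega

lemma numCycles_fin_one (σ : Perm (Fin 1)) : numCycles σ = 1 := by
  have : σ = 1 := Subsingleton.elim σ 1
  subst this
  rw [numCycles, cycleType_one]
  simp

lemma Fn_card_eq (n : ℕ) (hn : 1 ≤ n) : ∀ r, (Fn n r).card = stirling1 n (n - r) := by
  induction n, hn using Nat.le_induction with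
  | base =>
    intro r
    match r with
    | 0 =>
      rw [Fn_zero, stirling1_eq_card]
      have : (Finset.univ.filter fun σ : Perm (Fin 1) => numCycles σ = 1 - 0) = Finset.univ := by
        apply Finset.filter_true_of_mem
        intro σ _
        exact numCycles_fin_one σ
      rw [this, Finset.card_univ, Finset.card_singleton]
      simp
    | r + 1 =>
      rw [Fn_empty 1 (r + 1) (by omega) (by omega), Finset.card_empty]
      have h10 : 1 - (r + 1) = 0 := by omega
      rw [h10]
      symm
      rw [stirling1_eq_card, Finset.card_eq_zero, Finset.filter_eq_empty_iff]
      intro σ _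
      rw [numCycles_fin_one σ]
      omega
  | succ n hn ih =>
    intro r
    match r with
    | 0 =>
      rw [Fn_zero, Finset.card_singleton, Nat.sub_zero, stirling1_succ n (n + 1) (by omega), Nat.add_sub_cancel,
        stirling1_high n (n + 1) (by omega)]
      have := ih 0
      rw [Nat.sub_zero] at this
      rw [Fn_zero, Finset.card_singleton] at this
      omega
    | r + 1 =>
      by_cases hr : n ≤ r
      · rw [Fn_empty (n + 1) (r + 1) (by omega) (by omega), Finset.card_empty,
          show n + 1 - (r + 1) = 0 from by omega, stirling1_zero]
      · push_neg at hr
        rw [Fn_card_succ, show n + 1 - (r + 1) = n - r from by omega,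
          stirling1_succ n (n - r) (by omega), ih (r + 1), ih r,
          show n - (r + 1) = n - r - 1 from by omega]

lemma wcc_zero_iff {r : ℕ} (f : Fin r → ℕ × ℕ) :
    WCC r f = 0 ↔ ∀ a b : Fin r, a ≠ b → (f a).2 ≠ (f b).2 := by
  rw [WCC, Finset.card_eq_zero, Finset.filter_eq_empty_iff]
  constructor
  · intro h a b hab heq
    rcases lt_or_gt_of_ne hab with hl | hl
    · exact h (Finset.mem_univ (a, b)) ⟨hl, heq⟩
    · exact h (Finset.mem_univ (b, a)) ⟨hl, heq.symm⟩
  · intro h p _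
    rintro ⟨h1, h2⟩
    exact h p.1 p.2 (ne_of_lt h1) h2

lemma ordered_count (n r : ℕ) :
    {f : Fin r → ℕ × ℕ | (∀ a, f a ∈ board n) ∧ WCC r f = 0}.ncard
      = r.factorial * (Fn n r).card := by
  classical
  set G : Finset (Fin r → {x // x ∈ board n}) :=
    Finset.univ.filter (fun g => ∀ a b : Fin r, a ≠ b → (g a).1.2 ≠ (g b).1.2) with hG
  have hinj : Function.Injective
      (fun (g : Fin r → {x // x ∈ board n}) => fun a => ((g a).1 : ℕ × ℕ)) := by
    intro g g' h
    funext a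
    exact Subtype.ext (congrFun h a)
  have hset : {f : Fin r → ℕ × ℕ | (∀ a, f a ∈ board n) ∧ WCC r f = 0}
      = (fun (g : Fin r → {x // x ∈ board n}) => fun a => ((g a).1 : ℕ × ℕ)) '' ↑G := by
    ext f
    simp only [Set.mem_image, Finset.mem_coe, hG, Finset.mem_filter, Finset.mem_univ,
      true_and, Set.mem_setOf_eq]
    constructor
    · rintro ⟨hmem, hw⟩
      rw [wcc_zero_iff] at hw
      exact ⟨fun a => ⟨f a, hmem a⟩, hw, rfl⟩
    · rintro ⟨g, hg, rfl⟩
      exact ⟨fun a => (g a).2, (wcc_zero_iff _).2 hg⟩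
  rw [hset, Set.ncard_image_of_injective _ hinj, Set.ncard_coe_finset]
  have hvalinj : ∀ g ∈ G, Function.Injective (fun a => ((g a).1 : ℕ × ℕ)) := by
    intro g hg a b hab
    by_contra hne
    rw [hG, Finset.mem_filter] at hg
    exact hg.2 a b hne (congrArg Prod.snd hab)
  have hmap : ∀ g ∈ G, (Finset.univ.image fun a => ((g a).1 : ℕ × ℕ)) ∈ Fn n r := by
    intro g hg
    refine mem_Fn.2 ⟨?_, ?_, ?_⟩
    · intro p hp
      obtain ⟨a, -, rfl⟩ := Finset.mem_image.1 hp
      exact (g a).2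
    · rw [Finset.card_image_of_injective _ (hvalinj g hg), Finset.card_univ, Fintype.card_fin]
    · intro p hp q hq hpq
      obtain ⟨a, -, rfl⟩ := Finset.mem_image.1 hp
      obtain ⟨b, -, rfl⟩ := Finset.mem_image.1 hq
      rw [hG, Finset.mem_filter] at hg
      exact hg.2 a b (fun h => hpq (congrArg (fun a => ((g a).1 : ℕ × ℕ)) h))
  rw [Finset.card_eq_sum_card_fiberwise hmap]
  have hfib : ∀ s ∈ Fn n r,
      (G.filter fun g => (Finset.univ.image fun a => ((g a).1 : ℕ × ℕ)) = s).card
        = r.factorial := by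
    intro s hs
    obtain ⟨hsub, hcard, hdist⟩ := mem_Fn.1 hs
    have : (G.filter fun g => (Finset.univ.image fun a => ((g a).1 : ℕ × ℕ)) = s).card
        = (Finset.univ : Finset (Fin r ↪ {x // x ∈ s})).card := by
      refine Finset.card_bij'
        (fun g hg => ⟨fun a => ⟨(g a).1, by
          rw [Finset.mem_filter] at hg
          rw [← hg.2]
          exact Finset.mem_image_of_mem _ (Finset.mem_univ a)⟩, by
          intro a b hab
          simp only [Subtype.mk.injEq] at hab
          exact (hvalinj g (Finset.mem_filter.1 hg).1).eq_iff.1 hab⟩)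
        (fun e he => fun a => ⟨(e a).1, hsub (e a).2⟩)
        (fun g hg => Finset.mem_univ _) ?_ (fun g hg => rfl)
        (fun e he => DFunLike.ext _ _ fun a => Subtype.ext rfl)
      intro e he
      rw [Finset.mem_filter]
      constructor
      · rw [hG, Finset.mem_filter]
        refine ⟨Finset.mem_univ _, ?_⟩
        intro a b hab
        exact hdist _ (e a).2 _ (e b).2
          (fun h => (e.injective.ne hab) (Subtype.ext h))
      · apply Finset.eq_of_subset_of_card_le
        · intro p hp
          obtain ⟨a, -, rfl⟩ := Finset.mem_image.1 hp
          exact (e a).2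
        · rw [Finset.card_image_of_injective, Finset.card_univ, Fintype.card_fin, hcard]
          intro a b hab
          exact e.injective (Subtype.ext hab)
    rw [this, Finset.card_univ, Fintype.card_embedding_eq, Fintype.card_coe, hcard,
      Fintype.card_fin, Nat.descFactorial_self]
  rw [Finset.sum_congr rfl hfib, Finset.sum_const, smul_eq_mul, mul_comm]

end Aux

/-- placing `r ≤ n` distinguishable rooks independently and uniformly at random on
`B_n`, `n ≥ 2`, the probability that no two rooks attack in the permutation sense (no two in
the same column) equals `r!·s(n, n−r)/C(n,2)^r`; equivalently, the number of `r`-element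
subsets of `B_n` whose second coordinates are pairwise distinct equals `s(n, n−r)`. -/
theorem no_attack_permutation (n r : ℕ) (hn : 2 ≤ n) (hr : r ≤ n) :
    rookProb n r (fun f => WCC r f = 0)
        = (r.factorial : ℝ) * (stirling1 n (n - r) : ℝ) / (n.choose 2 : ℝ) ^ r ∧
    {s : Finset (ℕ × ℕ) | s ⊆ board n ∧ s.card = r ∧
        (∀ p ∈ s, ∀ q ∈ s, p ≠ q → p.2 ≠ q.2)}.ncard = stirling1 n (n - r) := by
  constructor
  · have h1 : {f : Fin r → ℕ × ℕ | (∀ a, f a ∈ board n) ∧ (fun f => WCC r f = 0) f}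
        = {f : Fin r → ℕ × ℕ | (∀ a, f a ∈ board n) ∧ WCC r f = 0} := rfl
    rw [rookProb, h1, ordered_count n r, Fn_card_eq n (by omega) r, card_board]
    push_cast
    ring
  · have h2 : {s : Finset (ℕ × ℕ) | s ⊆ board n ∧ s.card = r ∧
        ∀ p ∈ s, ∀ q ∈ s, p ≠ q → p.2 ≠ q.2} = ↑(Fn n r) := by
      ext s
      rw [Finset.mem_coe, mem_Fn]
      rfl
    rw [h2, Set.ncard_coe_finset, Fn_card_eq n (by omega) r]
end

section
/- Let n ≥ 2 and 1 ≤ k ≤ n, set r = n − k, and define λ := (4/3)·binomial(r,2)·(n − 1/2)/(n(n−1)), f_1 := binomial(r,2)·(2r−3)·((4/(3n))·((n−1/2)/(n−1)))², and f_2 := binomial(r,2)·(2r−3)/binomial(n,2). Then the unsigned Stirling number of the first kind satisfies (binomial(n,2)^r / r!) · e^{−λ} · (1 − e^{λ}(f_1 + f_2)) ≤ s(n,k) ≤ (binomial(n,2)^r / r!) · e^{−λ} · (1 + e^{λ}(f_1 + f_2)). -/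
open Finset Filter

namespace StirlingProofAux

open Equiv Equiv.Perm

variable {α : Type*} [Fintype α] [DecidableEq α]

/-- generalized cycle count -/
def nc (σ : Perm α) : ℕ :=
  Multiset.card σ.cycleType + (Fintype.card α - σ.cycleType.sum)

lemma sum_cycleType_le (σ : Perm α) : σ.cycleType.sum ≤ Fintype.card α := by
  rw [Equiv.Perm.sum_cycleType]; exact Finset.card_le_univ _

lemma card_cycleType_le_sum (σ : Perm α) : Multiset.card σ.cycleType ≤ σ.cycleType.sum := by
  have h2 : ∀ x ∈ σ.cycleType, 2 ≤ x := fun x hx => Equiv.Perm.two_le_of_mem_cycleType hx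
  revert h2
  refine Multiset.induction_on σ.cycleType (by simp) ?_
  intro a s ih h
  simp only [Multiset.card_cons, Multiset.sum_cons]
  have ha := h a (Multiset.mem_cons_self a s)
  have := ih (fun x hx => h x (Multiset.mem_cons_of_mem hx))
  omega

lemma numCycles_eq_nc {n : ℕ} (σ : Perm (Fin n)) : numCycles σ = nc σ := by
  unfold numCycles nc
  simp only [Fintype.card_fin]
  have h := Finset.card_filter_add_card_filter_not (s := (Finset.univ : Finset (Fin n)))
    (p := fun x => σ x = x)
  have hsupp : σ.support = Finset.univ.filter fun x => ¬ σ x = x := rfl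
  have hsum : σ.cycleType.sum = σ.support.card := Equiv.Perm.sum_cycleType σ
  rw [hsupp] at hsum
  simp only [Finset.card_univ, Fintype.card_fin] at h
  have hle := Finset.card_le_univ σ.support
  simp only [Finset.card_univ, Fintype.card_fin] at hle
  omega

lemma nc_le_card (σ : Perm α) : nc σ ≤ Fintype.card α := by
  have h1 := card_cycleType_le_sum σ
  have h2 := sum_cycleType_le σ
  unfold nc; omega

lemma nc_swap_mul (σ : Perm α) (a : α) (ha : σ a ≠ a) :
    nc (Equiv.swap a (σ a) * σ) = nc σ + 1 := by
  classical
  set c := σ.cycleOf a with hc_def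
  have hamem : a ∈ σ.support := Equiv.Perm.mem_support.mpr ha
  have hcmem : c ∈ σ.cycleFactorsFinset :=
    Equiv.Perm.cycleOf_mem_cycleFactorsFinset_iff.mpr hamem
  have hdisj : (σ * c⁻¹).Disjoint c :=
    Equiv.Perm.disjoint_mul_inv_of_mem_cycleFactorsFinset hcmem
  set ρ := σ * c⁻¹ with hρ_def
  have hσ : σ = ρ * c := by rw [hρ_def]; group
  have hca : c a = σ a := Equiv.Perm.cycleOf_apply_self σ a
  have hccycle : c.IsCycle := Equiv.Perm.isCycle_cycleOf σ ha
  have hcaa : c a ≠ a := by rw [hca]; exact ha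
  have hane : a ≠ σ a := Ne.symm ha
  -- support facts
  have hasupp : a ∈ c.support := by
    rw [hc_def, Equiv.Perm.mem_support_cycleOf_iff]
    exact ⟨Equiv.Perm.SameCycle.refl σ a, hamem⟩
  have hsasupp : σ a ∈ c.support := by
    rw [hc_def, Equiv.Perm.mem_support_cycleOf_iff]
    exact ⟨⟨1, by simp⟩, hamem⟩
  -- disjointness of ρ with the swap
  have hdisj2 : ρ.Disjoint (Equiv.swap a (σ a)) := by
    intro x
    rcases hdisj x with h | h
    · exact Or.inl h
    · right
      have hx : x ∉ c.support := Equiv.Perm.notMem_support.mpr h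
      have hxa : x ≠ a := fun hh => hx (hh ▸ hasupp)
      have hxsa : x ≠ σ a := fun hh => hx (hh ▸ hsasupp)
      exact Equiv.swap_apply_of_ne_of_ne hxa hxsa
  set d := Equiv.swap a (σ a) * c with hd_def
  have hτ : Equiv.swap a (σ a) * σ = ρ * d := by
    have : ρ * d = Equiv.swap a (σ a) * σ := by
      calc ρ * d = (ρ * Equiv.swap a (σ a)) * c := by rw [hd_def, ← mul_assoc]
        _ = (Equiv.swap a (σ a) * ρ) * c := by rw [hdisj2.commute.eq]
        _ = Equiv.swap a (σ a) * (ρ * c) := mul_assoc _ _ _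
        _ = Equiv.swap a (σ a) * σ := by rw [← hσ]
    exact this.symm
  have hddisj : ρ.Disjoint d := by
    intro x
    rcases hdisj x with h | h
    · exact Or.inl h
    · rcases hdisj2 x with h2 | h2
      · exact Or.inl h2
      · right; rw [hd_def]; simp only [Equiv.Perm.mul_apply, h, h2]
  have hct_τ : (Equiv.swap a (σ a) * σ).cycleType = ρ.cycleType + d.cycleType := by
    rw [hτ]; exact hddisj.cycleType_mul
  have hct_σ : σ.cycleType = ρ.cycleType + c.cycleType := by
    rw [hσ]; exact hdisj.cycleType_mul
  have hc_ct : c.cycleType = {c.support.card} := by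
    simpa using hccycle.cycleType
  have hsum_le := sum_cycleType_le σ
  rw [hct_σ, Multiset.sum_add, hc_ct] at hsum_le
  simp only [Multiset.sum_singleton] at hsum_le
  have hLge : 2 ≤ c.support.card := hccycle.two_le_card_support
  by_cases hend : c (c a) = a
  · -- c is a 2-cycle, d = 1
    have hcswap : c = Equiv.swap a (c a) := hccycle.eq_swap_of_apply_apply_eq_self hcaa hend
    have hd1 : d = 1 := by
      rw [hd_def, hcswap, ← hca, Equiv.swap_mul_self]
    have hL2 : c.support.card = 2 := by
      rw [hcswap]; exact Equiv.Perm.card_support_swap hcaa.symm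
    unfold nc
    rw [hct_τ, hct_σ, hd1, hc_ct, hL2]
    simp only [Equiv.Perm.cycleType_one, Multiset.card_add, Multiset.sum_add,
      Multiset.card_singleton, Multiset.sum_singleton, add_zero, Multiset.card_zero,
      Multiset.sum_zero]
    rw [hL2] at hsum_le
    omega
  · -- d is a cycle with support c.support.erase a
    have hd_cycle : d.IsCycle := by
      have := hccycle.swap_mul hcaa hend
      rwa [hca] at this
    have hd_supp : d.support = c.support.erase a := by
      ext y
      simp only [Equiv.Perm.mem_support, Finset.mem_erase]
      constructor
      · intro hy
        by_cases hya : y = a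
        · exfalso; apply hy
          rw [hya, hd_def]
          simp only [Equiv.Perm.mul_apply, hca]
          exact Equiv.swap_apply_right a (σ a)
        · refine ⟨hya, ?_⟩
          by_contra hcy
          have hcy' : c y = y := by simpa using hcy
          apply hy
          rw [hd_def]
          simp only [Equiv.Perm.mul_apply, hcy']
          have hysa : y ≠ σ a := by
            intro hh
            have : c (σ a) ≠ σ a := Equiv.Perm.mem_support.mp hsasupp
            rw [← hh] at this; exact this hcy'
          exact Equiv.swap_apply_of_ne_of_ne hya hysa
      · rintro ⟨hya, hcy⟩
        rw [hd_def]
        simp only [Equiv.Perm.mul_apply]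
        by_cases h1 : c y = a
        · rw [h1, Equiv.swap_apply_left]
          intro hh
          apply hend
          rw [hca, hh, h1]
        · by_cases h2 : c y = σ a
          · -- c y = c a  ⟹ y = a, contradiction
            exfalso; apply hya
            have : c y = c a := by rw [h2, hca]
            exact c.injective this
          · rw [Equiv.swap_apply_of_ne_of_ne h1 h2]
            exact hcy
    have hd_ct : d.cycleType = {c.support.card - 1} := by
      have := hd_cycle.cycleType
      rw [hd_supp] at this
      rw [Finset.card_erase_of_mem hasupp] at this
      simpa using this
    unfold nc
    rw [hct_τ, hct_σ, hd_ct, hc_ct]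
    simp only [Multiset.card_add, Multiset.sum_add, Multiset.card_singleton,
      Multiset.sum_singleton]
    omega


/-- equivalence between `Fin n` and nonzero elements of `Fin (n+1)` -/
def eqvSucc (n : ℕ) : Fin n ≃ {x : Fin (n + 1) // x ≠ 0} where
  toFun x := ⟨x.succ, Fin.succ_ne_zero x⟩
  invFun y := (y : Fin (n + 1)).pred y.2
  left_inv x := by simp
  right_inv y := by cases y; simp

lemma decomposeFin_zero_eq_extend {n : ℕ} (e : Perm (Fin n)) :
    Equiv.Perm.decomposeFin.symm (0, e) = e.extendDomain (eqvSucc n) := by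
  ext x
  refine Fin.cases ?_ (fun i => ?_) x
  · rw [Equiv.Perm.decomposeFin_symm_apply_zero]
    rw [Equiv.Perm.extendDomain_apply_not_subtype]
    simp
  · rw [Equiv.Perm.decomposeFin_symm_apply_succ]
    rw [Equiv.swap_self]
    rw [Equiv.Perm.extendDomain_apply_subtype e (eqvSucc n) (Fin.succ_ne_zero i)]
    simp [eqvSucc]

lemma nc_decomposeFin_zero {n : ℕ} (e : Perm (Fin n)) :
    nc (Equiv.Perm.decomposeFin.symm (0, e)) = nc e + 1 := by
  rw [decomposeFin_zero_eq_extend]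
  unfold nc
  rw [Equiv.Perm.cycleType_extendDomain]
  simp only [Fintype.card_fin]
  have h1 := card_cycleType_le_sum e
  have h2 := sum_cycleType_le e
  simp only [Fintype.card_fin] at h2
  omega

lemma nc_decomposeFin {n : ℕ} (p : Fin (n + 1)) (e : Perm (Fin n)) :
    nc (Equiv.Perm.decomposeFin.symm (p, e)) = nc e + if p = 0 then 1 else 0 := by
  by_cases hp : p = 0
  · subst hp; simp only [if_pos rfl]; exact nc_decomposeFin_zero e
  · rw [if_neg hp, add_zero]
    set σ := Equiv.Perm.decomposeFin.symm (p, e) with hσdef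
    have hσ0 : σ 0 = p := Equiv.Perm.decomposeFin_symm_apply_zero p e
    have hmove : σ 0 ≠ 0 := by rw [hσ0]; exact hp
    have hkey : Equiv.swap 0 (σ 0) * σ = Equiv.Perm.decomposeFin.symm (0, e) := by
      rw [hσ0]
      ext x
      refine Fin.cases ?_ (fun i => ?_) x
      · simp only [Equiv.Perm.mul_apply, hσdef, Equiv.Perm.decomposeFin_symm_apply_zero]
        rw [Equiv.swap_apply_right]
      · simp only [Equiv.Perm.mul_apply, hσdef, Equiv.Perm.decomposeFin_symm_apply_succ]
        rw [Equiv.swap_apply_self, Equiv.swap_self]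
        rfl
    have h1 := nc_swap_mul σ 0 hmove
    rw [hkey, nc_decomposeFin_zero e] at h1
    omega

lemma numCycles_decomposeFin {n : ℕ} (p : Fin (n + 1)) (e : Perm (Fin n)) :
    numCycles (Equiv.Perm.decomposeFin.symm (p, e)) = numCycles e + if p = 0 then 1 else 0 := by
  rw [numCycles_eq_nc, numCycles_eq_nc]; exact nc_decomposeFin p e

lemma numCycles_le {n : ℕ} (σ : Perm (Fin n)) : numCycles σ ≤ n := by
  rw [numCycles_eq_nc]
  have := nc_le_card σ
  simpa using this

lemma stirling1_succ (n k : ℕ) :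
    stirling1 (n + 1) k
      = Nat.card {e : Perm (Fin n) // numCycles e + 1 = k} + n * stirling1 n k := by
  classical
  unfold stirling1
  have E1 : {σ : Perm (Fin (n + 1)) // numCycles σ = k}
      ≃ {p : Fin (n + 1) × Perm (Fin n) //
          numCycles p.2 + (if p.1 = 0 then 1 else 0) = k} := by
    refine Equiv.Perm.decomposeFin.subtypeEquiv (fun σ => ?_)
    rw [show numCycles σ = numCycles (Equiv.Perm.decomposeFin.symm
      (Equiv.Perm.decomposeFin σ)) by rw [Equiv.symm_apply_apply]]
    rw [numCycles_decomposeFin]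
  have E2 : {p : Fin (n + 1) × Perm (Fin n) //
        numCycles p.2 + (if p.1 = 0 then 1 else 0) = k}
      ≃ Σ i : Fin (n + 1), {e : Perm (Fin n) // numCycles e + (if i = 0 then 1 else 0) = k} :=
    Equiv.subtypeProdEquivSigmaSubtype
      (fun (i : Fin (n + 1)) (e : Perm (Fin n)) => numCycles e + (if i = 0 then 1 else 0) = k)
  rw [Nat.card_congr (E1.trans E2)]
  rw [Nat.card_eq_fintype_card, Fintype.card_sigma, Fin.sum_univ_succ]
  congr 1
  · rw [← Nat.card_eq_fintype_card]
    apply Nat.card_congr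
    exact Equiv.subtypeEquivRight (fun e => by simp)
  · have : ∀ i : Fin n, Fintype.card {e : Perm (Fin n) //
        numCycles e + (if i.succ = 0 then 1 else 0) = k}
        = Nat.card {e : Perm (Fin n) // numCycles e = k} := by
      intro i
      rw [← Nat.card_eq_fintype_card]
      apply Nat.card_congr
      exact Equiv.subtypeEquivRight (fun e => by simp [Fin.succ_ne_zero i])
    rw [Finset.sum_congr rfl (fun i _ => this i)]
    simp [Finset.sum_const, Finset.card_univ]


/-- elementary symmetric number: sum over r-subsets of {1,...,m} of products -/
def Enat (m r : ℕ) : ℕ := ∑ A ∈ (Finset.range m).powersetCard r, ∏ j ∈ A, (j + 1)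

lemma Enat_zero (m : ℕ) : Enat m 0 = 1 := by
  unfold Enat
  rw [Finset.powersetCard_zero]
  simp

lemma Enat_of_lt {m r : ℕ} (h : m < r) : Enat m r = 0 := by
  unfold Enat
  rw [Finset.powersetCard_eq_empty.mpr (by simpa using h)]
  simp

lemma Enat_succ_succ (m r : ℕ) :
    Enat (m + 1) (r + 1) = Enat m (r + 1) + (m + 1) * Enat m r := by
  unfold Enat
  rw [Finset.range_add_one, Finset.powersetCard_succ_insert (by simp)]
  rw [Finset.sum_union]
  · congr 1
    rw [Finset.sum_image]
    · rw [Finset.mul_sum]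
      apply Finset.sum_congr rfl
      intro A hA
      have hmA : m ∉ A := by
        intro hmem
        have := (Finset.mem_powersetCard.mp hA).1 hmem
        simp at this
      rw [Finset.prod_insert hmA]
    · intro A hA B hB hAB
      have hmA : m ∉ A := fun hmem => by
        have := (Finset.mem_powersetCard.mp hA).1 hmem; simp at this
      have hmB : m ∉ B := fun hmem => by
        have := (Finset.mem_powersetCard.mp hB).1 hmem; simp at this
      rw [← Finset.erase_insert hmA, ← Finset.erase_insert hmB, hAB]
  · rw [Finset.disjoint_left]
    intro A hA hA'
    obtain ⟨B, hB, rfl⟩ := Finset.mem_image.mp hA'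
    have : m ∈ insert m B := Finset.mem_insert_self m B
    have := (Finset.mem_powersetCard.mp hA).1 this
    simp at this

lemma stirling1_zero_succ (k : ℕ) : stirling1 0 (k + 1) = 0 := by
  unfold stirling1
  have : IsEmpty {σ : Perm (Fin 0) // numCycles σ = k + 1} := by
    refine ⟨fun ⟨σ, hσ⟩ => ?_⟩
    have := numCycles_le σ
    omega
  exact Nat.card_of_isEmpty

lemma stirling1_zero_zero : stirling1 0 0 = 1 := by
  unfold stirling1
  have h : ∀ σ : Perm (Fin 0), numCycles σ = 0 := fun σ =>
    Nat.le_zero.mp (numCycles_le σ)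
  rw [Nat.card_congr (Equiv.subtypeUnivEquiv h)]
  rw [Nat.card_eq_fintype_card]
  simp

lemma stirling1_gt {n k : ℕ} (h : n < k) : stirling1 n k = 0 := by
  unfold stirling1
  have : IsEmpty {σ : Perm (Fin n) // numCycles σ = k} := by
    refine ⟨fun ⟨σ, hσ⟩ => ?_⟩
    have := numCycles_le σ
    omega
  exact Nat.card_of_isEmpty

lemma stirling1_succ_succ (n k : ℕ) :
    stirling1 (n + 1) (k + 1) = stirling1 n k + n * stirling1 n (k + 1) := by
  rw [stirling1_succ]
  congr 1
  unfold stirling1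
  apply Nat.card_congr
  exact Equiv.subtypeEquivRight (fun e => by omega)

lemma stirling1_succ_zero (n : ℕ) : stirling1 (n + 1) 0 = n * stirling1 n 0 := by
  rw [stirling1_succ]
  have : IsEmpty {e : Perm (Fin n) // numCycles e + 1 = 0} := by
    refine ⟨fun ⟨σ, hσ⟩ => ?_⟩
    omega
  rw [Nat.card_of_isEmpty]
  simp

lemma stirling1_eq_Enat : ∀ n k : ℕ, k ≤ n → stirling1 n k = Enat (n - 1) (n - k) := by
  intro n
  induction n with
  | zero =>
    intro k hk
    interval_cases k
    simpa [Enat_zero] using stirling1_zero_zero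
  | succ n ih =>
    intro k hk
    match k with
    | 0 =>
      rw [stirling1_succ_zero]
      match n with
      | 0 => rw [Enat_of_lt (by omega)]; simp
      | m + 1 =>
        rw [ih 0 (Nat.zero_le _)]
        rw [Enat_of_lt (by omega), Enat_of_lt (by omega)]
        simp
    | j + 1 =>
      rw [stirling1_succ_succ]
      by_cases hkn : j = n
      · subst hkn
        rw [stirling1_gt (show j < j + 1 from lt_add_one j)]
        rw [ih j le_rfl]
        simp [Nat.sub_self, Enat_zero]
      · -- j + 1 ≤ n
        have hk1n : j + 1 ≤ n := by omega
        obtain ⟨d, hd⟩ : ∃ d, n = j + 1 + d := ⟨n - j - 1, by omega⟩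
        subst hd
        have h1 : stirling1 (j + 1 + d) j = Enat (j + d) (d + 1) := by
          have := ih j (by omega)
          convert this using 2 <;> omega
        have h2 : stirling1 (j + 1 + d) (j + 1) = Enat (j + d) d := by
          have := ih (j + 1) (by omega)
          convert this using 2 <;> omega
        rw [h1, h2]
        have goal_eq : Enat (j + 1 + d + 1 - 1) (j + 1 + d + 1 - (j + 1)) = Enat (j + d + 1) (d + 1) := by
          congr 1 <;> omega
        rw [goal_eq, Enat_succ_succ (j + d) d]
        have heq : j + d + 1 = j + 1 + d := by omega
        rw [heq]

end StirlingProofAux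


namespace StirlingProofAux2

noncomputable section

def xr (j : ℕ) : ℝ := (j : ℝ) + 1

def ee (N m : ℕ) : ℝ := ∑ A ∈ (range N).powersetCard m, ∏ j ∈ A, xr j

def Gf (N t m : ℕ) : ℝ :=
  ∑ A ∈ (range N).powersetCard m, (∏ j ∈ A, xr j) * ∑ j ∈ A, xr j ^ t

def pw (N t : ℕ) : ℝ := ∑ j ∈ range N, xr j ^ t

def Sr (N : ℕ) : ℝ := pw N 1

lemma xr_pos (j : ℕ) : 0 < xr j := by unfold xr; positivity

lemma xr_nonneg (j : ℕ) : 0 ≤ xr j := (xr_pos j).le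

lemma ee_nonneg (N m : ℕ) : 0 ≤ ee N m :=
  Finset.sum_nonneg fun A _ => Finset.prod_nonneg fun j _ => xr_nonneg j

lemma Gf_nonneg (N t m : ℕ) : 0 ≤ Gf N t m :=
  Finset.sum_nonneg fun A _ =>
    mul_nonneg (Finset.prod_nonneg fun j _ => xr_nonneg j)
      (Finset.sum_nonneg fun j _ => pow_nonneg (xr_nonneg j) t)

lemma pw_nonneg (N t : ℕ) : 0 ≤ pw N t :=
  Finset.sum_nonneg fun j _ => pow_nonneg (xr_nonneg j) t

lemma ee_zero (N : ℕ) : ee N 0 = 1 := by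
  unfold ee; rw [Finset.powersetCard_zero]; simp

lemma Gf_zero (N t : ℕ) : Gf N t 0 = 0 := by
  unfold Gf; rw [Finset.powersetCard_zero]; simp

/-- The key double-counting lemma. -/
lemma key_count (s : Finset ℕ) (m : ℕ) (F : Finset ℕ → ℕ → ℝ) :
    ∑ A ∈ s.powersetCard (m + 1), ∑ j ∈ A, F A j
      = ∑ B ∈ s.powersetCard m, ∑ j ∈ s \ B, F (insert j B) j := by
  classical
  rw [Finset.sum_sigma', Finset.sum_sigma']
  refine Finset.sum_nbij' (fun a => ⟨a.1.erase a.2, a.2⟩) (fun b => ⟨insert b.2 b.1, b.2⟩)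
    ?_ ?_ ?_ ?_ ?_
  · rintro ⟨A, j⟩ h
    rw [Finset.mem_sigma] at h
    obtain ⟨hA, hj⟩ := h
    rw [Finset.mem_powersetCard] at hA
    rw [Finset.mem_sigma, Finset.mem_powersetCard]
    refine ⟨⟨(Finset.erase_subset _ _).trans hA.1, ?_⟩, ?_⟩
    · rw [Finset.card_erase_of_mem hj, hA.2]; omega
    · rw [Finset.mem_sdiff]
      exact ⟨hA.1 hj, Finset.notMem_erase _ _⟩
  · rintro ⟨B, j⟩ h
    rw [Finset.mem_sigma] at h
    obtain ⟨hB, hj⟩ := h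
    rw [Finset.mem_powersetCard] at hB
    rw [Finset.mem_sdiff] at hj
    rw [Finset.mem_sigma, Finset.mem_powersetCard]
    refine ⟨⟨?_, ?_⟩, Finset.mem_insert_self _ _⟩
    · intro x hx
      rcases Finset.mem_insert.mp hx with rfl | hx
      · exact hj.1
      · exact hB.1 hx
    · rw [Finset.card_insert_of_notMem hj.2, hB.2]
  · rintro ⟨A, j⟩ h
    rw [Finset.mem_sigma] at h
    simp [Finset.insert_erase h.2]
  · rintro ⟨B, j⟩ h
    rw [Finset.mem_sigma, Finset.mem_sdiff] at h
    simp [Finset.erase_insert h.2.2]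
  · rintro ⟨A, j⟩ h
    rw [Finset.mem_sigma] at h
    simp [Finset.insert_erase h.2]

lemma T_eq (N m : ℕ) :
    ∑ B ∈ (range N).powersetCard m, (∏ j ∈ B, xr j) * (∑ j ∈ range N \ B, xr j)
      = (m + 1) * ee N (m + 1) := by
  classical
  have h := key_count (range N) m (fun A j => ∏ i ∈ A, xr i)
  have h2 : ∑ B ∈ (range N).powersetCard m, (∏ j ∈ B, xr j) * (∑ j ∈ range N \ B, xr j)
      = ∑ B ∈ (range N).powersetCard m, ∑ j ∈ range N \ B, ∏ i ∈ insert j B, xr i := by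
    apply Finset.sum_congr rfl
    intro B hB
    rw [Finset.mul_sum]
    apply Finset.sum_congr rfl
    intro j hj
    rw [Finset.mem_sdiff] at hj
    rw [Finset.prod_insert hj.2]
    ring
  rw [h2, ← h]
  have h3 : ∀ A ∈ (range N).powersetCard (m + 1),
      (∑ j ∈ A, ∏ i ∈ A, xr i) = (m + 1) * ∏ i ∈ A, xr i := by
    intro A hA
    rw [Finset.sum_const, (Finset.mem_powersetCard.mp hA).2]
    simp [nsmul_eq_mul]
  rw [Finset.sum_congr rfl h3, ← Finset.mul_sum]
  rfl

lemma K1 (N m : ℕ) : Sr N * ee N m = (m + 1) * ee N (m + 1) + Gf N 1 m := by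
  classical
  have expand : Sr N * ee N m
      = ∑ B ∈ (range N).powersetCard m,
          ((∏ j ∈ B, xr j) * (∑ j ∈ range N \ B, xr j)
            + (∏ j ∈ B, xr j) * ∑ j ∈ B, xr j ^ 1) := by
    unfold Sr pw ee
    rw [mul_comm, Finset.sum_mul]
    apply Finset.sum_congr rfl
    intro B hB
    have hsub : B ⊆ range N := (Finset.mem_powersetCard.mp hB).1
    have hsplit := Finset.sum_sdiff (f := fun j => xr j) hsub
    simp only [pow_one]
    rw [← hsplit]
    ring
  rw [expand, Finset.sum_add_distrib]
  rw [T_eq]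
  rfl

lemma K2 (N t m : ℕ) : Gf N t (m + 1) + Gf N (t + 1) m = pw N (t + 1) * ee N m := by
  classical
  have h := key_count (range N) m (fun A j => (∏ i ∈ A, xr i) * xr j ^ t)
  have h1 : Gf N t (m + 1)
      = ∑ A ∈ (range N).powersetCard (m + 1), ∑ j ∈ A, (∏ i ∈ A, xr i) * xr j ^ t := by
    unfold Gf
    apply Finset.sum_congr rfl
    intro A _
    rw [Finset.mul_sum]
  have h2 : ∑ B ∈ (range N).powersetCard m, ∑ j ∈ range N \ B, (∏ i ∈ insert j B, xr i) * xr j ^ t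
      = ∑ B ∈ (range N).powersetCard m,
          ((∏ i ∈ B, xr i) * (pw N (t + 1) - ∑ j ∈ B, xr j ^ (t + 1))) := by
    apply Finset.sum_congr rfl
    intro B hB
    have hsub : B ⊆ range N := (Finset.mem_powersetCard.mp hB).1
    have hsplit := Finset.sum_sdiff (f := fun j => xr j ^ (t + 1)) hsub
    have : ∑ j ∈ range N \ B, (∏ i ∈ insert j B, xr i) * xr j ^ t
        = (∏ i ∈ B, xr i) * ∑ j ∈ range N \ B, xr j ^ (t + 1) := by
      rw [Finset.mul_sum]
      apply Finset.sum_congr rfl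
      intro j hj
      rw [Finset.mem_sdiff] at hj
      rw [Finset.prod_insert hj.2, pow_succ]
      ring
    rw [this]
    have hQ : ∑ j ∈ range N \ B, xr j ^ (t + 1) = pw N (t + 1) - ∑ j ∈ B, xr j ^ (t + 1) := by
      unfold pw; linarith [hsplit]
    rw [hQ]
  rw [h1, h, h2]
  have : ∑ B ∈ (range N).powersetCard m,
      ((∏ i ∈ B, xr i) * (pw N (t + 1) - ∑ j ∈ B, xr j ^ (t + 1)))
      = pw N (t + 1) * ee N m - Gf N (t + 1) m := by
    unfold ee Gf
    rw [Finset.mul_sum, ← Finset.sum_sub_distrib]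
    apply Finset.sum_congr rfl
    intro B _
    ring
  rw [this]
  ring

/-! ### the L inequalities -/

lemma L1 (N m : ℕ) : (m + 1 : ℝ) * ee N (m + 1) ≤ Sr N * ee N m := by
  have := K1 N m
  have := Gf_nonneg N 1 m
  push_cast
  linarith

lemma L2 (N m : ℕ) : Sr N * ee N (m + 1) - pw N 2 * ee N m ≤ (m + 2 : ℝ) * ee N (m + 2) := by
  have h1 := K1 N (m + 1)
  have h2 := K2 N 1 m
  have h3 := Gf_nonneg N 2 m
  push_cast at h1 ⊢
  linarith

lemma L3 (N m : ℕ) : (m + 3 : ℝ) * ee N (m + 3)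
    ≤ Sr N * ee N (m + 2) - pw N 2 * ee N (m + 1) + pw N 3 * ee N m := by
  have h1 := K1 N (m + 2)
  have h2 := K2 N 1 (m + 1)
  have h3 := K2 N 2 m
  have h4 := Gf_nonneg N 3 m
  push_cast at h1 ⊢
  linarith

lemma ee_one (N : ℕ) : ee N 1 = Sr N := by
  have h := K1 N 0
  rw [ee_zero, Gf_zero] at h
  push_cast at h
  linarith

lemma L4 (N : ℕ) : 2 * ee N 2 = Sr N * Sr N - pw N 2 := by
  have h1 := K1 N 1
  have h2 := K2 N 1 0
  rw [Gf_zero, ee_zero] at h2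
  rw [ee_one] at h1
  push_cast at h1
  linarith


/-! ### closed forms -/

lemma Sr_val (N : ℕ) : Sr N = (N : ℝ) * (N + 1) / 2 := by
  induction N with
  | zero => simp [Sr, pw]
  | succ n ih =>
    unfold Sr pw at ih ⊢
    rw [Finset.sum_range_succ]
    push_cast
    rw [ih]
    unfold xr
    push_cast
    ring

lemma pw2_val (N : ℕ) : pw N 2 = (N : ℝ) * (N + 1) * (2 * N + 1) / 6 := by
  induction N with
  | zero => simp [pw]
  | succ n ih =>
    unfold pw at ih ⊢
    rw [Finset.sum_range_succ, ih]
    unfold xr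
    push_cast
    ring

lemma pw3_val (N : ℕ) : pw N 3 = ((N : ℝ) * (N + 1) / 2) ^ 2 := by
  induction N with
  | zero => simp [pw]
  | succ n ih =>
    unfold pw at ih ⊢
    rw [Finset.sum_range_succ, ih]
    unfold xr
    push_cast
    ring

/-! ### normalized quantities -/

def Dr (N m : ℕ) : ℝ := (m.factorial : ℝ) * ee N m / Sr N ^ m

def aa (N : ℕ) : ℝ := pw N 2 / Sr N ^ 2

def QQ (N : ℕ) : ℝ := pw N 3 / Sr N ^ 3

variable {N : ℕ}

lemma Sr_pos (hN : 1 ≤ N) : 0 < Sr N := by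
  rw [Sr_val]
  have : (1 : ℝ) ≤ (N : ℝ) := by exact_mod_cast hN
  nlinarith

lemma aa_nonneg (hN : 1 ≤ N) : 0 ≤ aa N :=
  div_nonneg (pw_nonneg N 2) (pow_nonneg (Sr_pos hN).le 2)

lemma QQ_nonneg (hN : 1 ≤ N) : 0 ≤ QQ N :=
  div_nonneg (pw_nonneg N 3) (pow_nonneg (Sr_pos hN).le 3)

lemma QQ_eq (hN : 1 ≤ N) : QQ N = 1 / Sr N := by
  have hS := Sr_pos hN
  unfold QQ
  rw [pw3_val, ← Sr_val]
  field_simp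

lemma aa_le_one (hN : 1 ≤ N) : aa N ≤ 1 := by
  have hS := Sr_pos hN
  have h1 : (1 : ℝ) ≤ (N : ℝ) := by exact_mod_cast hN
  unfold aa
  rw [div_le_one (by positivity)]
  rw [pw2_val, Sr_val]
  nlinarith [mul_nonneg (sub_nonneg.mpr h1) (mul_nonneg (by linarith : (0:ℝ) ≤ (N:ℝ)) (by linarith : (0:ℝ) ≤ (N:ℝ)+1))]

lemma aa_sq_le_QQ (hN : 1 ≤ N) : aa N ^ 2 ≤ QQ N := by
  have hS := Sr_pos hN
  have h1 : (1 : ℝ) ≤ (N : ℝ) := by exact_mod_cast hN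
  rw [QQ_eq hN]
  unfold aa
  rw [div_pow, div_le_div_iff₀ (by positivity) hS]
  have hgoal : pw N 2 ^ 2 * Sr N ≤ (Sr N ^ 2) ^ 2 → pw N 2 ^ 2 * Sr N ≤ 1 * (Sr N ^ 2) ^ 2 := by
    intro h; linarith
  apply hgoal
  rw [pw2_val, Sr_val]
  have hu : (2:ℝ) ≤ (N:ℝ) * ((N:ℝ)+1) := by nlinarith
  have key : ((2:ℝ)*N+1)^2 * 2 ≤ 9 * ((N:ℝ)*(N+1)) := by nlinarith
  nlinarith [key, hu, sq_nonneg ((N:ℝ)*(N+1)), mul_nonneg (mul_nonneg (by linarith : (0:ℝ) ≤ (N:ℝ)*(N+1)) (by linarith : (0:ℝ) ≤ (N:ℝ)*(N+1))) (by linarith : (0:ℝ) ≤ (N:ℝ)*(N+1))]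

lemma Dr_zero : Dr N 0 = 1 := by
  unfold Dr
  simp [ee_zero]

lemma Dr_one (hN : 1 ≤ N) : Dr N 1 = 1 := by
  have hS := Sr_pos hN
  unfold Dr
  rw [ee_one]
  simp
  exact hS.ne'

lemma Dr_two (hN : 1 ≤ N) : Dr N 2 = 1 - aa N := by
  have hS := Sr_pos hN
  have h := L4 N
  unfold Dr aa
  rw [show (Nat.factorial 2 : ℝ) = 2 by norm_num]
  rw [show ee N 2 = (Sr N * Sr N - pw N 2) / 2 by linarith]
  field_simp

lemma Dr_nonneg (hN : 1 ≤ N) (m : ℕ) : 0 ≤ Dr N m := by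
  have hS := Sr_pos hN
  unfold Dr
  have := ee_nonneg N m
  positivity

lemma F2' (hN : 1 ≤ N) (m : ℕ) : Dr N (m + 1) ≤ Dr N m := by
  have hS := Sr_pos hN
  have h := L1 N m
  have hkey : Dr N m - Dr N (m + 1)
      = (m.factorial : ℝ) / Sr N ^ (m + 1) * (Sr N * ee N m - (m + 1) * ee N (m + 1)) := by
    unfold Dr
    rw [Nat.factorial_succ]
    push_cast
    field_simp
    ring
  have hnn : 0 ≤ Dr N m - Dr N (m + 1) := by
    rw [hkey]
    apply mul_nonneg
    · positivity
    · linarith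
  linarith

lemma Dr_le_one (hN : 1 ≤ N) (m : ℕ) : Dr N m ≤ 1 := by
  induction m with
  | zero => rw [Dr_zero]
  | succ n ih => exact (F2' hN n).trans ih

lemma F3' (hN : 1 ≤ N) (m : ℕ) :
    Dr N (m + 1) ≤ Dr N (m + 2) + (m + 1 : ℝ) * aa N * Dr N m := by
  have hS := Sr_pos hN
  have h := L2 N m
  have hkey : Dr N (m + 2) + (m + 1 : ℝ) * aa N * Dr N m - Dr N (m + 1)
      = (Nat.factorial (m + 1) : ℝ) / Sr N ^ (m + 2)
        * ((m + 2) * ee N (m + 2) + pw N 2 * ee N m - Sr N * ee N (m + 1)) := by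
    unfold Dr aa
    rw [Nat.factorial_succ (m + 1), Nat.factorial_succ m]
    push_cast
    field_simp
    ring
  have hnn : 0 ≤ Dr N (m + 2) + (m + 1 : ℝ) * aa N * Dr N m - Dr N (m + 1) := by
    rw [hkey]
    apply mul_nonneg
    · positivity
    · linarith
  linarith

lemma F1' (hN : 1 ≤ N) (m : ℕ) :
    Dr N (m + 3) ≤ Dr N (m + 2) - (m + 2 : ℝ) * aa N * Dr N (m + 1)
      + (m + 2 : ℝ) * (m + 1 : ℝ) * QQ N * Dr N m := by
  have hS := Sr_pos hN
  have h := L3 N m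
  have hkey : Dr N (m + 2) - (m + 2 : ℝ) * aa N * Dr N (m + 1)
        + (m + 2 : ℝ) * (m + 1 : ℝ) * QQ N * Dr N m - Dr N (m + 3)
      = (Nat.factorial (m + 2) : ℝ) / Sr N ^ (m + 3)
        * (Sr N * ee N (m + 2) - pw N 2 * ee N (m + 1) + pw N 3 * ee N m
            - (m + 3) * ee N (m + 3)) := by
    unfold Dr aa QQ
    rw [Nat.factorial_succ (m + 2), Nat.factorial_succ (m + 1), Nat.factorial_succ m]
    push_cast
    field_simp
    ring
  have hnn : 0 ≤ Dr N (m + 2) - (m + 2 : ℝ) * aa N * Dr N (m + 1)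
      + (m + 2 : ℝ) * (m + 1 : ℝ) * QQ N * Dr N m - Dr N (m + 3) := by
    rw [hkey]
    apply mul_nonneg
    · positivity
    · linarith
  linarith


/-! ### the approximation induction -/

def Pr (a : ℝ) (m : ℕ) : ℝ := ∏ j ∈ range m, (1 - (j : ℝ) * a)

def cc (a q : ℝ) (m : ℕ) : ℝ := ((m : ℝ) * ((m : ℝ) - 1) * ((m : ℝ) - 2) / 3) * (a ^ 2 + q)

lemma Pr_nonneg {a : ℝ} (ha : 0 ≤ a) {m : ℕ} (hsmall : ∀ j : ℕ, j < m → (j : ℝ) * a ≤ 1) :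
    0 ≤ Pr a m :=
  Finset.prod_nonneg fun j hj => by
    have := hsmall j (Finset.mem_range.mp hj); linarith

lemma Pr_le_one {a : ℝ} (ha : 0 ≤ a) {m : ℕ} (hsmall : ∀ j : ℕ, j < m → (j : ℝ) * a ≤ 1) :
    Pr a m ≤ 1 := by
  apply Finset.prod_le_one
  · intro j hj
    have := hsmall j (Finset.mem_range.mp hj); linarith
  · intro j hj
    have : 0 ≤ (j : ℝ) * a := mul_nonneg (Nat.cast_nonneg j) ha
    linarith

lemma cc_nonneg {a q : ℝ} (ha : 0 ≤ a) (hq : 0 ≤ q) (m : ℕ) : 0 ≤ cc a q m := by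
  unfold cc
  rcases m with _ | _ | m
  · norm_num
  · norm_num
  · have h2 : (2 : ℝ) ≤ ((m + 2 : ℕ) : ℝ) := by push_cast; linarith [Nat.cast_nonneg (α := ℝ) m]
    apply mul_nonneg
    · apply div_nonneg _ (by norm_num)
      apply mul_nonneg (mul_nonneg _ _) <;> push_cast <;> nlinarith [Nat.cast_nonneg (α := ℝ) m]
    · positivity

lemma step_upper (a q β γ D3 D2 D1 D0 P2 c2 : ℝ)
    (ha : 0 ≤ a) (hq : 0 ≤ q) (hβ : 0 ≤ β) (hγ : 0 ≤ γ) (hβa : β * a ≤ 1)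
    (hF1 : D3 ≤ D2 - β * a * D1 + β * γ * q * D0)
    (hF2 : D2 ≤ D1) (hD0le : D0 ≤ 1)
    (hIH : D2 ≤ P2 + c2) (hc2 : 0 ≤ c2) :
    D3 ≤ P2 * (1 - β * a) + c2 + β * γ * (a ^ 2 + q) := by
  nlinarith [mul_nonneg (mul_nonneg hβ ha) (sub_nonneg.mpr hF2),
    mul_nonneg (mul_nonneg (mul_nonneg hβ hγ) hq) (sub_nonneg.mpr hD0le),
    mul_nonneg (by linarith : (0:ℝ) ≤ 1 - β * a) (sub_nonneg.mpr hIH),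
    mul_nonneg (mul_nonneg hβ hγ) (sq_nonneg a),
    mul_nonneg hc2 (mul_nonneg hβ ha)]

lemma step_lower (a q β γ D3 D2 D1 D0 P2 c2 : ℝ)
    (ha : 0 ≤ a) (hq : 0 ≤ q) (hβ : 0 ≤ β) (hγ : 0 ≤ γ) (hβa : β * a ≤ 1)
    (hF1b : D2 ≤ D3 + β * a * D1)
    (hF3 : D1 ≤ D2 + γ * a * D0) (hD0le : D0 ≤ 1)
    (hIH : P2 - c2 ≤ D2) (hc2 : 0 ≤ c2) :
    P2 * (1 - β * a) - c2 - β * γ * (a ^ 2 + q) ≤ D3 := by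
  nlinarith [mul_nonneg (mul_nonneg hβ ha) (mul_nonneg (mul_nonneg hγ ha) (sub_nonneg.mpr hD0le)),
    mul_nonneg (by linarith : (0:ℝ) ≤ 1 - β * a) (sub_nonneg.mpr hIH),
    mul_nonneg hc2 (mul_nonneg hβ ha),
    mul_nonneg (mul_nonneg hβ hγ) hq,
    mul_nonneg (mul_nonneg hβ ha) (sub_nonneg.mpr hF3)]

lemma main_ind (hN : 1 ≤ N) (r : ℕ) (hsmall : ∀ j : ℕ, j < r → (j : ℝ) * aa N ≤ 1) :
    ∀ m, m ≤ r → |Dr N m - Pr (aa N) m| ≤ cc (aa N) (QQ N) m := by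
  have ha := aa_nonneg hN
  have hq := QQ_nonneg hN
  intro m
  induction m with
  | zero =>
    intro _
    rw [Dr_zero]
    unfold Pr cc
    norm_num
  | succ m ih =>
    intro hm1
    have ihm := ih (by omega)
    rcases m with _ | _ | m
    · show |Dr N 1 - Pr (aa N) 1| ≤ cc (aa N) (QQ N) 1
      rw [Dr_one hN]
      unfold Pr cc
      norm_num
    · show |Dr N 2 - Pr (aa N) 2| ≤ cc (aa N) (QQ N) 2
      rw [Dr_two hN]
      unfold Pr cc
      rw [Finset.prod_range_succ, Finset.prod_range_one]
      norm_num
    · -- m + 3 case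
      show |Dr N (m + 3) - Pr (aa N) (m + 3)| ≤ cc (aa N) (QQ N) (m + 3)
      replace ihm : |Dr N (m + 2) - Pr (aa N) (m + 2)| ≤ cc (aa N) (QQ N) (m + 2) := ihm
      set a := aa N
      set q := QQ N
      have hβa : ((m + 2 : ℕ) : ℝ) * a ≤ 1 := hsmall (m + 2) (by omega)
      have hβa' : ((m : ℝ) + 2) * a ≤ 1 := by push_cast at hβa; convert hβa using 2
      have hF1 := F1' hN m
      have hF1b := F3' hN (m + 1)
      have hF2 := F2' hN (m + 1)
      have hF3 := F3' hN m
      have hD0le := Dr_le_one hN m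
      have hc2 : 0 ≤ cc a q (m + 2) := cc_nonneg ha hq (m + 2)
      have hP_succ : Pr a (m + 3) = Pr a (m + 2) * (1 - ((m : ℝ) + 2) * a) := by
        unfold Pr
        rw [Finset.prod_range_succ]
        push_cast
        ring
      have hcc_succ : cc a q (m + 3)
          = cc a q (m + 2) + ((m : ℝ) + 2) * ((m : ℝ) + 1) * (a ^ 2 + q) := by
        unfold cc
        push_cast
        ring
      rw [abs_le] at ihm ⊢
      obtain ⟨ih1, ih2⟩ := ihm
      constructor
      · -- lower bound
        have := step_lower a q ((m : ℝ) + 2) ((m : ℝ) + 1) (Dr N (m + 3)) (Dr N (m + 2))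
          (Dr N (m + 1)) (Dr N m) (Pr a (m + 2)) (cc a q (m + 2))
          ha hq (by positivity) (by positivity) hβa'
          (by push_cast at hF1b ⊢; linarith)
          (by push_cast at hF3 ⊢; linarith) hD0le (by linarith) hc2
        rw [hP_succ, hcc_succ]
        linarith
      · -- upper bound
        have := step_upper a q ((m : ℝ) + 2) ((m : ℝ) + 1) (Dr N (m + 3)) (Dr N (m + 2))
          (Dr N (m + 1)) (Dr N m) (Pr a (m + 2)) (cc a q (m + 2))
          ha hq (by positivity) (by positivity) hβa'
          (by push_cast at hF1 ⊢; linarith) hF2 hD0le (by linarith) hc2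
        rw [hP_succ, hcc_succ]
        linarith


/-! ### exponential comparisons -/

lemma one_sub_le_exp_neg (x : ℝ) : 1 - x ≤ Real.exp (-x) := by
  have := Real.add_one_le_exp (-x)
  linarith

lemma exp_neg_le_quad {x : ℝ} (hx : 0 ≤ x) : Real.exp (-x) ≤ 1 - x + x ^ 2 / 2 := by
  have h3 := Real.sum_le_exp_of_nonneg hx 3
  have hexp_ge : 1 + x + x ^ 2 / 2 ≤ Real.exp x := by
    have : ∑ i ∈ range 3, x ^ i / (i.factorial : ℝ) = 1 + x + x ^ 2 / 2 := by
      rw [Finset.sum_range_succ, Finset.sum_range_succ, Finset.sum_range_one]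
      norm_num [Nat.factorial]
    linarith [this ▸ h3]
  have hpos : (0 : ℝ) < 1 + x + x ^ 2 / 2 := by positivity
  rw [Real.exp_neg, inv_eq_one_div]
  have h1 : 1 / Real.exp x ≤ 1 / (1 + x + x ^ 2 / 2) :=
    one_div_le_one_div_of_le hpos hexp_ge
  have h2 : 1 / (1 + x + x ^ 2 / 2) ≤ 1 - x + x ^ 2 / 2 := by
    rw [div_le_iff₀ hpos]
    nlinarith [sq_nonneg x, sq_nonneg (x ^ 2)]
  linarith

lemma prod_sub_prod_le (m : ℕ) (u v : ℕ → ℝ)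
    (h : ∀ j ∈ range m, 0 ≤ v j ∧ v j ≤ u j ∧ u j ≤ 1) :
    ∏ j ∈ range m, u j - ∏ j ∈ range m, v j ≤ ∑ j ∈ range m, (u j - v j) := by
  induction m with
  | zero => simp
  | succ n ih =>
    have hn := ih (fun j hj => h j (Finset.mem_range.mpr (by
      have := Finset.mem_range.mp hj; omega)))
    have hend := h n (Finset.mem_range.mpr (by omega))
    have hPv_nonneg : 0 ≤ ∏ j ∈ range n, v j :=
      Finset.prod_nonneg fun j hj => (h j (Finset.mem_range.mpr (by
        have := Finset.mem_range.mp hj; omega))).1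
    have hPv_le_one : ∏ j ∈ range n, v j ≤ 1 := by
      apply Finset.prod_le_one
      · intro j hj
        exact (h j (Finset.mem_range.mpr (by have := Finset.mem_range.mp hj; omega))).1
      · intro j hj
        have hj' := h j (Finset.mem_range.mpr (by have := Finset.mem_range.mp hj; omega))
        linarith [hj'.2.1, hj'.2.2]
    have hPu_le_one : ∏ j ∈ range n, u j ≤ 1 := by
      apply Finset.prod_le_one
      · intro j hj
        have hj' := h j (Finset.mem_range.mpr (by have := Finset.mem_range.mp hj; omega))
        linarith [hj'.1, hj'.2.1]
      · intro j hj
        exact (h j (Finset.mem_range.mpr (by have := Finset.mem_range.mp hj; omega))).2.2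
    have hPle : ∏ j ∈ range n, v j ≤ ∏ j ∈ range n, u j := by
      apply Finset.prod_le_prod
      · intro j hj
        exact (h j (Finset.mem_range.mpr (by have := Finset.mem_range.mp hj; omega))).1
      · intro j hj
        exact (h j (Finset.mem_range.mpr (by have := Finset.mem_range.mp hj; omega))).2.1
    rw [Finset.prod_range_succ, Finset.prod_range_succ, Finset.sum_range_succ]
    have h0un : 0 ≤ u n := le_trans hend.1 hend.2.1
    nlinarith [mul_nonneg h0un (sub_nonneg.mpr hPle),
      mul_nonneg (sub_nonneg.mpr hend.2.1) hPv_nonneg,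
      mul_nonneg (sub_nonneg.mpr hend.2.1) (sub_nonneg.mpr hPv_le_one)]

lemma sum_id_real (r : ℕ) : ∑ j ∈ range r, (j : ℝ) = (r : ℝ) * ((r : ℝ) - 1) / 2 := by
  induction r with
  | zero => simp
  | succ n ih =>
    rw [Finset.sum_range_succ, ih]
    push_cast
    ring

lemma sum_sq_real (r : ℕ) :
    ∑ j ∈ range r, (j : ℝ) ^ 2 = (r : ℝ) * ((r : ℝ) - 1) * (2 * (r : ℝ) - 1) / 6 := by
  induction r with
  | zero => simp
  | succ n ih =>
    rw [Finset.sum_range_succ, ih]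
    push_cast
    ring

/-! ### the central estimate -/

lemma central (N r : ℕ) (hN : 1 ≤ N) :
    |Dr N r - Real.exp (-(aa N * ((r : ℝ) * ((r : ℝ) - 1) / 2)))|
      ≤ (r : ℝ) * ((r : ℝ) - 1) / 2 * (2 * (r : ℝ) - 3) * (aa N ^ 2 + QQ N) := by
  have ha := aa_nonneg hN
  have hq := QQ_nonneg hN
  have ha1 := aa_le_one hN
  set a := aa N with ha_def
  set q := QQ N with hq_def
  set R := (r : ℝ) with hR_def
  have hR0 : 0 ≤ R := Nat.cast_nonneg r
  have hlam_nonneg : 0 ≤ a * (R * (R - 1) / 2) := by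
    rcases r with _ | r
    · simp [hR_def]
    · apply mul_nonneg ha
      have : (1 : ℝ) ≤ R := by rw [hR_def]; exact_mod_cast Nat.one_le_iff_ne_zero.mpr (by omega)
      nlinarith
  have hexp_le_one : Real.exp (-(a * (R * (R - 1) / 2))) ≤ 1 := by
    have := Real.exp_le_exp.mpr (show -(a * (R * (R - 1) / 2)) ≤ 0 by linarith)
    rwa [Real.exp_zero] at this
  have hexp_pos := Real.exp_pos (-(a * (R * (R - 1) / 2)))
  by_cases hcase : ∀ j : ℕ, j < r → (j : ℝ) * a ≤ 1
  · -- main branch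
    have hind := main_ind hN r hcase r le_rfl
    have hvle : ∀ j ∈ range r, 0 ≤ 1 - (j : ℝ) * a ∧
        1 - (j : ℝ) * a ≤ Real.exp (-((j : ℝ) * a)) ∧ Real.exp (-((j : ℝ) * a)) ≤ 1 := by
      intro j hj
      have h1 := hcase j (Finset.mem_range.mp hj)
      refine ⟨by linarith, one_sub_le_exp_neg _, ?_⟩
      have h0 : 0 ≤ (j : ℝ) * a := mul_nonneg (Nat.cast_nonneg j) ha
      have := Real.exp_le_exp.mpr (show -((j : ℝ) * a) ≤ 0 by linarith)
      rwa [Real.exp_zero] at this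
    have hexp_eq : ∏ j ∈ range r, Real.exp (-((j : ℝ) * a))
        = Real.exp (-(a * (R * (R - 1) / 2))) := by
      rw [← Real.exp_sum]
      congr 1
      rw [Finset.sum_neg_distrib, ← Finset.sum_mul, sum_id_real]
      ring
    have hPle : Pr a r ≤ Real.exp (-(a * (R * (R - 1) / 2))) := by
      rw [← hexp_eq]
      apply Finset.prod_le_prod
      · intro j hj; exact (hvle j hj).1
      · intro j hj; exact (hvle j hj).2.1
    have hdiff : Real.exp (-(a * (R * (R - 1) / 2))) - Pr a r
        ≤ ∑ j ∈ range r, ((j : ℝ) * a) ^ 2 / 2 := by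
      have hps := prod_sub_prod_le r (fun j => Real.exp (-((j : ℝ) * a)))
        (fun j => 1 - (j : ℝ) * a) hvle
      rw [hexp_eq] at hps
      have hsum_le : ∑ j ∈ range r, (Real.exp (-((j : ℝ) * a)) - (1 - (j : ℝ) * a))
          ≤ ∑ j ∈ range r, ((j : ℝ) * a) ^ 2 / 2 := by
        apply Finset.sum_le_sum
        intro j hj
        have h2 := exp_neg_le_quad (mul_nonneg (Nat.cast_nonneg j) ha)
        linarith
      unfold Pr
      linarith
    have hsum_eval : ∑ j ∈ range r, ((j : ℝ) * a) ^ 2 / 2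
        = a ^ 2 / 2 * (R * (R - 1) * (2 * R - 1) / 6) := by
      have hterm : ∀ j ∈ range r, ((j : ℝ) * a) ^ 2 / 2 = (j : ℝ) ^ 2 * (a ^ 2 / 2) :=
        fun j _ => by ring
      rw [Finset.sum_congr rfl hterm, ← Finset.sum_mul, sum_sq_real]
      ring
    have hcoef : cc a q r + a ^ 2 / 2 * (R * (R - 1) * (2 * R - 1) / 6)
        ≤ R * (R - 1) / 2 * (2 * R - 3) * (a ^ 2 + q) := by
      unfold cc
      rcases r with _ | _ | r
      · simp [hR_def]
      · simp [hR_def]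
      · have hR2 : (2 : ℝ) ≤ R := by
          rw [hR_def]; push_cast; linarith [Nat.cast_nonneg (α := ℝ) r]
        nlinarith [mul_nonneg (mul_nonneg (mul_nonneg hR0 (by linarith : (0:ℝ) ≤ R - 1))
            (by linarith : (0:ℝ) ≤ 2 * R - 3)) (sq_nonneg a),
          mul_nonneg (mul_nonneg (mul_nonneg hR0 (by linarith : (0:ℝ) ≤ R - 1))
            (by linarith : (0:ℝ) ≤ 4 * R - 5)) hq]
    rw [abs_le] at hind ⊢
    have hsum_nonneg : 0 ≤ ∑ j ∈ range r, ((j : ℝ) * a) ^ 2 / 2 :=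
      Finset.sum_nonneg fun j _ => by positivity
    constructor
    · linarith [hind.1]
    · linarith [hind.2]
  · -- trivial branch
    push_neg at hcase
    obtain ⟨j, hjr, hja⟩ := hcase
    have hr2 : 2 ≤ r := by
      by_contra hcon
      push_neg at hcon
      interval_cases r
      · omega
      · have : j = 0 := by omega
        subst this
        simp at hja
        linarith
    have hR2 : (2 : ℝ) ≤ R := by rw [hR_def]; exact_mod_cast hr2
    have ht : 1 ≤ (R - 1) * a := by
      have hjR : (j : ℝ) ≤ R - 1 := by
        rw [hR_def]
        have : j ≤ r - 1 := by omega
        push_cast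
        have : (j : ℝ) ≤ (r : ℝ) - 1 := by
          have hj' : (j : ℝ) + 1 ≤ (r : ℝ) := by exact_mod_cast hjr
          linarith
        linarith
      have : (j : ℝ) * a ≤ (R - 1) * a := mul_le_mul_of_nonneg_right hjR ha
      linarith
    have h1sq : 1 ≤ ((R - 1) * a) ^ 2 := by nlinarith
    have hf1 : 1 ≤ R * (R - 1) / 2 * (2 * R - 3) * a ^ 2 := by
      have key : 2 * (R - 1) ≤ (R * (R - 1) / 2 * (2 * R - 3) * a ^ 2) * (2 * (R - 1)) := by
        nlinarith [mul_nonneg (mul_nonneg hR0 (by linarith : (0:ℝ) ≤ 2 * R - 3))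
          (sub_nonneg.mpr h1sq)]
      have hpos : (0 : ℝ) < 2 * (R - 1) := by linarith
      have := le_of_mul_le_mul_right (by linarith [key] :
        1 * (2 * (R - 1)) ≤ (R * (R - 1) / 2 * (2 * R - 3) * a ^ 2) * (2 * (R - 1))) hpos
      linarith
    have hF_ge : 1 ≤ R * (R - 1) / 2 * (2 * R - 3) * (a ^ 2 + q) := by
      have : R * (R - 1) / 2 * (2 * R - 3) * a ^ 2
          ≤ R * (R - 1) / 2 * (2 * R - 3) * (a ^ 2 + q) := by
        apply mul_le_mul_of_nonneg_left (by linarith)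
        apply mul_nonneg (by nlinarith) (by linarith)
      linarith
    have hD0 := Dr_nonneg hN r
    have hD1 := Dr_le_one hN r
    rw [abs_le]
    constructor <;> linarith

end

end StirlingProofAux2


section Glue

open StirlingProofAux StirlingProofAux2

lemma ee_eq_Enat (N m : ℕ) :
    StirlingProofAux2.ee N m = (StirlingProofAux.Enat N m : ℝ) := by
  unfold StirlingProofAux2.ee StirlingProofAux.Enat StirlingProofAux2.xr
  push_cast
  rfl

/-- for `n ≥ 2`, `1 ≤ k ≤ n` and `r = n − k`, with
`λ = (4/3)·C(r,2)·(n−1/2)/(n(n−1))`, `f₁ = C(r,2)(2r−3)((4/(3n))·((n−1/2)/(n−1)))²` and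
`f₂ = C(r,2)(2r−3)/C(n,2)`, the unsigned Stirling number of the first kind satisfies
`(C(n,2)^r/r!)·e^{−λ}(1 − e^{λ}(f₁+f₂)) ≤ s(n,k) ≤ (C(n,2)^r/r!)·e^{−λ}(1 + e^{λ}(f₁+f₂))`. -/
theorem stirling_first_kind_bounds (n k : ℕ) (hn : 2 ≤ n) (hk1 : 1 ≤ k) (hkn : k ≤ n)
    (r : ℕ) (hr : r = n - k)
    (lam f₁ f₂ : ℝ)
    (hlam : lam = (4/3) * (r.choose 2 : ℝ) * ((n : ℝ) - 1/2) / ((n : ℝ) * ((n : ℝ) - 1)))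
    (hf₁ : f₁ = (r.choose 2 : ℝ) * (2 * (r : ℝ) - 3) *
      (4 / (3 * (n : ℝ)) * (((n : ℝ) - 1/2) / ((n : ℝ) - 1))) ^ 2)
    (hf₂ : f₂ = (r.choose 2 : ℝ) * (2 * (r : ℝ) - 3) / (n.choose 2 : ℝ)) :
    (n.choose 2 : ℝ) ^ r / (r.factorial : ℝ) * Real.exp (-lam) *
        (1 - Real.exp lam * (f₁ + f₂)) ≤ (stirling1 n k : ℝ) ∧
    (stirling1 n k : ℝ) ≤ (n.choose 2 : ℝ) ^ r / (r.factorial : ℝ) * Real.exp (-lam) *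
        (1 + Real.exp lam * (f₁ + f₂)) := by
  classical
  set N := n - 1 with hN_def
  have hN1 : 1 ≤ N := by omega
  have hn_eq : n = N + 1 := by omega
  have hSpos := Sr_pos hN1
  have hcast_n : (n : ℝ) = (N : ℝ) + 1 := by rw [hn_eq]; push_cast; ring
  have hNpos : (0 : ℝ) < (N : ℝ) := by exact_mod_cast hN1
  have hn0 : (n : ℝ) ≠ 0 := by rw [hcast_n]; linarith
  have hn1 : (n : ℝ) - 1 ≠ 0 := by rw [hcast_n]; push_cast; intro h; linarith
  -- identification of the Stirling number
  have hstir : stirling1 n k = StirlingProofAux.Enat N r := by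
    rw [StirlingProofAux.stirling1_eq_Enat n k hkn, hr, hN_def]
  have hee : StirlingProofAux2.ee N r = (stirling1 n k : ℝ) := by
    rw [hstir, ee_eq_Enat]
  -- cast identities
  have hcast_r2 : (r.choose 2 : ℝ) = (r : ℝ) * ((r : ℝ) - 1) / 2 := Nat.cast_choose_two ℝ r
  have hcast_n2 : (n.choose 2 : ℝ) = Sr N := by
    rw [Nat.cast_choose_two, Sr_val, hcast_n]
    ring
  -- closed form of aa
  have haa : aa N = 4/3 * ((n : ℝ) - 1/2) / ((n : ℝ) * ((n : ℝ) - 1)) := by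
    unfold aa
    rw [pw2_val, Sr_val, hcast_n]
    have h1 : ((N : ℝ) + 1) ≠ 0 := by linarith
    have h2 : (N : ℝ) ≠ 0 := ne_of_gt hNpos
    field_simp
    ring_nf
    field_simp
  have hlam_eq : lam = aa N * ((r : ℝ) * ((r : ℝ) - 1) / 2) := by
    rw [hlam, haa, hcast_r2]
    ring
  have hinner : 4 / (3 * (n : ℝ)) * (((n : ℝ) - 1/2) / ((n : ℝ) - 1)) = aa N := by
    rw [haa]
    rw [div_mul_div_comm, div_eq_div_iff (by positivity) (by
      have h2 : (2:ℝ) ≤ (n:ℝ) := by exact_mod_cast hn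
      have : (0:ℝ) < (n:ℝ) * ((n:ℝ) - 1) := by nlinarith
      positivity)]
    ring
  have hQQ : QQ N = 1 / Sr N := QQ_eq hN1
  have hFsum : f₁ + f₂ = (r : ℝ) * ((r : ℝ) - 1) / 2 * (2 * (r : ℝ) - 3) * (aa N ^ 2 + QQ N) := by
    rw [hf₁, hf₂, hinner, hcast_r2, hcast_n2, hQQ]
    ring
  -- central estimate
  have hcentral := central N r hN1
  rw [← hlam_eq, ← hFsum] at hcentral
  have habs := abs_le.mp hcentral
  -- express the Stirling number via Dr
  have hfac_pos : (0 : ℝ) < (r.factorial : ℝ) := by exact_mod_cast r.factorial_pos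
  have hstir_real : (stirling1 n k : ℝ) = Sr N ^ r / (r.factorial : ℝ) * Dr N r := by
    rw [← hee]
    unfold Dr
    field_simp
  have hT : (0 : ℝ) ≤ Sr N ^ r / (r.factorial : ℝ) := by positivity
  have hexp_id : Real.exp (-lam) * Real.exp lam = 1 := by
    rw [← Real.exp_add]
    simp
  set T := Sr N ^ r / (r.factorial : ℝ) with hT_def
  have heq1 : T * Real.exp (-lam) * (1 - Real.exp lam * (f₁ + f₂))
      = T * (Real.exp (-lam) - (f₁ + f₂)) := by
    linear_combination (-(T * (f₁ + f₂))) * hexp_id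
  have heq2 : T * Real.exp (-lam) * (1 + Real.exp lam * (f₁ + f₂))
      = T * (Real.exp (-lam) + (f₁ + f₂)) := by
    linear_combination (T * (f₁ + f₂)) * hexp_id
  rw [hcast_n2, hstir_real]
  constructor
  · rw [show Sr N ^ r / (r.factorial : ℝ) = T from rfl, heq1]
    apply mul_le_mul_of_nonneg_left _ hT
    linarith [habs.2]
  · rw [show Sr N ^ r / (r.factorial : ℝ) = T from rfl, heq2]
    apply mul_le_mul_of_nonneg_left _ hT
    linarith [habs.1]

end Glue
end

section
/- Let n ≥ 2 and 1 ≤ k ≤ n, set r = n − k, and define p := (4/(3n))·((n − 1/2)/(n − 1)), m := 2r − 2, and g_1 := (1/2)·(1 − p − √(1 − (4m − 2)p + p²)), assuming 1 − (4m − 2)p + p² ≥ 0. If p·e^{g_1} ∈ (0,1), then the unsigned Stirling number of the first kind satisfies s(n,k) ≥ (binomial(n,2)^r / r!) · (1 − p·e^{g_1})^{binomial(r,2)}. -/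
open Finset Filter

namespace StirAux

open Equiv Equiv.Perm

lemma isCycle_mul_swap {n : ℕ} (c : Equiv.Perm (Fin n)) (i j : Fin n)
    (hij : i ≠ j) (hc : c.IsCycle) (hj : c j = j) (hi : c i ≠ i) :
    (c * Equiv.swap i j).IsCycle := by
  set τ := c * Equiv.swap i j with hτ
  have hτi : τ i = j := by simp [hτ, Equiv.Perm.mul_apply, hj]
  have hτj : τ j = c i := by simp [hτ, Equiv.Perm.mul_apply]
  have horb : ∀ t : ℕ, (c ^ t) i ≠ j := by
    intro t h
    have h1 : c ((c ^ t) i) = (c ^ t) (c i) := by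
      rw [← Equiv.Perm.mul_apply, ← Equiv.Perm.mul_apply, ← pow_succ', ← pow_succ]
    rw [h, hj, ← h] at h1
    exact hi ((c ^ t).injective h1.symm)
  have key : ∀ t : ℕ, ∃ s : ℕ, (τ ^ s) i = (c ^ t) i := by
    intro t
    induction t with
    | zero => exact ⟨0, rfl⟩
    | succ t ih =>
      obtain ⟨s, hs⟩ := ih
      by_cases h : (c ^ t) i = i
      · refine ⟨2, ?_⟩
        have h2 : (c ^ (t + 1)) i = c i := by rw [pow_succ', Equiv.Perm.mul_apply, h]
        have h3 : (τ ^ 2) i = c i := by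
          rw [pow_two, Equiv.Perm.mul_apply, hτi, hτj]
        rw [h3, h2]
      · refine ⟨s + 1, ?_⟩
        have hxj := horb t
        have h4 : τ ((c ^ t) i) = c ((c ^ t) i) := by
          rw [hτ, Equiv.Perm.mul_apply, Equiv.swap_apply_of_ne_of_ne h hxj]
        rw [pow_succ', Equiv.Perm.mul_apply, hs, h4, ← Equiv.Perm.mul_apply, ← pow_succ']
  refine ⟨i, by rw [hτi]; exact fun h => hij h.symm, ?_⟩
  intro y hy
  by_cases hyj : y = j
  · subst hyj; exact ⟨1, by simpa using hτi⟩
  by_cases hyi : y = i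
  · subst hyi; exact ⟨0, rfl⟩
  · have hcy : c y ≠ y := by
      have : τ y = c y := by
        rw [hτ, Equiv.Perm.mul_apply, Equiv.swap_apply_of_ne_of_ne hyi hyj]
      rwa [this] at hy
    obtain ⟨t, ht⟩ := hc.exists_pow_eq hi hcy
    obtain ⟨s, hs⟩ := key t
    exact ⟨s, by rw [zpow_natCast, hs, ht]⟩



lemma numCycles_eq {n : ℕ} (σ : Equiv.Perm (Fin n)) :
    numCycles σ = σ.cycleType.card + (n - σ.support.card) := by
  have h : (Finset.univ.filter fun x => σ x = x) = σ.supportᶜ := by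
    ext x; simp [Equiv.Perm.mem_support]
  rw [numCycles, h, Finset.card_compl, Fintype.card_fin]

lemma numCycles_one {n : ℕ} : numCycles (1 : Equiv.Perm (Fin n)) = n := by
  rw [numCycles_eq]; simp

lemma numCycles_mul_swap {n : ℕ} (σ : Equiv.Perm (Fin n)) (i j : Fin n)
    (hij : i ≠ j) (hj : σ j = j) :
    numCycles (σ * Equiv.swap i j) + 1 = numCycles σ := by
  classical
  set τ := σ * Equiv.swap i j with hτdef
  by_cases hi : σ i = i
  · -- disjoint case : swap is a new cycle
    have hd : σ.Disjoint (Equiv.swap i j) := by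
      intro x
      by_cases hxi : x = i
      · subst hxi; exact Or.inl hi
      by_cases hxj : x = j
      · subst hxj; exact Or.inl hj
      · exact Or.inr (Equiv.swap_apply_of_ne_of_ne hxi hxj)
    have hct : τ.cycleType = σ.cycleType + (Equiv.swap i j).cycleType := Equiv.Perm.Disjoint.cycleType_mul hd
    have hsw : (Equiv.swap i j).cycleType = [2] := by
      rw [(Equiv.Perm.isCycle_swap hij).cycleType, Equiv.Perm.support_swap hij]
      simp [Finset.card_insert_of_notMem, hij]
    have hsupp : τ.support = σ.support ∪ {i, j} := by
      rw [hτdef, hd.support_mul, Equiv.Perm.support_swap hij]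
    have hdisj : _root_.Disjoint σ.support ({i, j} : Finset (Fin n)) := by
      rw [Finset.disjoint_insert_right, Finset.disjoint_singleton_right]
      constructor <;> simp [Equiv.Perm.mem_support, hi, hj]
    have hcard : τ.support.card = σ.support.card + 2 := by
      rw [hsupp, Finset.card_union_of_disjoint hdisj]
      simp [Finset.card_insert_of_notMem, hij]
    have hle : τ.support.card ≤ n := by
      simpa using Finset.card_le_card (Finset.subset_univ τ.support)
    have h2 : (([2] : Multiset ℕ)).card = 1 := rfl
    rw [numCycles_eq, numCycles_eq, hct, hsw, hcard]
    simp only [Multiset.card_add, h2]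
    omega
  · -- σ i ≠ i : the cycle of i absorbs j
    set c := σ.cycleOf i with hcdef
    set ρ := c⁻¹ * σ with hρdef
    have hdecomp : σ = c * ρ := (mul_inv_cancel_left c σ).symm
    have hcc : c.IsCycle := Equiv.Perm.isCycle_cycleOf σ hi
    have hci : c i = σ i := Equiv.Perm.cycleOf_apply_self σ i
    have hcine : c i ≠ i := by rw [hci]; exact hi
    have hnotsame : ¬ σ.SameCycle i j := by
      intro h
      obtain ⟨t, _, ht⟩ := (h.symm).exists_pow_eq'
      have hfix : ∀ s : ℕ, (σ ^ s) j = j := by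
        intro s
        induction s with
        | zero => rfl
        | succ s ih => rw [pow_succ', Equiv.Perm.mul_apply, ih, hj]
      rw [hfix t] at ht
      exact hij ht.symm
    have hρ : ∀ x, ρ x = if σ.SameCycle i x then x else σ x := by
      intro x
      rw [hρdef, Equiv.Perm.mul_apply, hcdef, Equiv.Perm.cycleOf_inv,
        Equiv.Perm.cycleOf_apply]
      have hiff : σ⁻¹.SameCycle i (σ x) ↔ σ.SameCycle i x := by
        rw [Equiv.Perm.sameCycle_inv, Equiv.Perm.sameCycle_apply_right]
      by_cases h : σ.SameCycle i x
      · rw [if_pos (hiff.mpr h), if_pos h, ← Equiv.Perm.mul_apply, inv_mul_cancel, Equiv.Perm.one_apply]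
      · rw [if_neg (fun hh => h (hiff.mp hh)), if_neg h]
    have hcx : ∀ x, ¬ σ.SameCycle i x → c x = x := by
      intro x h; rw [hcdef, Equiv.Perm.cycleOf_apply, if_neg h]
    have hcj : c j = j := hcx j hnotsame
    have hρi : ρ i = i := by rw [hρ]; exact if_pos (Equiv.Perm.SameCycle.refl _ _)
    have hρj : ρ j = j := by rw [hρ, if_neg hnotsame]; exact hj
    have hdcρ : c.Disjoint ρ := by
      intro x
      by_cases h : σ.SameCycle i x
      · exact Or.inr (by rw [hρ, if_pos h])
      · exact Or.inl (hcx x h)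
    have hdρsw : ρ.Disjoint (Equiv.swap i j) := by
      intro x
      by_cases hxi : x = i
      · subst hxi; exact Or.inl hρi
      by_cases hxj : x = j
      · subst hxj; exact Or.inl hρj
      · exact Or.inr (Equiv.swap_apply_of_ne_of_ne hxi hxj)
    set c' := c * Equiv.swap i j with hc'def
    have hτdecomp : τ = c' * ρ := by
      rw [hτdef, hdecomp, hc'def]
      have hcomm : ρ * Equiv.swap i j = Equiv.swap i j * ρ := hdρsw.commute
      rw [mul_assoc, hcomm, ← mul_assoc]
    have hcc' : c'.IsCycle := isCycle_mul_swap c i j hij hcc hcj hcine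
    have hdc'ρ : c'.Disjoint ρ := by
      intro x
      by_cases h : σ.SameCycle i x
      · exact Or.inr (by rw [hρ, if_pos h])
      · by_cases hxj : x = j
        · subst hxj; exact Or.inr hρj
        · refine Or.inl ?_
          have hxi : x ≠ i := by rintro rfl; exact h (Equiv.Perm.SameCycle.refl _ _)
          rw [hc'def, Equiv.Perm.mul_apply, Equiv.swap_apply_of_ne_of_ne hxi hxj]
          exact hcx x h
    -- cycle type cards agree
    have hctτ : τ.cycleType = c'.cycleType + ρ.cycleType := by rw [hτdecomp]; exact Equiv.Perm.Disjoint.cycleType_mul hdc'ρ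
    have hctσ : σ.cycleType = c.cycleType + ρ.cycleType := by
      conv_lhs => rw [hdecomp]
      exact Equiv.Perm.Disjoint.cycleType_mul hdcρ
    have hcardct : τ.cycleType.card = σ.cycleType.card := by
      rw [hctτ, hctσ, hcc'.cycleType, hcc.cycleType]
      simp
    -- supports
    have hσij : σ i ≠ j := fun h => hij (σ.injective (h.trans hj.symm))
    have hsupp : τ.support = insert j σ.support := by
      ext x
      by_cases hxj : x = j
      · subst hxj
        simp only [Equiv.Perm.mem_support, Finset.mem_insert, true_or, iff_true]
        rw [hτdef, Equiv.Perm.mul_apply, Equiv.swap_apply_right]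
        exact hσij
      by_cases hxi : x = i
      · subst hxi
        simp only [Equiv.Perm.mem_support, Finset.mem_insert]
        have hτi : τ x = j := by
          rw [hτdef, Equiv.Perm.mul_apply, Equiv.swap_apply_left, hj]
        rw [hτi]
        exact iff_of_true (fun h => hij h.symm) (Or.inr hi)
      · simp only [Equiv.Perm.mem_support, Finset.mem_insert]
        have hτx : τ x = σ x := by
          rw [hτdef, Equiv.Perm.mul_apply, Equiv.swap_apply_of_ne_of_ne hxi hxj]
        rw [hτx]
        constructor
        · exact Or.inr
        · rintro (h | h)
          · exact absurd h hxj
          · exact h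
    have hjns : j ∉ σ.support := by simp [Equiv.Perm.mem_support, hj]
    have hcard : τ.support.card = σ.support.card + 1 := by
      rw [hsupp, Finset.card_insert_of_notMem hjns]
    have hle : τ.support.card ≤ n := by
      simpa using Finset.card_le_card (Finset.subset_univ τ.support)
    rw [numCycles_eq, numCycles_eq, hcardct, hcard]
    omega


abbrev Cell (n : ℕ) := Σ j : Fin n, Fin (j : ℕ)

def chi {n : ℕ} (c : Cell n) : Fin n := c.1

def lo {n : ℕ} (c : Cell n) : Fin n := ⟨c.2.val, lt_trans c.2.isLt c.1.isLt⟩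

lemma lo_lt_chi {n : ℕ} (c : Cell n) : lo c < chi c := c.2.isLt

lemma lo_ne_chi {n : ℕ} (c : Cell n) : lo c ≠ chi c := ne_of_lt (lo_lt_chi c)

lemma cell_ext {n : ℕ} {c d : Cell n} (h1 : chi c = chi d) (h2 : lo c = lo d) : c = d := by
  obtain ⟨⟨j1, hj1⟩, ⟨i1, hi1⟩⟩ := c
  obtain ⟨⟨j2, hj2⟩, ⟨i2, hi2⟩⟩ := d
  simp only [chi, lo, Fin.mk.injEq] at h1 h2
  subst h1; subst h2; rfl

/-- The permutation associated to a tuple of cells. -/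
def permOf {n r : ℕ} (f : Fin r → Cell n) : Equiv.Perm (Fin n) :=
  (List.ofFn fun s => Equiv.swap (lo (f s)) (chi (f s))).prod

lemma prod_fix {n : ℕ} (l : List (Equiv.Perm (Fin n))) (x : Fin n)
    (h : ∀ p ∈ l, p x = x) : l.prod x = x := by
  induction l with
  | nil => rfl
  | cons p l ih =>
    rw [List.prod_cons, Equiv.Perm.mul_apply, ih (fun q hq => h q (List.mem_cons_of_mem p hq)),
      h p List.mem_cons_self]

lemma permOf_fix {n r : ℕ} (f : Fin r → Cell n) (x : Fin n)
    (hx : ∀ s, chi (f s) < x) : permOf f x = x := by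
  apply prod_fix
  intro p hp
  rw [List.mem_ofFn] at hp
  obtain ⟨s, rfl⟩ := hp
  exact Equiv.swap_apply_of_ne_of_ne
    (ne_of_gt (lt_trans (lo_lt_chi (f s)) (hx s))) (ne_of_gt (hx s))

lemma permOf_succ {n r : ℕ} (f : Fin (r+1) → Cell n) :
    permOf f = permOf (f ∘ Fin.castSucc) *
      Equiv.swap (lo (f (Fin.last r))) (chi (f (Fin.last r))) := by
  rw [permOf, List.ofFn_succ', List.concat_eq_append, List.prod_append]
  simp [permOf]

lemma numCycles_permOf {n r : ℕ} (f : Fin r → Cell n)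
    (hf : StrictMono fun s => chi (f s)) : numCycles (permOf f) + r = n := by
  induction r with
  | zero =>
    have : permOf f = 1 := rfl
    rw [this, numCycles_one]
    omega
  | succ r ih =>
    set c := f (Fin.last r) with hc
    have hfix : permOf (f ∘ Fin.castSucc) (chi c) = chi c := by
      apply permOf_fix
      intro s
      exact hf (Fin.castSucc_lt_last s)
    have hmono : StrictMono fun s => chi ((f ∘ Fin.castSucc) s) :=
      fun a b hab => hf (by simpa using hab)
    have hkey := numCycles_mul_swap (permOf (f ∘ Fin.castSucc)) (lo c) (chi c)
      (lo_ne_chi c) hfix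
    rw [permOf_succ f, ← hc]
    have hih := ih (f ∘ Fin.castSucc) hmono
    omega

lemma permOf_max_fix {n r : ℕ} (f : Fin (r+1) → Cell n)
    (hf : StrictMono fun s => chi (f s)) (x : Fin n)
    (hx : chi (f (Fin.last r)) < x) : permOf f x = x := by
  apply permOf_fix
  intro s
  exact lt_of_le_of_lt (by
    rcases eq_or_lt_of_le (Fin.le_last s) with h | h
    · rw [h]
    · exact le_of_lt (hf h)) hx

lemma permOf_injective {n r : ℕ} (f g : Fin r → Cell n)
    (hf : StrictMono fun s => chi (f s)) (hg : StrictMono fun s => chi (g s))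
    (heq : permOf f = permOf g) : f = g := by
  induction r with
  | zero => funext s; exact s.elim0
  | succ r ih =>
    set c := f (Fin.last r) with hcdef
    set d := g (Fin.last r) with hddef
    have hfix_f : permOf (f ∘ Fin.castSucc) (chi c) = chi c :=
      permOf_fix _ _ (fun s => hf (Fin.castSucc_lt_last s))
    have hfix_g : permOf (g ∘ Fin.castSucc) (chi d) = chi d :=
      permOf_fix _ _ (fun s => hg (Fin.castSucc_lt_last s))
    -- permOf f moves chi c
    have hmove : ∀ (h : Fin (r+1) → Cell n), StrictMono (fun s => chi (h s)) →
        permOf h (chi (h (Fin.last r))) ≠ chi (h (Fin.last r)) := by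
      intro h hmono
      have hfix : permOf (h ∘ Fin.castSucc) (chi (h (Fin.last r))) = chi (h (Fin.last r)) :=
        permOf_fix _ _ (fun s => hmono (Fin.castSucc_lt_last s))
      rw [permOf_succ h, Equiv.Perm.mul_apply, Equiv.swap_apply_right]
      intro hbad
      have := (permOf (h ∘ Fin.castSucc)).injective (hbad.trans hfix.symm)
      exact lo_ne_chi _ this
    -- max characterization
    have hbound : ∀ (h : Fin (r+1) → Cell n), StrictMono (fun s => chi (h s)) →
        ∀ x, chi (h (Fin.last r)) < x → permOf h x = x := permOf_max_fix
    have hchieq : chi c = chi d := by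
      rcases lt_trichotomy (chi c) (chi d) with h | h | h
      · exfalso
        have h1 : permOf f (chi d) = chi d := hbound f hf (chi d) h
        rw [heq] at h1
        exact hmove g hg h1
      · exact h
      · exfalso
        have h1 : permOf g (chi c) = chi c := hbound g hg (chi c) h
        rw [← heq] at h1
        exact hmove f hf h1
    have hloc : permOf f (lo c) = chi c := by
      rw [permOf_succ f, Equiv.Perm.mul_apply, Equiv.swap_apply_left, ← hcdef, hfix_f]
    have hlod : permOf g (lo d) = chi d := by
      rw [permOf_succ g, Equiv.Perm.mul_apply, Equiv.swap_apply_left, ← hddef, hfix_g]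
    have hloeq : lo c = lo d := by
      apply (permOf f).injective
      rw [hloc, heq, hlod, hchieq]
    have hcd : c = d := cell_ext hchieq hloeq
    have htail : permOf (f ∘ Fin.castSucc) = permOf (g ∘ Fin.castSucc) := by
      have h1 := permOf_succ f
      have h2 := permOf_succ g
      rw [← hcdef] at h1
      rw [← hddef] at h2
      rw [h1, h2, hcd] at heq
      exact mul_right_cancel heq
    have := ih (f ∘ Fin.castSucc) (g ∘ Fin.castSucc)
      (fun a b hab => hf (by simpa using hab))
      (fun a b hab => hg (by simpa using hab)) htail
    funext s
    refine Fin.lastCases ?_ ?_ s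
    · exact hcd
    · intro t
      exact congrFun this t


lemma card_cell (n : ℕ) : Fintype.card (Cell n) = n.choose 2 := by
  rw [Fintype.card_sigma]
  simp only [Fintype.card_fin]
  rw [show (∑ x : Fin n, (x : ℕ)) = ∑ i ∈ Finset.range n, i from
      Fin.sum_univ_eq_sum_range (fun i => i) n,
    Finset.sum_range_id, Nat.choose_two_right]

lemma card_chi_fiber {n : ℕ} (j : Fin n) :
    ((univ : Finset (Cell n)).filter fun c => chi c = j).card = (j : ℕ) := by
  have e : {c : Cell n // chi c = j} ≃ Fin (j : ℕ) :=
    { toFun := fun c => Fin.cast (congrArg Fin.val c.2) c.1.2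
      invFun := fun i => ⟨⟨j, i⟩, rfl⟩
      left_inv := by
        rintro ⟨⟨j', x⟩, rfl⟩
        rfl
      right_inv := by
        intro i
        rfl }
  rw [← Fintype.card_subtype, Fintype.card_congr e, Fintype.card_fin]

/-- the set of ordered pairs of indices -/
def pairs (r : ℕ) : Finset (Fin r × Fin r) := univ.filter fun q => q.1 < q.2

lemma card_pairs (r : ℕ) : (pairs r).card = r.choose 2 := by
  rw [← card_cell r, ← Finset.card_univ]
  refine Finset.card_bij'
    (fun q hq => (⟨q.2, ⟨q.1.val, (Finset.mem_filter.mp hq).2⟩⟩ : Cell r))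
    (fun c _ => (lo c, chi c)) (fun q hq => Finset.mem_univ _) ?_ ?_ ?_
  · intro c _
    simp only [pairs, Finset.mem_filter, Finset.mem_univ, true_and]
    exact lo_lt_chi c
  · intro q hq
    rfl
  · intro c _
    rfl

/-- the set of board tuples avoiding all column collisions prescribed by S -/
def good (n r : ℕ) (S : Finset (Fin r × Fin r)) : Finset (Fin r → Cell n) :=
  univ.filter fun f => ∀ q ∈ S, chi (f q.1) ≠ chi (f q.2)

lemma good_empty (n r : ℕ) : good n r ∅ = univ := by
  simp [good]

lemma card_univ_fun (n r : ℕ) :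
    (univ : Finset (Fin r → Cell n)).card = (n.choose 2) ^ r := by
  rw [Finset.card_univ, Fintype.card_fun, Fintype.card_fin, card_cell]

lemma good_anti {n r : ℕ} {S T : Finset (Fin r × Fin r)} (h : S ⊆ T) :
    good n r T ⊆ good n r S := by
  intro f hf
  simp only [good, Finset.mem_filter, Finset.mem_univ, true_and] at hf ⊢
  exact fun q hq => hf q (h hq)

lemma stirling1_eq_card (n k : ℕ) :
    stirling1 n k = ((univ : Finset (Equiv.Perm (Fin n))).filter fun σ => numCycles σ = k).card := by
  rw [stirling1, Nat.card_eq_fintype_card, Fintype.card_subtype]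

/-- Main counting bound: tuples with distinct columns are at most r! times
the number of permutations with n - r cycles. -/
lemma card_good_le (n r : ℕ) (hrn : r ≤ n) :
    (good n r (pairs r)).card ≤ r.factorial * stirling1 n (n - r) := by
  classical
  set Tinc : Finset (Fin r → Cell n) :=
    univ.filter (fun f => StrictMono fun s => chi (f s)) with hTinc
  have step2 : Tinc.card ≤ stirling1 n (n - r) := by
    rw [stirling1_eq_card]
    apply Finset.card_le_card_of_injOn (fun f => permOf f)
    · intro f hf
      simp only [Finset.mem_coe, hTinc, Finset.mem_filter, Finset.mem_univ, true_and] at hf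
      simp only [Finset.mem_coe, Finset.mem_filter, Finset.mem_univ, true_and]
      have := numCycles_permOf f hf
      omega
    · intro f hf g hg heq
      simp only [hTinc, Finset.coe_filter, Finset.mem_univ, true_and, Set.mem_setOf_eq] at hf hg
      exact permOf_injective f g hf hg heq
  have step1 : (good n r (pairs r)).card ≤ r.factorial * Tinc.card := by
    have := Finset.card_le_card_of_injOn
      (f := fun f : Fin r → Cell n =>
        ((Tuple.sort fun s => chi (f s)), f ∘ Tuple.sort fun s => chi (f s)))
      (s := good n r (pairs r))
      (t := (univ : Finset (Equiv.Perm (Fin r))) ×ˢ Tinc)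
      ?_ ?_
    · calc (good n r (pairs r)).card
          ≤ ((univ : Finset (Equiv.Perm (Fin r))) ×ˢ Tinc).card := this
        _ = r.factorial * Tinc.card := by
            rw [Finset.card_product, Finset.card_univ, Fintype.card_perm, Fintype.card_fin]
    · intro f hf
      simp only [Finset.mem_coe, good, Finset.mem_filter, Finset.mem_univ, true_and] at hf
      have hinj : Function.Injective fun s => chi (f s) := by
        intro a b hab
        by_contra hne
        rcases lt_or_gt_of_ne hne with h | h
        · exact hf (a, b) (by simp [pairs, h]) hab
        · exact hf (b, a) (by simp [pairs, h]) hab.symm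
      refine Finset.mem_product.2 ⟨Finset.mem_univ _, ?_⟩
      simp only [hTinc, Finset.mem_filter, Finset.mem_univ, true_and]
      have hmono : Monotone ((fun s => chi (f s)) ∘ Tuple.sort fun s => chi (f s)) :=
        Tuple.monotone_sort _
      have hinj2 : Function.Injective ((fun s => chi (f s)) ∘ Tuple.sort fun s => chi (f s)) :=
        hinj.comp (Tuple.sort _).injective
      exact hmono.strictMono_of_injective hinj2
    · intro f _ g _ heq
      simp only [Prod.mk.injEq] at heq
      obtain ⟨h1, h2⟩ := heq
      funext x
      have := congrFun h2 ((Tuple.sort fun s => chi (f s))⁻¹ x)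
      simpa [h1, Function.comp] using this
  calc (good n r (pairs r)).card ≤ r.factorial * Tinc.card := step1
    _ ≤ r.factorial * stirling1 n (n - r) := Nat.mul_le_mul_left _ step2


/-- number of collisions on the two-cell board -/
def sqBad (n : ℕ) : ℕ :=
  ((univ : Finset (Cell n × Cell n)).filter fun cd => chi cd.1 = chi cd.2).card

lemma good_update {n r : ℕ} (S : Finset (Fin r × Fin r)) (a b : Fin r)
    (hS : ∀ q ∈ S, q.1 ≠ a ∧ q.1 ≠ b ∧ q.2 ≠ a ∧ q.2 ≠ b)
    (f : Fin r → Cell n) (hf : f ∈ good n r S) (c d : Cell n) :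
    Function.update (Function.update f a c) b d ∈ good n r S := by
  simp only [good, Finset.mem_filter, Finset.mem_univ, true_and] at hf ⊢
  intro q hq
  obtain ⟨h1, h2, h3, h4⟩ := hS q hq
  rw [Function.update_of_ne h2, Function.update_of_ne h1,
    Function.update_of_ne h4, Function.update_of_ne h3]
  exact hf q hq

/-- fibers of the evaluation-at-two-points map over a set invariant under updates
    are all of the same size -/
lemma fiber_const {n r : ℕ} (a b : Fin r) (hab : a ≠ b) (G : Finset (Fin r → Cell n))
    (hG : ∀ f ∈ G, ∀ c d, Function.update (Function.update f a c) b d ∈ G)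
    (cd cd' : Cell n × Cell n) :
    (G.filter fun f => (f a, f b) = cd).card = (G.filter fun f => (f a, f b) = cd').card := by
  have key : ∀ (u v : Cell n × Cell n) (f : Fin r → Cell n), f ∈ G.filter (fun f => (f a, f b) = u) →
      Function.update (Function.update f a v.1) b v.2 ∈ G.filter (fun f => (f a, f b) = v) := by
    intro u v f hf
    obtain ⟨hfG, _⟩ := Finset.mem_filter.mp hf
    refine Finset.mem_filter.mpr ⟨hG f hfG _ _, ?_⟩
    have hua : Function.update (Function.update f a v.1) b v.2 a = v.1 := by
      rw [Function.update_of_ne hab, Function.update_self]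
    have hub : Function.update (Function.update f a v.1) b v.2 b = v.2 := by
      rw [Function.update_self]
    rw [hua, hub]
  have inv : ∀ (u v : Cell n × Cell n) (f : Fin r → Cell n), f ∈ G.filter (fun f => (f a, f b) = u) →
      Function.update (Function.update (Function.update (Function.update f a v.1) b v.2) a u.1) b u.2 = f := by
    intro u v f hf
    obtain ⟨hfG, hfe⟩ := Finset.mem_filter.mp hf
    have hfa : f a = u.1 := by rw [← hfe]
    have hfb : f b = u.2 := by rw [← hfe]
    funext x
    by_cases hxb : x = b
    · subst hxb; rw [Function.update_self, hfb]
    by_cases hxa : x = a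
    · subst hxa
      rw [Function.update_of_ne hab, Function.update_self, hfa]
    · rw [Function.update_of_ne hxb, Function.update_of_ne hxa,
        Function.update_of_ne hxb, Function.update_of_ne hxa]
  refine Finset.card_bij'
    (fun f _ => Function.update (Function.update f a cd'.1) b cd'.2)
    (fun f _ => Function.update (Function.update f a cd.1) b cd.2)
    (fun f hf => key cd cd' f hf) (fun f hf => key cd' cd f hf)
    (fun f hf => inv cd cd' f hf) (fun f hf => inv cd' cd f hf)

/-- independence bound : collisions at `e` within a set depending only on other
    coordinates occupy at most a `p` fraction -/
lemma indep_bound {n r : ℕ} (hn : 0 < n.choose 2) (p : ℝ)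
    (hSQ : (sqBad n : ℝ) ≤ p * (n.choose 2 : ℝ) ^ 2)
    (a b : Fin r) (hab : a ≠ b) (S : Finset (Fin r × Fin r))
    (hS : ∀ q ∈ S, q.1 ≠ a ∧ q.1 ≠ b ∧ q.2 ≠ a ∧ q.2 ≠ b) :
    (((good n r S).filter fun f => chi (f a) = chi (f b)).card : ℝ)
      ≤ p * ((good n r S).card : ℝ) := by
  classical
  have hcell : Nonempty (Cell n) := by
    rw [← Fintype.card_pos_iff, card_cell]; exact hn
  obtain ⟨c₀⟩ := hcell
  set G := good n r S with hGdef
  have hG : ∀ f ∈ G, ∀ c d, Function.update (Function.update f a c) b d ∈ G :=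
    fun f hf c d => good_update S a b hS f hf c d
  set t₀ := (G.filter fun f => (f a, f b) = (c₀, c₀)).card with ht₀
  have hfib : ∀ cd : Cell n × Cell n, (G.filter fun f => (f a, f b) = cd).card = t₀ :=
    fun cd => fiber_const a b hab G hG cd (c₀, c₀)
  -- total count
  have h1 : G.card = (n.choose 2) ^ 2 * t₀ := by
    rw [Finset.card_eq_sum_card_fiberwise
      (f := fun f => (f a, f b)) (t := (univ : Finset (Cell n × Cell n)))
      (fun f _ => Finset.mem_univ _)]
    rw [Finset.sum_const_nat (fun cd _ => hfib cd), Finset.card_univ,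
      Fintype.card_prod, card_cell]
    ring
  -- collision count
  have h2 : ((G.filter fun f => chi (f a) = chi (f b))).card = sqBad n * t₀ := by
    rw [Finset.card_eq_sum_card_fiberwise
      (f := fun f => (f a, f b))
      (t := (univ : Finset (Cell n × Cell n)).filter fun cd => chi cd.1 = chi cd.2)
      (fun f hf => by
        simp only [Finset.mem_coe, Finset.mem_filter, Finset.mem_univ, true_and] at hf ⊢
        exact hf.2)]
    rw [Finset.sum_const_nat (fun cd hcd => ?_)]
    · rfl
    · -- each fiber within the collision set equals the plain fiber
      have : (G.filter fun f => chi (f a) = chi (f b)).filter (fun f => (f a, f b) = cd)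
          = G.filter fun f => (f a, f b) = cd := by
        ext f
        simp only [Finset.mem_filter, Finset.mem_univ, true_and, and_assoc]
        constructor
        · rintro ⟨h1', _, h3'⟩; exact ⟨h1', h3'⟩
        · rintro ⟨h1', h3'⟩
          refine ⟨h1', ?_, h3'⟩
          simp only [Finset.mem_filter, Finset.mem_univ, true_and] at hcd
          have ha' : f a = cd.1 := by rw [← h3']
          have hb' : f b = cd.2 := by rw [← h3']
          rw [ha', hb']
          exact hcd
      rw [this, hfib]
  have ht₀nn : (0:ℝ) ≤ (t₀ : ℝ) := Nat.cast_nonneg _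
  rw [h1, h2]
  push_cast
  nlinarith [hSQ, ht₀nn, sq_nonneg ((n.choose 2 : ℝ))]


/-- splitting a good set by one more event -/
lemma good_split {n r : ℕ} (S : Finset (Fin r × Fin r)) (e : Fin r × Fin r) :
    (good n r (insert e S)).card
      + ((good n r S).filter fun f => chi (f e.1) = chi (f e.2)).card
      = (good n r S).card := by
  classical
  have h : good n r (insert e S) = (good n r S).filter fun f => ¬ chi (f e.1) = chi (f e.2) := by
    ext f
    simp only [good, Finset.mem_filter, Finset.mem_univ, true_and, Finset.forall_mem_insert]
    tauto
  rw [h, add_comm]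
  exact Finset.card_filter_add_card_filter_not _

/-- The counting Lovász Local Lemma for our collision events. -/
lemma lll_main {n r : ℕ} (hn : 0 < n.choose 2) (p x : ℝ)
    (hp0 : 0 ≤ p) (hx0 : 0 ≤ x) (hx1 : x < 1)
    (hSQ : (sqBad n : ℝ) ≤ p * (n.choose 2 : ℝ) ^ 2)
    (hpx : p ≤ x * (1 - x) ^ (2 * r - 3)) :
    ∀ N : ℕ, ∀ S : Finset (Fin r × Fin r), S ⊆ pairs r → S.card ≤ N →
      (0:ℝ) < ((good n r S).card : ℝ) ∧
      ∀ e ∈ pairs r, e ∉ S →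
        (((good n r S).filter fun f => chi (f e.1) = chi (f e.2)).card : ℝ)
          ≤ x * ((good n r S).card : ℝ) := by
  classical
  intro N
  induction N using Nat.strong_induction_on with
  | _ N IH =>
  intro S hSp hSN
  have hx1' : (0:ℝ) < 1 - x := by linarith
  -- the key claim, provable for S directly using IH on smaller sets
  have claim : ∀ e ∈ pairs r, e ∉ S →
      (((good n r S).filter fun f => chi (f e.1) = chi (f e.2)).card : ℝ)
        ≤ x * ((good n r S).card : ℝ) := by
    intro e hep heS
    have hab : e.1 ≠ e.2 := by
      have : e.1 < e.2 := (Finset.mem_filter.mp hep).2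
      exact ne_of_lt this
    have hr2 : 2 ≤ r := by
      have h1 : (e.1 : ℕ) < (e.2 : ℕ) := (Finset.mem_filter.mp hep).2
      have h2 : (e.2 : ℕ) < r := e.2.isLt
      omega
    set touches : Fin r × Fin r → Prop := fun q =>
      q.1 = e.1 ∨ q.1 = e.2 ∨ q.2 = e.1 ∨ q.2 = e.2 with htouches
    set S₁ := S.filter touches with hS₁
    set S₂ := S.filter (fun q => ¬ touches q) with hS₂
    have hS₂prop : ∀ q ∈ S₂, q.1 ≠ e.1 ∧ q.1 ≠ e.2 ∧ q.2 ≠ e.1 ∧ q.2 ≠ e.2 := by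
      intro q hq
      have := (Finset.mem_filter.mp hq).2
      simp only [htouches] at this
      tauto
    have hS₂S : S₂ ⊆ S := Finset.filter_subset _ _
    have hunion : S₂ ∪ S₁ = S := by
      rw [hS₁, hS₂, Finset.union_comm]
      exact Finset.filter_union_filter_not_eq _ _
    -- counting |S₁| ≤ 2r - 3
    have hcardS₁ : S₁.card ≤ 2 * r - 3 := by
      set E1 := (univ.erase e.1).image (fun c => if e.1 < c then (e.1, c) else (c, e.1)) with hE1
      set E2 := (univ.erase e.2).image (fun c => if e.2 < c then (e.2, c) else (c, e.2)) with hE2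
      have hsub : S₁ ⊆ (E1.erase e) ∪ E2 := by
        intro q hq
        obtain ⟨hqS, hqt⟩ := Finset.mem_filter.mp hq
        have hqp : q.1 < q.2 := (Finset.mem_filter.mp (hSp hqS)).2
        have hqe : q ≠ e := fun h => heS (h ▸ hqS)
        simp only [htouches] at hqt
        rcases hqt with h | h | h | h
        · refine Finset.mem_union_left _ (Finset.mem_erase.mpr ⟨hqe, ?_⟩)
          rw [hE1]
          refine Finset.mem_image.mpr ⟨q.2, ?_, ?_⟩
          · exact Finset.mem_erase.mpr ⟨by rw [← h]; exact (ne_of_lt hqp).symm, Finset.mem_univ _⟩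
          · rw [← h, if_pos hqp, Prod.mk.eta]
        · refine Finset.mem_union_right _ ?_
          rw [hE2]
          refine Finset.mem_image.mpr ⟨q.2, ?_, ?_⟩
          · exact Finset.mem_erase.mpr ⟨by rw [← h]; exact (ne_of_lt hqp).symm, Finset.mem_univ _⟩
          · rw [← h, if_pos hqp, Prod.mk.eta]
        · refine Finset.mem_union_left _ (Finset.mem_erase.mpr ⟨hqe, ?_⟩)
          rw [hE1]
          refine Finset.mem_image.mpr ⟨q.1, ?_, ?_⟩
          · exact Finset.mem_erase.mpr ⟨by rw [← h]; exact ne_of_lt hqp, Finset.mem_univ _⟩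
          · rw [← h, if_neg (by exact fun hc => absurd hqp (by rw [h] at hc ⊢; exact lt_asymm hc)), Prod.mk.eta]
        · refine Finset.mem_union_right _ ?_
          rw [hE2]
          refine Finset.mem_image.mpr ⟨q.1, ?_, ?_⟩
          · exact Finset.mem_erase.mpr ⟨by rw [← h]; exact ne_of_lt hqp, Finset.mem_univ _⟩
          · rw [← h, if_neg (by exact fun hc => absurd hqp (by rw [h] at hc ⊢; exact lt_asymm hc)), Prod.mk.eta]
      have hE1card : E1.card ≤ r - 1 := by
        calc E1.card ≤ (univ.erase e.1).card := Finset.card_image_le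
          _ = r - 1 := by rw [Finset.card_erase_of_mem (Finset.mem_univ _), Finset.card_univ, Fintype.card_fin]
      have hE2card : E2.card ≤ r - 1 := by
        calc E2.card ≤ (univ.erase e.2).card := Finset.card_image_le
          _ = r - 1 := by rw [Finset.card_erase_of_mem (Finset.mem_univ _), Finset.card_univ, Fintype.card_fin]
      have heE1 : e ∈ E1 := by
        rw [hE1]
        refine Finset.mem_image.mpr ⟨e.2, Finset.mem_erase.mpr ⟨hab.symm, Finset.mem_univ _⟩, ?_⟩
        rw [if_pos ((Finset.mem_filter.mp hep).2), Prod.mk.eta]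
      have hE1e : (E1.erase e).card ≤ r - 2 := by
        rw [Finset.card_erase_of_mem heE1]
        omega
      calc S₁.card ≤ ((E1.erase e) ∪ E2).card := Finset.card_le_card hsub
        _ ≤ (E1.erase e).card + E2.card := Finset.card_union_le _ _
        _ ≤ 2 * r - 3 := by omega
    -- collision bound via independence
    have hbad1 : ((good n r S).filter fun f => chi (f e.1) = chi (f e.2))
        ⊆ ((good n r S₂).filter fun f => chi (f e.1) = chi (f e.2)) :=
      Finset.filter_subset_filter _ (good_anti hS₂S)
    have hbad2 : (((good n r S).filter fun f => chi (f e.1) = chi (f e.2)).card : ℝ)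
        ≤ p * ((good n r S₂).card : ℝ) := by
      refine le_trans ?_ (indep_bound hn p hSQ e.1 e.2 hab S₂ hS₂prop)
      exact_mod_cast Nat.cast_le.mpr (Finset.card_le_card hbad1)
    -- peeling
    have peel : ∀ T : Finset (Fin r × Fin r), T ⊆ S₁ →
        (1 - x) ^ T.card * ((good n r S₂).card : ℝ) ≤ ((good n r (S₂ ∪ T)).card : ℝ) := by
      intro T
      induction T using Finset.induction_on with
      | empty => intro _; simp
      | @insert a T haT ihT =>
        intro hins
        have hTsub : T ⊆ S₁ := (Finset.subset_insert a T).trans hins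
        have haS₁ : a ∈ S₁ := hins (Finset.mem_insert_self a T)
        have haS : a ∈ S := Finset.filter_subset _ _ haS₁
        set U := S₂ ∪ T with hU
        have haU : a ∉ U := by
          rw [hU, Finset.mem_union]
          rintro (h | h)
          · have h1 := (Finset.mem_filter.mp h).2
            have h2 := (Finset.mem_filter.mp haS₁).2
            exact h1 h2
          · exact haT h
        have hUS : U ⊆ S := by
          rw [hU]
          exact Finset.union_subset hS₂S (hTsub.trans (Finset.filter_subset _ _))
        have hUcard : U.card < N := by
          have h1 : U ⊂ S := (Finset.ssubset_iff_of_subset hUS).mpr ⟨a, haS, haU⟩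
          have := Finset.card_lt_card h1
          omega
        obtain ⟨posU, claimU⟩ := IH U.card hUcard U (hUS.trans hSp) le_rfl
        have hbadU := claimU a (hSp haS) haU
        have hsplit := good_split (n := n) U a
        have : ((good n r (insert a U)).card : ℝ)
            ≥ (1 - x) * ((good n r U).card : ℝ) := by
          have hc : ((good n r (insert a U)).card : ℝ)
              = ((good n r U).card : ℝ)
                - (((good n r U).filter fun f => chi (f a.1) = chi (f a.2)).card : ℝ) := by
            have := congrArg (fun m : ℕ => (m : ℝ)) hsplit
            push_cast at this
            linarith
          rw [hc]
          linarith
        have hins2 : S₂ ∪ insert a T = insert a U := by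
          rw [hU, Finset.union_insert]
        rw [hins2, Finset.card_insert_of_notMem haT, pow_succ]
        calc (1 - x) ^ T.card * (1 - x) * ((good n r S₂).card : ℝ)
            = (1 - x) * ((1 - x) ^ T.card * ((good n r S₂).card : ℝ)) := by ring
          _ ≤ (1 - x) * ((good n r U).card : ℝ) := by
              apply mul_le_mul_of_nonneg_left (ihT hTsub) (le_of_lt hx1')
          _ ≤ ((good n r (insert a U)).card : ℝ) := this
    have hpeel := peel S₁ (Finset.Subset.refl _)
    rw [hunion] at hpeel
    -- combine
    have hmonopow : (1 - x) ^ (2 * r - 3) ≤ (1 - x) ^ S₁.card :=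
      pow_le_pow_of_le_one (le_of_lt hx1') (by linarith) hcardS₁
    have hgood2nn : (0:ℝ) ≤ ((good n r S₂).card : ℝ) := Nat.cast_nonneg _
    calc (((good n r S).filter fun f => chi (f e.1) = chi (f e.2)).card : ℝ)
        ≤ p * ((good n r S₂).card : ℝ) := hbad2
      _ ≤ (x * (1 - x) ^ (2 * r - 3)) * ((good n r S₂).card : ℝ) := by
          apply mul_le_mul_of_nonneg_right hpx hgood2nn
      _ ≤ (x * (1 - x) ^ S₁.card) * ((good n r S₂).card : ℝ) := by
          apply mul_le_mul_of_nonneg_right _ hgood2nn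
          exact mul_le_mul_of_nonneg_left hmonopow hx0
      _ = x * ((1 - x) ^ S₁.card * ((good n r S₂).card : ℝ)) := by ring
      _ ≤ x * ((good n r S).card : ℝ) := mul_le_mul_of_nonneg_left hpeel hx0
  refine ⟨?_, claim⟩
  -- positivity
  rcases Finset.eq_empty_or_nonempty S with rfl | ⟨e, heS⟩
  · rw [good_empty, card_univ_fun]
    positivity
  · have h1 : 1 ≤ S.card := Finset.card_pos.mpr ⟨e, heS⟩
    have hcard : (S.erase e).card < N := by
      rw [Finset.card_erase_of_mem heS]
      omega
    obtain ⟨pos', claim'⟩ := IH (S.erase e).card hcard (S.erase e)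
      ((Finset.erase_subset _ _).trans hSp) le_rfl
    have hbad := claim' e (hSp heS) (Finset.notMem_erase _ _)
    have hsplit := good_split (n := n) (S.erase e) e
    rw [Finset.insert_erase heS] at hsplit
    have hc : ((good n r S).card : ℝ)
        = ((good n r (S.erase e)).card : ℝ)
          - (((good n r (S.erase e)).filter fun f => chi (f e.1) = chi (f e.2)).card : ℝ) := by
      have := congrArg (fun m : ℕ => (m : ℝ)) hsplit
      push_cast at this
      linarith
    rw [hc]
    nlinarith

/-- final LLL corollary -/
lemma lll_bound {n r : ℕ} (hn : 0 < n.choose 2) (p x : ℝ)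
    (hp0 : 0 ≤ p) (hx0 : 0 ≤ x) (hx1 : x < 1)
    (hSQ : (sqBad n : ℝ) ≤ p * (n.choose 2 : ℝ) ^ 2)
    (hpx : p ≤ x * (1 - x) ^ (2 * r - 3)) :
    (1 - x) ^ (r.choose 2) * (n.choose 2 : ℝ) ^ r ≤ ((good n r (pairs r)).card : ℝ) := by
  classical
  have main : ∀ S : Finset (Fin r × Fin r), S ⊆ pairs r →
      (1 - x) ^ S.card * (n.choose 2 : ℝ) ^ r ≤ ((good n r S).card : ℝ) := by
    intro S
    induction S using Finset.induction_on with
    | empty =>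
      intro _
      rw [good_empty, card_univ_fun]
      push_cast
      simp
    | @insert e S heS ihS =>
      intro hins
      have hSsub : S ⊆ pairs r := (Finset.subset_insert e S).trans hins
      have hep : e ∈ pairs r := hins (Finset.mem_insert_self e S)
      obtain ⟨_, claim⟩ := lll_main hn p x hp0 hx0 hx1 hSQ hpx S.card S hSsub le_rfl
      have hbad := claim e hep heS
      have hsplit := good_split (n := n) S e
      have hx1' : (0:ℝ) < 1 - x := by linarith
      have hc : ((good n r (insert e S)).card : ℝ)
          = ((good n r S).card : ℝ)
            - (((good n r S).filter fun f => chi (f e.1) = chi (f e.2)).card : ℝ) := by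
        have := congrArg (fun m : ℕ => (m : ℝ)) hsplit
        push_cast at this
        linarith
      rw [Finset.card_insert_of_notMem heS, pow_succ, hc]
      have h2 := ihS hSsub
      have h3 : (0:ℝ) ≤ (1 - x) ^ S.card * (n.choose 2 : ℝ) ^ r := by positivity
      nlinarith
  have := main (pairs r) (Finset.Subset.refl _)
  rwa [card_pairs] at this


/-- key analytic inequality behind the local lemma condition -/
lemma analytic {p g : ℝ} {d : ℕ} (hp0 : 0 < p) (hg0 : 0 < g) (hg1 : g < 1)
    (hx1 : p * Real.exp g < 1)
    (hid : g * (1 - p - g) = (d : ℝ) * p) (hd0 : 0 < (d : ℝ)) :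
    p ≤ (p * Real.exp g) * (1 - p * Real.exp g) ^ d := by
  set x := p * Real.exp g with hxdef
  have hexp : (0:ℝ) < Real.exp g := Real.exp_pos g
  have hx0 : 0 < x := mul_pos hp0 hexp
  have hgp : 0 < 1 - p - g := by
    rcases lt_trichotomy (1 - p - g) 0 with h | h | h
    · nlinarith
    · nlinarith
    · exact h
  have h1x : (0:ℝ) < 1 - x := by linarith
  -- exp g ≤ 1/(1-g)
  have hexpg : Real.exp g * (1 - g) ≤ 1 := by
    have h := Real.add_one_le_exp (-g)
    rw [Real.exp_neg] at h
    have h2 : (1 - g) * Real.exp g ≤ (Real.exp g)⁻¹ * Real.exp g := by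
      apply mul_le_mul_of_nonneg_right _ (le_of_lt hexp)
      linarith
    rw [inv_mul_cancel₀ (ne_of_gt hexp)] at h2
    linarith
  have hxle : x ≤ p / (1 - g) := by
    rw [hxdef]
    have h1g : (0:ℝ) < 1 - g := by linarith
    have hh : Real.exp g ≤ 1 / (1 - g) := by
      rw [le_div_iff₀ h1g]
      linarith
    calc p * Real.exp g ≤ p * (1 / (1 - g)) :=
          mul_le_mul_of_nonneg_left hh (le_of_lt hp0)
      _ = p / (1 - g) := by ring
  have hylt1 : p / (1 - g) < 1 := by
    rw [div_lt_one (by linarith : (0:ℝ) < 1 - g)]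
    linarith
  -- x/(1-x) ≤ p/(1-g-p)
  have hfrac : x / (1 - x) ≤ p / (1 - g - p) := by
    have h1g : (0:ℝ) < 1 - g := by linarith
    have hgp' : (0:ℝ) < 1 - g - p := by linarith
    have hy : p / (1 - g) / (1 - p / (1 - g)) = p / (1 - g - p) := by
      have hrw : 1 - p / (1 - g) = (1 - g - p) / (1 - g) := by
        field_simp
      have hne1 : (1 - g) ≠ 0 := ne_of_gt h1g
      have hne2 : (1 - g - p) ≠ 0 := ne_of_gt hgp'
      rw [hrw]
      rw [div_div_div_comm]
      rw [div_self hne1, div_one]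
    have hxy : x ≤ p / (1 - g) := hxle
    have h1y : (0:ℝ) < 1 - p / (1 - g) := by linarith
    have hmono : x / (1 - x) ≤ (p / (1 - g)) / (1 - p / (1 - g)) := by
      rw [div_le_div_iff₀ h1x h1y]
      nlinarith
    rw [hy] at hmono
    exact hmono
  -- d * x/(1-x) ≤ g
  have hkey : (d : ℝ) * (x / (1 - x)) ≤ g := by
    have hgp' : (0:ℝ) < 1 - g - p := by linarith
    have hgval : g = (d : ℝ) * p / (1 - g - p) := by
      field_simp
      nlinarith [hid]
    calc (d : ℝ) * (x / (1 - x)) ≤ (d : ℝ) * (p / (1 - g - p)) :=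
          mul_le_mul_of_nonneg_left hfrac (le_of_lt hd0)
      _ = (d : ℝ) * p / (1 - g - p) := by ring
      _ = g := hgval.symm
  -- (1-x) ≥ exp(-(x/(1-x)))
  have hexp1x : Real.exp (-(x / (1 - x))) ≤ 1 - x := by
    have h := Real.add_one_le_exp (x / (1 - x))
    have h2 : (x / (1 - x) + 1) * (1 - x) = 1 := by
      field_simp
      ring
    have h3 : 1 ≤ Real.exp (x / (1 - x)) * (1 - x) := by
      calc (1:ℝ) = (x / (1 - x) + 1) * (1 - x) := h2.symm
        _ ≤ Real.exp (x / (1 - x)) * (1 - x) := by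
            apply mul_le_mul_of_nonneg_right _ (le_of_lt h1x)
            linarith
    rw [Real.exp_neg]
    rw [inv_le_iff_one_le_mul₀ (Real.exp_pos _)]
    linarith [mul_comm (Real.exp (x / (1 - x))) (1 - x)]
  have hpow : Real.exp (-g) ≤ (1 - x) ^ d := by
    calc Real.exp (-g) ≤ Real.exp ((d:ℝ) * (-(x / (1 - x)))) := by
          apply Real.exp_le_exp.mpr
          nlinarith [hkey]
      _ = Real.exp (-(x / (1 - x))) ^ d := by
          rw [← Real.exp_nat_mul]
      _ ≤ (1 - x) ^ d := by
          apply pow_le_pow_left₀ (le_of_lt (Real.exp_pos _)) hexp1x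
  calc p = p * (Real.exp g * Real.exp (-g)) := by
        rw [← Real.exp_add]
        simp
    _ = x * Real.exp (-g) := by rw [hxdef]; ring
    _ ≤ x * (1 - x) ^ d := mul_le_mul_of_nonneg_left hpow (le_of_lt hx0)

/-- sum of squares formula -/
lemma sum_sq (n : ℕ) :
    ∑ i ∈ Finset.range n, (i : ℝ) ^ 2 = n * (n - 1) * (2 * n - 1) / 6 := by
  induction n with
  | zero => simp
  | succ n ih =>
    rw [Finset.sum_range_succ, ih]
    push_cast
    ring



lemma sqBad_eq (n : ℕ) : sqBad n = ∑ j : Fin n, (j : ℕ) * (j : ℕ) := by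
  classical
  rw [sqBad, Finset.card_eq_sum_card_fiberwise
    (f := fun cd : Cell n × Cell n => chi cd.1) (t := (univ : Finset (Fin n)))
    (fun _ _ => Finset.mem_univ _)]
  apply Finset.sum_congr rfl
  intro j _
  have hset : ((univ : Finset (Cell n × Cell n)).filter fun cd => chi cd.1 = chi cd.2).filter
      (fun cd => chi cd.1 = j)
      = (univ.filter fun c : Cell n => chi c = j) ×ˢ (univ.filter fun c : Cell n => chi c = j) := by
    ext cd
    simp only [Finset.mem_filter, Finset.mem_univ, true_and, Finset.mem_product]
    constructor
    · rintro ⟨h1, h2⟩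
      exact ⟨h2, by rw [← h1]; exact h2⟩
    · rintro ⟨h1, h2⟩
      exact ⟨h1.trans h2.symm, h1⟩
  rw [hset, Finset.card_product, card_chi_fiber]

lemma sqBad_real (n : ℕ) : (sqBad n : ℝ) = ∑ i ∈ Finset.range n, (i:ℝ) ^ 2 := by
  rw [sqBad_eq]
  push_cast
  rw [show (∑ j : Fin n, ((j : ℕ):ℝ) * ((j : ℕ):ℝ)) = ∑ i ∈ Finset.range n, (i:ℝ) * (i:ℝ) from
    Fin.sum_univ_eq_sum_range (fun i => (i:ℝ) * (i:ℝ)) n]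
  exact Finset.sum_congr rfl fun i _ => by ring

end StirAux

set_option maxHeartbeats 1600000 in
/-- Lovász local lemma lower bound: for `n ≥ 2`, `1 ≤ k ≤ n` and `r = n − k`,
with `p = (4/(3n))·((n−1/2)/(n−1))`, `m = 2r − 2` and
`g₁ = (1/2)(1 − p − √(1 − (4m−2)p + p²))`, assuming `1 − (4m−2)p + p² ≥ 0` and
`p·e^{g₁} ∈ (0,1)`, the unsigned Stirling number of the first kind satisfies
`s(n,k) ≥ (C(n,2)^r/r!)·(1 − p·e^{g₁})^{C(r,2)}`. -/
theorem stirling_first_kind_LLL_lower_bound (n k : ℕ) (hn : 2 ≤ n) (hk1 : 1 ≤ k) (hkn : k ≤ n)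
    (r : ℕ) (hr : r = n - k)
    (p m g₁ : ℝ)
    (hp : p = 4 / (3 * (n : ℝ)) * (((n : ℝ) - 1/2) / ((n : ℝ) - 1)))
    (hm : m = 2 * (r : ℝ) - 2)
    (hdisc : 0 ≤ 1 - (4 * m - 2) * p + p ^ 2)
    (hg₁ : g₁ = (1/2) * (1 - p - Real.sqrt (1 - (4 * m - 2) * p + p ^ 2)))
    (hpos : 0 < p * Real.exp g₁) (hlt : p * Real.exp g₁ < 1) :
    (n.choose 2 : ℝ) ^ r / (r.factorial : ℝ) * (1 - p * Real.exp g₁) ^ (r.choose 2)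
      ≤ (stirling1 n k : ℝ) := by
  classical
  have hW : 0 < n.choose 2 := Nat.choose_pos hn
  have hrn : r ≤ n := by omega
  have hkr : n - r = k := by omega
  have hp0 : 0 < p := by
    have he := Real.exp_pos g₁
    nlinarith [hpos]
  set x := p * Real.exp g₁ with hxdef
  have hx1 : x < 1 := hlt
  have hx0 : 0 < x := hpos
  have hA : ((StirAux.good n r (StirAux.pairs r)).card : ℝ)
      ≤ (r.factorial : ℝ) * (stirling1 n k : ℝ) := by
    have h := StirAux.card_good_le n r hrn
    rw [hkr] at h
    exact_mod_cast h
  have hB : (1 - x) ^ (r.choose 2) * ((n.choose 2 : ℝ)) ^ r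
      ≤ ((StirAux.good n r (StirAux.pairs r)).card : ℝ) := by
    rcases lt_or_ge r 2 with hr2 | hr2
    · have hpairs : StirAux.pairs r = ∅ := by
        rw [Finset.eq_empty_iff_forall_notMem]
        intro q hq
        have h1 : q.1 < q.2 := (Finset.mem_filter.mp hq).2
        have h2 : (q.1 : ℕ) < (q.2 : ℕ) := h1
        have h3 : (q.2 : ℕ) < r := q.2.isLt
        omega
      have hchoose : r.choose 2 = 0 := Nat.choose_eq_zero_of_lt hr2
      rw [hpairs, StirAux.good_empty, StirAux.card_univ_fun, hchoose, pow_zero, one_mul,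
        Nat.cast_pow]
    · have hn3 : 3 ≤ n := by omega
      have hN3 : (3:ℝ) ≤ (n:ℝ) := by exact_mod_cast hn3
      have hn0 : (n:ℝ) ≠ 0 := by linarith
      have hn1 : (n:ℝ) - 1 ≠ 0 := by intro h; linarith
      have hkey : p * (3 * (n:ℝ) * ((n:ℝ) - 1)) = 4 * ((n:ℝ) - 1/2) := by
        rw [hp]
        field_simp
      have hA3 : (0:ℝ) < 3 * (n:ℝ) * ((n:ℝ) - 1) := by nlinarith
      have hplt : p < 1 := by
        have h4 : 4 * ((n:ℝ) - 1/2) < 3 * (n:ℝ) * ((n:ℝ) - 1) := by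
          nlinarith [mul_nonneg (by linarith : (0:ℝ) ≤ (n:ℝ) - 3) (by linarith : (0:ℝ) ≤ (n:ℝ))]
        by_contra hcon
        push_neg at hcon
        have h5 : 3 * (n:ℝ) * ((n:ℝ) - 1) ≤ p * (3 * (n:ℝ) * ((n:ℝ) - 1)) :=
          le_mul_of_one_le_left hA3.le hcon
        linarith
      have hsq : Real.sqrt (1 - (4 * m - 2) * p + p ^ 2) = 1 - p - 2 * g₁ := by
        rw [hg₁]; ring
      have hsqnn : 0 ≤ 1 - p - 2 * g₁ := hsq ▸ Real.sqrt_nonneg _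
      have hD : (1 - p - 2 * g₁) ^ 2 = 1 - (4 * m - 2) * p + p ^ 2 := by
        rw [← hsq]
        exact Real.sq_sqrt hdisc
      have hr2R : (2:ℝ) ≤ (r:ℝ) := by exact_mod_cast hr2
      have hid : g₁ * (1 - p - g₁) = (2 * (r:ℝ) - 3) * p := by
        rw [hm] at hD
        linear_combination (-(1/4) : ℝ) * hD
      have hd0 : (0:ℝ) < 2 * (r:ℝ) - 3 := by linarith
      have hg0 : 0 < g₁ := by
        by_contra hcon
        push_neg at hcon
        have h1pg : 0 ≤ 1 - p - g₁ := by linarith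
        have h2 : g₁ * (1 - p - g₁) ≤ 0 := mul_nonpos_iff.mpr (Or.inr ⟨hcon, h1pg⟩)
        linarith [hid, mul_pos hd0 hp0]
      have hg1lt : g₁ < 1 := by
        rw [hg₁]
        linarith [Real.sqrt_nonneg (1 - (4 * m - 2) * p + p ^ 2)]
      have hdcast : ((2 * r - 3 : ℕ) : ℝ) = 2 * (r:ℝ) - 3 := by
        have h3 : 3 ≤ 2 * r := by omega
        rw [Nat.cast_sub h3]
        push_cast
        ring
      have hid' : g₁ * (1 - p - g₁) = ((2 * r - 3 : ℕ) : ℝ) * p := by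
        rw [hdcast]; exact hid
      have hd0' : (0:ℝ) < ((2 * r - 3 : ℕ) : ℝ) := by rw [hdcast]; linarith
      have hpx : p ≤ x * (1 - x) ^ (2 * r - 3) :=
        StirAux.analytic hp0 hg0 hg1lt hlt hid' hd0'
      have hSQ : (StirAux.sqBad n : ℝ) ≤ p * ((n.choose 2 : ℕ) : ℝ) ^ 2 := by
        have hsq2 : (StirAux.sqBad n : ℝ) = (n:ℝ) * ((n:ℝ) - 1) * (2 * (n:ℝ) - 1) / 6 := by
          rw [StirAux.sqBad_real, StirAux.sum_sq]
        have hch : ((n.choose 2 : ℕ) : ℝ) = (n:ℝ) * ((n:ℝ) - 1) / 2 := Nat.cast_choose_two (K := ℝ) n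
        have heq : p * ((n:ℝ) * ((n:ℝ) - 1) / 2) ^ 2
            = (n:ℝ) * ((n:ℝ) - 1) * (2 * (n:ℝ) - 1) / 6 := by
          rw [hp]
          have h1 : (n:ℝ) ≠ 0 := by linarith
          have h2 : (n:ℝ) - 1 ≠ 0 := by
            intro h
            nlinarith
          field_simp
          ring
        rw [hsq2, hch, heq]
      exact StirAux.lll_bound hW p x hp0.le hx0.le hx1 hSQ hpx
  have hfact : (0:ℝ) < (r.factorial : ℝ) := by exact_mod_cast r.factorial_pos
  rw [div_mul_eq_mul_div, div_le_iff₀ hfact]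
  calc (n.choose 2 : ℝ) ^ r * (1 - x) ^ (r.choose 2)
      = (1 - x) ^ (r.choose 2) * (n.choose 2 : ℝ) ^ r := by ring
    _ ≤ ((StirAux.good n r (StirAux.pairs r)).card : ℝ) := hB
    _ ≤ (r.factorial : ℝ) * (stirling1 n k : ℝ) := hA
    _ = (stirling1 n k : ℝ) * (r.factorial : ℝ) := by ring
end

section
/- Let t > 0 and let (r(n)) be a sequence of nonnegative integers with r(n)/√n → t as n → ∞. Place r = r(n) distinguishable rooks independently and uniformly at random on B_n. Then the expected numbers of attacks satisfy E(W_RR + W_CC) → (4/3)t² and E(W_CC) → (2/3)t² as n → ∞. -/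
open Finset Filter

/-- Expectation of an `ℕ`-valued statistic of a uniform random placement of `r` rooks on `B_n`;
a placement is a function `Fin r → ℕ × ℕ`, rook `a` sitting on the square `f a = (row, column)`. -/
noncomputable def rookExp (n r : ℕ) (W : (Fin r → ℕ × ℕ) → ℕ) : ℝ :=
  (∑ f ∈ Fintype.piFinset (fun _ : Fin r => board n), (W f : ℝ)) / ((board n).card : ℝ) ^ r

/- ### Auxiliary lemmas -/

lemma sum_range_cast (m : ℕ) : ∑ i ∈ range m, (i:ℝ) = m * ((m:ℝ) - 1) / 2 := by
  induction m with
  | zero => simp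
  | succ k ih => rw [Finset.sum_range_succ, ih]; push_cast; ring

lemma sum_range_sq_cast (m : ℕ) :
    ∑ i ∈ range m, (i:ℝ)^2 = m * ((m:ℝ) - 1) * (2*(m:ℝ) - 1) / 6 := by
  induction m with
  | zero => simp
  | succ k ih => rw [Finset.sum_range_succ, ih]; push_cast; ring

lemma board_sum (n : ℕ) (g : ℕ × ℕ → ℝ) :
    ∑ p ∈ board n, g p = ∑ j ∈ range (n+1), ∑ i ∈ Finset.Ico 1 j, g (i, j) := by
  rw [board, Finset.sum_filter, Finset.sum_product_right]
  refine Finset.sum_congr rfl fun j hj => ?_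
  rw [← Finset.sum_filter]
  refine Finset.sum_congr ?_ fun i _ => rfl
  ext i
  simp only [Finset.mem_filter, Finset.mem_range, Finset.mem_Ico] at *
  omega

lemma board_card (n : ℕ) : ((board n).card : ℝ) = n * ((n:ℝ) - 1) / 2 := by
  have : ((board n).card : ℝ) = ∑ p ∈ board n, (1:ℝ) := by simp
  rw [this, board_sum]
  have : ∀ j ∈ range (n+1), (∑ _i ∈ Finset.Ico 1 j, (1:ℝ)) = ((j - 1 : ℕ) : ℝ) := by
    intro j _; simp [Nat.card_Ico]
  rw [Finset.sum_congr rfl this, Finset.sum_range_succ' (fun j => ((j - 1 : ℕ):ℝ))]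
  simp only [Nat.add_sub_cancel, Nat.zero_sub, Nat.cast_zero]
  rw [sum_range_cast]; ring

lemma col_sq (n : ℕ) :
    ∑ j ∈ range (n+1), (∑ p ∈ board n, if p.2 = j then (1:ℝ) else 0)^2
      = n * ((n:ℝ) - 1) * (2*(n:ℝ) - 1) / 6 := by
  have h : ∀ j ∈ range (n+1),
      (∑ p ∈ board n, if p.2 = j then (1:ℝ) else 0) = ((j - 1 : ℕ) : ℝ) := by
    intro j hj
    rw [board_sum]
    rw [Finset.mem_range] at hj
    have : ∀ j' ∈ range (n+1), (∑ i ∈ Finset.Ico 1 j', if (i, j').2 = j then (1:ℝ) else 0)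
        = if j' = j then ((j - 1 : ℕ):ℝ) else 0 := by
      intro j' _
      by_cases hjj : j' = j <;> simp [hjj, Nat.card_Ico]
    rw [Finset.sum_congr rfl this, Finset.sum_ite_eq' (range (n+1)) j fun _ => ((j-1:ℕ):ℝ)]
    simp [Finset.mem_range, hj]
  calc ∑ j ∈ range (n+1), (∑ p ∈ board n, if p.2 = j then (1:ℝ) else 0)^2
      = ∑ j ∈ range (n+1), ((j - 1 : ℕ):ℝ)^2 :=
        Finset.sum_congr rfl (fun j hj => by rw [h j hj])
    _ = _ := by
        rw [Finset.sum_range_succ' (fun j => ((j - 1 : ℕ):ℝ)^2)]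
        simp only [Nat.add_sub_cancel, Nat.zero_sub, Nat.cast_zero]
        rw [sum_range_sq_cast]; norm_num

lemma row_sq (n : ℕ) :
    ∑ i ∈ range (n+1), (∑ p ∈ board n, if p.1 = i then (1:ℝ) else 0)^2
      = n * ((n:ℝ) - 1) * (2*(n:ℝ) - 1) / 6 := by
  have h : ∀ i ∈ range (n+1),
      (∑ p ∈ board n, if p.1 = i then (1:ℝ) else 0)
        = if i = 0 then 0 else ((n - i : ℕ) : ℝ) := by
    intro i hi
    rw [board_sum]
    rw [Finset.mem_range] at hi
    have h2 : ∀ j ∈ range (n+1), (∑ i' ∈ Finset.Ico 1 j, if (i', j).1 = i then (1:ℝ) else 0)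
        = if 1 ≤ i ∧ i < j then 1 else 0 := by
      intro j _
      simp only
      rw [Finset.sum_ite_eq' (Finset.Ico 1 j) i fun _ => (1:ℝ)]
      simp [Finset.mem_Ico]
    rw [Finset.sum_congr rfl h2]
    by_cases hi0 : i = 0
    · simp [hi0]
    · have h1 : 1 ≤ i := Nat.one_le_iff_ne_zero.2 hi0
      simp only [hi0, if_false, h1, true_and]
      rw [Finset.sum_boole]
      congr 1
      rw [show (range (n+1)).filter (fun j => i < j) = Finset.Ioc i n by
        ext j; simp only [Finset.mem_filter, Finset.mem_range, Finset.mem_Ioc]; omega]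
      rw [Nat.card_Ioc]
  calc ∑ i ∈ range (n+1), (∑ p ∈ board n, if p.1 = i then (1:ℝ) else 0)^2
      = ∑ i ∈ range (n+1), (if i = 0 then (0:ℝ) else ((n - i : ℕ) : ℝ))^2 :=
        Finset.sum_congr rfl (fun i hi => by rw [h i hi])
    _ = _ := by
        rw [Finset.sum_range_succ' (fun i => (if i = 0 then (0:ℝ) else ((n - i : ℕ) : ℝ))^2)]
        have h1 : ∀ i ∈ range n, (if i + 1 = 0 then (0:ℝ) else ((n - (i+1) : ℕ) : ℝ))^2
            = (fun j => ((j:ℕ):ℝ)^2) (n - 1 - i) := by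
          intro i _
          simp only [Nat.succ_ne_zero, if_false]
          congr 2
          omega
        rw [Finset.sum_congr rfl h1, Finset.sum_range_reflect (fun j => ((j:ℕ):ℝ)^2) n,
          sum_range_sq_cast]
        norm_num

lemma prod_two {r : ℕ} (a b : Fin r) (hab : a ≠ b) (v : Fin r → ℝ) (x y z : ℝ)
    (hva : v a = x) (hvb : v b = y) (hv : ∀ i, i ≠ a → i ≠ b → v i = z) :
    ∏ i, v i = x * y * z ^ (r - 2) := by
  rw [← Finset.mul_prod_erase univ v (mem_univ a), hva]
  have hb : b ∈ univ.erase a := Finset.mem_erase.2 ⟨hab.symm, mem_univ b⟩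
  rw [← Finset.mul_prod_erase _ v hb, hvb]
  have : ∏ i ∈ (univ.erase a).erase b, v i = z ^ (r - 2) := by
    rw [Finset.prod_congr rfl (fun i hi => ?_), Finset.prod_const]
    · congr 1
      rw [Finset.card_erase_of_mem hb, Finset.card_erase_of_mem (mem_univ a)]
      simp [Fintype.card_fin]
      omega
    · simp only [Finset.mem_erase] at hi
      exact hv i hi.2.1 hi.1
  rw [this]; ring

lemma key (n r : ℕ) (π : ℕ × ℕ → ℕ) (hπ : ∀ p ∈ board n, π p ≤ n)
    (a b : Fin r) (hab : a ≠ b) :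
    ∑ f ∈ Fintype.piFinset (fun _ : Fin r => board n),
        (if π (f a) = π (f b) then (1:ℝ) else 0)
      = (∑ j ∈ range (n+1), (∑ p ∈ board n, if π p = j then (1:ℝ) else 0)^2)
        * ((board n).card : ℝ) ^ (r - 2) := by
  classical
  set h : Fin r → ℕ → ℕ × ℕ → ℝ := fun i j p =>
    if i = a ∨ i = b then (if π p = j then 1 else 0) else 1 with hh
  have step1 : ∀ f ∈ Fintype.piFinset (fun _ : Fin r => board n),
      (if π (f a) = π (f b) then (1:ℝ) else 0)
        = ∑ j ∈ range (n+1), ∏ i, h i j (f i) := by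
    intro f hf
    have hfa : f a ∈ board n := by
      rw [Fintype.mem_piFinset] at hf; exact hf a
    have hprod : ∀ j, ∏ i, h i j (f i)
        = (if π (f a) = j then (1:ℝ) else 0) * (if π (f b) = j then 1 else 0) * 1 ^ (r-2) := by
      intro j
      refine prod_two a b hab _ _ _ _ ?_ ?_ ?_
      · simp [hh]
      · simp [hh]
      · intro i hia hib; simp [hh, hia, hib]
    simp only [hprod, one_pow, mul_one]
    rw [Finset.sum_congr rfl (fun j _ => ?_)]
    case _ =>
      rw [Finset.sum_ite_eq (range (n+1)) (π (f a)) (fun j => if π (f b) = j then (1:ℝ) else 0)]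
      have : π (f a) ∈ range (n+1) := Finset.mem_range.2 (Nat.lt_succ_of_le (hπ _ hfa))
      rw [if_pos this]
      by_cases hE : π (f a) = π (f b)
      · simp [hE]
      · simp [hE, Ne.symm hE]
    case _ =>
      rw [ite_mul, one_mul, zero_mul]
  have e1 : ∑ f ∈ Fintype.piFinset (fun _ : Fin r => board n),
      (if π (f a) = π (f b) then (1:ℝ) else 0)
      = ∑ f ∈ Fintype.piFinset (fun _ : Fin r => board n),
        ∑ j ∈ range (n+1), ∏ i, h i j (f i) := Finset.sum_congr rfl step1
  rw [e1]
  rw [show ∑ f ∈ Fintype.piFinset (fun _ : Fin r => board n),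
      ∑ j ∈ range (n+1), ∏ i, h i j (f i)
      = ∑ j ∈ range (n+1), ∑ f ∈ Fintype.piFinset (fun _ : Fin r => board n),
        ∏ i, h i j (f i) from Finset.sum_comm]
  rw [Finset.sum_mul]
  refine Finset.sum_congr rfl fun j _ => ?_
  rw [Finset.sum_prod_piFinset (board n) (fun i p => h i j p)]
  rw [prod_two a b hab _ (∑ p ∈ board n, if π p = j then (1:ℝ) else 0)
    (∑ p ∈ board n, if π p = j then (1:ℝ) else 0) ((board n).card : ℝ) ?_ ?_ ?_]
  · ring
  · simp [hh]
  · simp [hh]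
  · intro i hia hib
    simp [hh, hia, hib]

lemma pairsum (r : ℕ) :
    ∑ p : Fin r × Fin r, (if p.1 < p.2 then (1:ℝ) else 0) = r * ((r:ℝ) - 1) / 2 := by
  rw [Fintype.sum_prod_type_right]
  have h1 : ∀ b : Fin r, (∑ a : Fin r, if (a, b).1 < (a, b).2 then (1:ℝ) else 0)
      = ((b : ℕ) : ℝ) := by
    intro b
    rw [Finset.sum_boole]
    congr 1
    rw [show (univ.filter fun a : Fin r => a < b) = Finset.Iio b by ext a; simp]
    exact Fin.card_Iio b
  rw [Finset.sum_congr rfl fun b _ => h1 b, Fin.sum_univ_eq_sum_range (fun i => (i:ℝ)) r,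
    sum_range_cast]

lemma exp_sum (n r : ℕ) (π : ℕ × ℕ → ℕ) (hπ : ∀ p ∈ board n, π p ≤ n) :
    ∑ f ∈ Fintype.piFinset (fun _ : Fin r => board n),
        ((Finset.univ.filter fun p : Fin r × Fin r =>
            p.1 < p.2 ∧ π (f p.1) = π (f p.2)).card : ℝ)
      = (r * ((r:ℝ) - 1) / 2)
        * ((∑ j ∈ range (n+1), (∑ p ∈ board n, if π p = j then (1:ℝ) else 0)^2)
            * ((board n).card : ℝ) ^ (r - 2)) := by
  classical
  set K : ℝ := (∑ j ∈ range (n+1), (∑ p ∈ board n, if π p = j then (1:ℝ) else 0)^2)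
      * ((board n).card : ℝ) ^ (r - 2) with hK
  have e0 : ∀ f : Fin r → ℕ × ℕ,
      ((Finset.univ.filter fun p : Fin r × Fin r =>
          p.1 < p.2 ∧ π (f p.1) = π (f p.2)).card : ℝ)
        = ∑ p : Fin r × Fin r, if p.1 < p.2 ∧ π (f p.1) = π (f p.2) then (1:ℝ) else 0 :=
    fun f => (Finset.sum_boole _ _).symm
  have e1 : ∑ f ∈ Fintype.piFinset (fun _ : Fin r => board n),
      ∑ p : Fin r × Fin r, (if p.1 < p.2 ∧ π (f p.1) = π (f p.2) then (1:ℝ) else 0)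
      = ∑ p : Fin r × Fin r, ∑ f ∈ Fintype.piFinset (fun _ : Fin r => board n),
        (if p.1 < p.2 ∧ π (f p.1) = π (f p.2) then (1:ℝ) else 0) := Finset.sum_comm
  rw [Finset.sum_congr rfl fun f _ => e0 f, e1]
  have e2 : ∀ p : Fin r × Fin r,
      (∑ f ∈ Fintype.piFinset (fun _ : Fin r => board n),
        if p.1 < p.2 ∧ π (f p.1) = π (f p.2) then (1:ℝ) else 0)
      = (if p.1 < p.2 then (1:ℝ) else 0) * K := by
    intro p
    by_cases hp : p.1 < p.2
    · simp only [hp, true_and, if_true, one_mul]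
      exact key n r π hπ p.1 p.2 (ne_of_lt hp)
    · simp [hp]
  rw [Finset.sum_congr rfl fun p _ => e2 p, ← Finset.sum_mul, pairsum]

lemma rookExp_formula (n rr : ℕ) (hn : 2 ≤ n) (hr : 2 ≤ rr) (π : ℕ × ℕ → ℕ)
    (hπ : ∀ p ∈ board n, π p ≤ n)
    (hsq : ∑ j ∈ range (n+1), (∑ p ∈ board n, if π p = j then (1:ℝ) else 0)^2
        = n * ((n:ℝ) - 1) * (2*(n:ℝ) - 1) / 6) :
    (∑ f ∈ Fintype.piFinset (fun _ : Fin rr => board n),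
        ((Finset.univ.filter fun p : Fin rr × Fin rr =>
            p.1 < p.2 ∧ π (f p.1) = π (f p.2)).card : ℝ)) / ((board n).card : ℝ) ^ rr
      = (rr * ((rr:ℝ) - 1) / 2) * ((n:ℝ) * ((n:ℝ)-1) * (2*(n:ℝ)-1) / 6)
        / ((n:ℝ) * ((n:ℝ)-1) / 2)^2 := by
  rw [exp_sum n rr π hπ, hsq, board_card n]
  have hn2 : (2:ℝ) ≤ (n:ℝ) := by exact_mod_cast hn
  set N : ℝ := (n:ℝ) * ((n:ℝ) - 1) / 2 with hNdef
  have hN0 : N ≠ 0 := by rw [hNdef]; nlinarith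
  have hpow : N ^ rr = N ^ (rr - 2) * N ^ 2 := by rw [← pow_add]; congr 1; omega
  rw [hpow]
  have h2 : N ^ (rr - 2) ≠ 0 := pow_ne_zero _ hN0
  field_simp

/- ### Limit computations -/

lemma board_snd_le (n : ℕ) : ∀ p ∈ board n, p.2 ≤ n := by
  intro p hp
  simp only [board, Finset.mem_filter, Finset.mem_product, Finset.mem_range] at hp
  omega

lemma board_fst_le (n : ℕ) : ∀ p ∈ board n, p.1 ≤ n := by
  intro p hp
  simp only [board, Finset.mem_filter, Finset.mem_product, Finset.mem_range] at hp
  omega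

lemma sqrt_nat_atTop : Tendsto (fun n : ℕ => Real.sqrt n) atTop atTop := by
  have h1 : Tendsto Real.sqrt atTop atTop := by
    apply tendsto_atTop_atTop_of_monotone (fun x y h => Real.sqrt_le_sqrt h)
    intro b
    refine ⟨max (b^2) 0, le_trans (le_abs_self b) ?_⟩
    rw [← Real.sqrt_sq_eq_abs]
    exact Real.sqrt_le_sqrt (le_max_left _ _)
  exact h1.comp tendsto_natCast_atTop_atTop

/-- if `r(n)/√n → t > 0` and `r(n)` rooks are placed independently and uniformly
at random on `B_n`, then the expected numbers of attacks satisfy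
`E(W_RR + W_CC) → (4/3)t²` and `E(W_CC) → (2/3)t²` as `n → ∞`. -/
theorem expected_attacks_limits (t : ℝ) (ht : 0 < t) (r : ℕ → ℕ)
    (hlim : Tendsto (fun n : ℕ => (r n : ℝ) / Real.sqrt n) atTop (nhds t)) :
    Tendsto (fun n : ℕ => rookExp n (r n) (fun f => WRR (r n) f + WCC (r n) f))
        atTop (nhds ((4/3) * t ^ 2)) ∧
    Tendsto (fun n : ℕ => rookExp n (r n) (WCC (r n)))
        atTop (nhds ((2/3) * t ^ 2)) := by
  classical
  set ψ : ℕ → ℝ := fun n => ((r n : ℝ) / Real.sqrt n) * (((r n : ℝ) - 1) / Real.sqrt n)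
    * ((2*(n:ℝ) - 1) / (3 * ((n:ℝ) - 1))) with hψ
  have hinv : Tendsto (fun n : ℕ => 1 / Real.sqrt n) atTop (nhds 0) := by
    exact sqrt_nat_atTop.inv_tendsto_atTop.congr fun n => by simp [one_div]
  have hB : Tendsto (fun n : ℕ => ((r n : ℝ) - 1) / Real.sqrt n) atTop (nhds t) := by
    have := hlim.sub hinv
    rw [sub_zero] at this
    refine this.congr fun n => ?_
    rw [← sub_div]
  have hC : Tendsto (fun n : ℕ => (2*(n:ℝ) - 1) / (3 * ((n:ℝ) - 1))) atTop (nhds (2/3)) := by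
    have hnum : Tendsto (fun n : ℕ => 2 - 1/(n:ℝ)) atTop (nhds 2) := by
      simpa using (tendsto_const_nhds (x := (2:ℝ))).sub tendsto_one_div_atTop_nhds_zero_nat
    have hden : Tendsto (fun n : ℕ => 3 - 3*(1/(n:ℝ))) atTop (nhds 3) := by
      simpa using (tendsto_const_nhds (x := (3:ℝ))).sub
        (tendsto_one_div_atTop_nhds_zero_nat.const_mul 3)
    have h := hnum.div hden (by norm_num)
    norm_num at h
    refine h.congr' ?_
    filter_upwards [eventually_ge_atTop 2] with n hn
    have hn0 : (n:ℝ) ≠ 0 := by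
      have : (2:ℝ) ≤ (n:ℝ) := by exact_mod_cast hn
      linarith
    have hn1 : (n:ℝ) - 1 ≠ 0 := by
      have : (2:ℝ) ≤ (n:ℝ) := by exact_mod_cast hn
      intro hc; linarith [sub_eq_zero.1 hc]
    have hn2 : (2:ℝ) ≤ (n:ℝ) := by exact_mod_cast hn
    have hinv2 : ((n:ℝ))⁻¹ ≤ 2⁻¹ := by
      apply inv_anti₀ <;> linarith
    have hd : (3:ℝ) - 3*((n:ℝ))⁻¹ ≠ 0 := by
      intro hc; norm_num at hinv2 hc ⊢; linarith
    show (2 - ((n:ℝ))⁻¹) / (3 - 3*((n:ℝ))⁻¹) = (2*(n:ℝ) - 1) / (3 * ((n:ℝ) - 1))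
    have h31 : (3:ℝ) * ((n:ℝ) - 1) ≠ 0 := by
      intro hc; norm_num at hc; rcases hc with hc; exact hn1 (by linarith [hc])
    rw [div_eq_div_iff hd h31]
    linear_combination (3:ℝ) * inv_mul_cancel₀ hn0
  have hψlim : Tendsto ψ atTop (nhds (t * t * (2/3))) := (hlim.mul hB).mul hC
  have hrA : Tendsto (fun n : ℕ => (r n : ℝ)) atTop atTop := by
    have h := Filter.Tendsto.pos_mul_atTop ht hlim sqrt_nat_atTop
    refine h.congr' ?_
    filter_upwards [eventually_ge_atTop 1] with n hn
    have hs0 : Real.sqrt n ≠ 0 := by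
      have : (0:ℝ) < n := by exact_mod_cast hn
      positivity
    exact div_mul_cancel₀ _ hs0
  have hev_r : ∀ᶠ n in atTop, 2 ≤ r n := by
    filter_upwards [hrA.eventually_ge_atTop 2] with n hn
    exact_mod_cast hn
  have hmain : ∀ᶠ n in atTop, rookExp n (r n) (WCC (r n)) = ψ n ∧
      rookExp n (r n) (WRR (r n)) = ψ n := by
    filter_upwards [eventually_ge_atTop 2, hev_r] with n hn hrn
    have hn2 : (2:ℝ) ≤ (n:ℝ) := by exact_mod_cast hn
    have hn0 : (n:ℝ) ≠ 0 := by linarith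
    have hn1 : (n:ℝ) - 1 ≠ 0 := by
      intro hc
      have : (n:ℝ) = 1 := by linarith [sub_eq_zero.1 hc]
      linarith
    have hs : Real.sqrt n * Real.sqrt n = (n:ℝ) := Real.mul_self_sqrt (by positivity)
    have hval : ((r n:ℝ) * ((r n:ℝ) - 1) / 2) * ((n:ℝ) * ((n:ℝ)-1) * (2*(n:ℝ)-1) / 6)
        / ((n:ℝ) * ((n:ℝ)-1) / 2)^2 = ψ n := by
      rw [hψ]
      simp only
      rw [show ((r n:ℝ)/Real.sqrt n)*(((r n:ℝ)-1)/Real.sqrt n)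
        = ((r n:ℝ)*((r n:ℝ)-1))/((n:ℝ)) from by rw [div_mul_div_comm, hs]]
      field_simp
      ring
    constructor
    · show rookExp n (r n) (WCC (r n)) = ψ n
      unfold rookExp WCC
      rw [rookExp_formula n (r n) hn hrn Prod.snd (board_snd_le n) (col_sq n)]
      exact hval
    · show rookExp n (r n) (WRR (r n)) = ψ n
      unfold rookExp WRR
      rw [rookExp_formula n (r n) hn hrn Prod.fst (board_fst_le n) (row_sq n)]
      exact hval
  have hCC : Tendsto (fun n : ℕ => rookExp n (r n) (WCC (r n))) atTop (nhds ((2/3)*t^2)) := by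
    have he : (2/3)*t^2 = t * t * (2/3) := by ring
    rw [he]
    refine hψlim.congr' ?_
    filter_upwards [hmain] with n hn
    exact hn.1.symm
  refine ⟨?_, hCC⟩
  have hadd : ∀ᶠ n in atTop,
      rookExp n (r n) (fun f => WRR (r n) f + WCC (r n) f) = ψ n + ψ n := by
    filter_upwards [hmain] with n hn
    have hsplit : rookExp n (r n) (fun f => WRR (r n) f + WCC (r n) f)
        = rookExp n (r n) (WRR (r n)) + rookExp n (r n) (WCC (r n)) := by
      unfold rookExp
      rw [← add_div, ← Finset.sum_add_distrib]
      congr 1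
      refine Finset.sum_congr rfl fun f _ => ?_
      push_cast
      ring
    rw [hsplit, hn.1, hn.2]
  have he : (4/3)*t^2 = (t*t*(2/3)) + (t*t*(2/3)) := by ring
  rw [he]
  refine (hψlim.add hψlim).congr' ?_
  filter_upwards [hadd] with n hn
  exact hn.symm
end
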